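/- arXiv:2106.08205 — 11 statements merged into one kernel-verified Lean document; each statement's English description precedes it below -/
import Mathlib

section
/- Let γ, μ, τ > 0 with γ·e^{−μτ} < μ. Then every complex number λ satisfying the characteristic equation γ·e^{−μτ}·e^{−λτ} − μ − λ = 0 has strictly negative real part. -/
/-- If `γ e^{-μτ} < μ` (i.e. `R₀ < 1`), every root of the characteristic equation
`γ e^{-μτ} e^{-λτ} - μ - λ = 0` at the trivial equilibrium has negative real part. -/
theorem stmt_1 (γ μ τ : ℝ) (hγ : 0 < γ) (hμ : 0 < μ) (hτ : 0 < τ)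
    (h : γ * Real.exp (-μ * τ) < μ) :
    ∀ l : ℂ, (γ * Real.exp (-μ * τ) : ℝ) * Complex.exp (-l * τ) - μ - l = 0 → l.re < 0 := by
  intro l heq
  by_contra hre
  push_neg at hre
  set a : ℝ := γ * Real.exp (-μ * τ) with ha
  have ha0 : 0 < a := mul_pos hγ (Real.exp_pos _)
  have heq' : (a : ℂ) * Complex.exp (-l * τ) = (μ : ℂ) + l := by
    have : (a : ℂ) * Complex.exp (-l * τ) - μ - l = 0 := heq
    linear_combination this
  have habs : ‖(a : ℂ) * Complex.exp (-l * τ)‖ = ‖(μ : ℂ) + l‖ := by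
    rw [heq']
  rw [norm_mul, Complex.norm_exp, Complex.norm_real, Real.norm_eq_abs, abs_of_pos ha0] at habs
  have hre' : (-l * (τ : ℂ)).re = -l.re * τ := by simp
  rw [hre'] at habs
  have h1 : Real.exp (-l.re * τ) ≤ 1 := by
    apply Real.exp_le_one_iff.mpr
    nlinarith
  have h2 : ‖(μ : ℂ) + l‖ ≥ μ := by
    calc μ ≤ μ + l.re := by linarith
    _ = ((μ : ℂ) + l).re := by simp
    _ ≤ ‖(μ : ℂ) + l‖ := Complex.re_le_norm _
  nlinarith
end

section
/- Let m > 0 and τ > 0. Then every nonzero complex number λ satisfying m·(e^{−λτ} − 1) = λ has strictly negative real part. -/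
/-- Every nonzero complex root of `m (e^{-λτ} - 1) = λ` with `m, τ > 0`
has strictly negative real part. -/
theorem stmt_3 (m τ : ℝ) (hm : 0 < m) (hτ : 0 < τ) :
    ∀ l : ℂ, l ≠ 0 → (m : ℂ) * (Complex.exp (-l * τ) - 1) = l → l.re < 0 := by
  intro l hl heq
  by_contra hre
  push_neg at hre
  -- rearrange: l + m = m * exp(-lτ)
  have h1 : l + (m : ℂ) = (m : ℂ) * Complex.exp (-l * τ) := by
    linear_combination -heq
  have habs : ‖l + (m : ℂ)‖ = m * Real.exp ((-l * (τ:ℂ)).re) := by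
    rw [h1, norm_mul, Complex.norm_exp, Complex.norm_real, Real.norm_eq_abs, abs_of_pos hm]
  have hre' : (-l * (τ:ℂ)).re = -l.re * τ := by simp
  have hexp : Real.exp ((-l * (τ:ℂ)).re) ≤ 1 := by
    rw [hre', Real.exp_le_one_iff]
    nlinarith
  have h2 : ‖l + (m : ℂ)‖ ≤ m := by
    rw [habs]
    nlinarith [Real.exp_pos ((-l * (τ:ℂ)).re)]
  have h3 : (‖l + (m : ℂ)‖)^2 = (l.re + m)^2 + l.im^2 := by
    rw [Complex.sq_norm, Complex.normSq_apply]
    simp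
    ring
  have him : l.im = 0 ∧ l.re = 0 := by
    constructor <;> nlinarith [norm_nonneg (l + (m:ℂ))]
  exact hl (Complex.ext him.2 him.1)
end

section
/- Let γ, μ, κ, τ > 0. Let x : [−τ, ∞) → ℝ be continuous, positive on [−τ, 0], and differentiable on (0, ∞) with x'(t) = γ·x(t−τ)·exp(−μτ − κ∫_{t−τ}^{t} x(s) ds) − μ·x(t) − κ·x(t)² for all t > 0. If M is a constant with M > max_{t∈[−τ,0]} x(t) and γ·e^{−μτ} − μ − κM < 0, then 0 < x(t) < M for all t > 0. -/
open Set Filter Topology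

/-- One-sided slope limit: if `x` has derivative `d` at `t0 > 0`, then `d` is the limit of
slopes from within `Ioo 0 t0`. -/
lemma aux_tendsto_slope {x : ℝ → ℝ} {d t0 : ℝ} (ht0 : 0 < t0) (h : HasDerivAt x d t0) :
    Filter.Tendsto (slope x t0) (𝓝[Set.Ioo 0 t0] t0) (𝓝 d) :=
  (hasDerivWithinAt_iff_tendsto_slope' (by simp)).mp (h.hasDerivWithinAt (s := Set.Ioo 0 t0))

lemma aux_neBot {t0 : ℝ} (ht0 : 0 < t0) : (𝓝[Set.Ioo 0 t0] t0).NeBot := by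
  rw [← mem_closure_iff_nhdsWithin_neBot, closure_Ioo (ne_of_lt ht0)]
  exact Set.right_mem_Icc.2 ht0.le

/-- Well-posedness: a solution of the mixed alternative logistic DDE with positive
initial data on `[-τ,0]` bounded above by `M`, where `γ e^{-μτ} - μ - κM < 0`,
remains positive and bounded above by `M` for all `t > 0`. -/
theorem stmt_4 (γ μ κ τ M : ℝ) (hγ : 0 < γ) (hμ : 0 < μ) (hκ : 0 < κ) (hτ : 0 < τ)
    (x : ℝ → ℝ)
    (hx_cont : ContinuousOn x (Set.Ici (-τ)))
    (hx_pos : ∀ t ∈ Set.Icc (-τ) (0 : ℝ), 0 < x t)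
    (hx_ode : ∀ t > (0 : ℝ), HasDerivAt x
      (γ * x (t - τ) * Real.exp (-μ * τ - κ * ∫ s in (t - τ)..t, x s)
        - μ * x t - κ * (x t) ^ 2) t)
    (hM : ∀ t ∈ Set.Icc (-τ) (0 : ℝ), x t < M)
    (hMc : γ * Real.exp (-μ * τ) - μ - κ * M < 0) :
    ∀ t > (0 : ℝ), 0 < x t ∧ x t < M := by
  by_contra hcon
  push_neg at hcon
  obtain ⟨te, hte, hbad⟩ := hcon
  -- the "bad" set
  set S : Set ℝ := Set.Ici 0 ∩ x ⁻¹' (Set.Iic 0 ∪ Set.Ici M) with hS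
  have hx0 : (0:ℝ) ∈ Set.Icc (-τ) (0:ℝ) := ⟨neg_nonpos.2 hτ.le, le_refl 0⟩
  have hM0 : 0 < M := lt_trans (hx_pos 0 hx0) (hM 0 hx0)
  have hSne : S.Nonempty := by
    refine ⟨te, hte.le, ?_⟩
    rcases le_or_gt (x te) 0 with h | h
    · exact Or.inl h
    · exact Or.inr (hbad h)
  have hSbdd : BddBelow S := ⟨0, fun t ht => ht.1⟩
  have hSclosed : IsClosed S := by
    apply ContinuousOn.preimage_isClosed_of_isClosed
      (hx_cont.mono (fun t ht => le_trans (neg_nonpos.2 hτ.le) ht)) isClosed_Ici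
    exact IsClosed.union isClosed_Iic isClosed_Ici
  set t0 := sInf S with ht0def
  have ht0S : t0 ∈ S := hSclosed.csInf_mem hSne hSbdd
  have ht0nonneg : 0 ≤ t0 := ht0S.1
  have ht0ne : t0 ≠ 0 := by
    intro h
    rcases ht0S.2 with h1 | h1 <;> rw [h] at h1
    · exact absurd h1 (not_le.2 (hx_pos 0 hx0))
    · exact absurd h1 (not_le.2 (hM 0 hx0))
  have ht0pos : 0 < t0 := lt_of_le_of_ne ht0nonneg (Ne.symm ht0ne)
  -- before t0, solution is in (0, M)
  have hkey : ∀ t, -τ ≤ t → t < t0 → 0 < x t ∧ x t < M := by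
    intro t ht1 ht2
    rcases le_or_gt t 0 with h | h
    · exact ⟨hx_pos t ⟨ht1, h⟩, hM t ⟨ht1, h⟩⟩
    · have : t ∉ S := fun hts => absurd (csInf_le hSbdd hts) (not_le.2 ht2)
      rw [hS] at this
      simp only [Set.mem_inter_iff, Set.mem_Ici, Set.mem_preimage, Set.mem_union,
        Set.mem_Iic] at this
      push_neg at this
      have := this h.le
      exact ⟨this.1, this.2⟩
  -- x is continuous from the left at t0 with positive values below, so 0 ≤ x t0
  have hd := hx_ode t0 ht0pos
  have hslope := aux_tendsto_slope ht0pos hd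
  haveI := aux_neBot ht0pos
  have hxcontt0 : ContinuousAt x t0 := hd.continuousAt
  have hlim : Filter.Tendsto x (𝓝[Set.Ioo 0 t0] t0) (𝓝 (x t0)) :=
    (hxcontt0.tendsto).mono_left nhdsWithin_le_nhds
  have hmem : ∀ t ∈ Set.Ioo 0 t0, 0 < x t ∧ x t < M := fun t ht =>
    hkey t (le_trans (neg_nonpos.2 hτ.le) ht.1.le) ht.2
  have hx_t0_nonneg : 0 ≤ x t0 :=
    ge_of_tendsto hlim (eventually_nhdsWithin_of_forall fun t ht => (hmem t ht).1.le)
  have hx_t0_leM : x t0 ≤ M :=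
    le_of_tendsto hlim (eventually_nhdsWithin_of_forall fun t ht => (hmem t ht).2.le)
  -- positivity of the delayed value
  have hdel : 0 < x (t0 - τ) ∧ x (t0 - τ) < M := by
    apply hkey
    · linarith
    · linarith
  rcases ht0S.2 with hcase | hcase
  · -- x t0 = 0
    have hxt0 : x t0 = 0 := le_antisymm hcase hx_t0_nonneg
    have hdpos : 0 < γ * x (t0 - τ) * Real.exp (-μ * τ - κ * ∫ s in (t0 - τ)..t0, x s)
        - μ * x t0 - κ * (x t0) ^ 2 := by
      rw [hxt0]
      have h3 := mul_pos (mul_pos hγ hdel.1)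
        (Real.exp_pos (-μ * τ - κ * ∫ s in (t0 - τ)..t0, x s))
      linarith
    have hdnonpos : γ * x (t0 - τ) * Real.exp (-μ * τ - κ * ∫ s in (t0 - τ)..t0, x s)
        - μ * x t0 - κ * (x t0) ^ 2 ≤ 0 := by
      refine le_of_tendsto hslope (eventually_nhdsWithin_of_forall fun t ht => ?_)
      have h1 : 0 < x t := (hmem t ht).1
      have h2 : t - t0 < 0 := sub_neg.2 ht.2
      rw [slope_def_field, div_nonpos_iff]
      left
      exact ⟨by rw [hxt0]; linarith, by linarith⟩
    linarith
  · -- x t0 = M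
    have hxt0 : x t0 = M := le_antisymm hx_t0_leM hcase
    -- integral nonneg
    have hInonneg : 0 ≤ ∫ s in (t0 - τ)..t0, x s := by
      apply intervalIntegral.integral_nonneg (by linarith)
      intro s hs
      rcases lt_or_eq_of_le hs.2 with h | h
      · exact (hkey s (by linarith [hs.1]) h).1.le
      · rw [h, hxt0]; exact hM0.le
    have hexple : Real.exp (-μ * τ - κ * ∫ s in (t0 - τ)..t0, x s) ≤ Real.exp (-μ * τ) := by
      apply Real.exp_le_exp.2
      nlinarith
    have hdneg : γ * x (t0 - τ) * Real.exp (-μ * τ - κ * ∫ s in (t0 - τ)..t0, x s)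
        - μ * x t0 - κ * (x t0) ^ 2 < 0 := by
      rw [hxt0]
      have h1 : γ * x (t0 - τ) * Real.exp (-μ * τ - κ * ∫ s in (t0 - τ)..t0, x s)
          ≤ γ * x (t0 - τ) * Real.exp (-μ * τ) := by
        exact mul_le_mul_of_nonneg_left hexple (mul_nonneg hγ.le hdel.1.le)
      have h2 : γ * x (t0 - τ) * Real.exp (-μ * τ) < γ * M * Real.exp (-μ * τ) :=
        mul_lt_mul_of_pos_right (mul_lt_mul_of_pos_left hdel.2 hγ) (Real.exp_pos _)
      nlinarith [Real.exp_pos (-μ * τ)]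
    have hdnonneg : 0 ≤ γ * x (t0 - τ) * Real.exp (-μ * τ - κ * ∫ s in (t0 - τ)..t0, x s)
        - μ * x t0 - κ * (x t0) ^ 2 := by
      refine ge_of_tendsto hslope (eventually_nhdsWithin_of_forall fun t ht => ?_)
      have h1 : x t < M := (hmem t ht).2
      have h2 : t - t0 < 0 := sub_neg.2 ht.2
      rw [slope_def_field, div_nonneg_iff]
      right
      constructor
      · rw [hxt0]; linarith
      · linarith
    linarith
end

section
/- Let γ, μ, κ, τ > 0 with γ·e^{−μτ} ≤ μ (i.e., R₀ ≤ 1). Let x : [−τ, ∞) → ℝ be a bounded, continuous, nonnegative function, differentiable on (0, ∞), satisfying x'(t) = γ·x(t−τ)·exp(−μτ − κ∫_{t−τ}^{t} x(s) ds) − μ·x(t) − κ·x(t)² for all t > 0. Then x(t) → 0 as t → ∞. -/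
open MeasureTheory intervalIntegral Set Filter Topology

set_option maxHeartbeats 1000000 in
/-- Global extinction: if `γ e^{-μτ} ≤ μ` (i.e. `R₀ ≤ 1`), every bounded continuous
nonnegative solution of the mixed alternative logistic DDE tends to `0`. -/
theorem stmt_5 (γ μ κ τ : ℝ) (hγ : 0 < γ) (hμ : 0 < μ) (hκ : 0 < κ) (hτ : 0 < τ)
    (hR0 : γ * Real.exp (-μ * τ) ≤ μ)
    (x : ℝ → ℝ)
    (hx_cont : ContinuousOn x (Set.Ici (-τ)))
    (hx_nonneg : ∀ t, -τ ≤ t → 0 ≤ x t)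
    (hx_bdd : ∃ B : ℝ, ∀ t, -τ ≤ t → x t ≤ B)
    (hx_ode : ∀ t > (0 : ℝ), HasDerivAt x
      (γ * x (t - τ) * Real.exp (-μ * τ - κ * ∫ s in (t - τ)..t, x s)
        - μ * x t - κ * (x t) ^ 2) t) :
    Filter.Tendsto x Filter.atTop (nhds 0) := by
  obtain ⟨B₀, hB₀⟩ := hx_bdd
  set B : ℝ := max B₀ 1 with hBdef
  have hB1 : (1:ℝ) ≤ B := le_max_right _ _
  have hB : ∀ t, -τ ≤ t → x t ≤ B := fun t ht => (hB₀ t ht).trans (le_max_left _ _)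
  have hBpos : (0:ℝ) < B := lt_of_lt_of_le one_pos hB1
  set K : ℝ := γ * B + μ * B + κ * B ^ 2 with hKdef
  have hKpos : 0 < K := by positivity
  have hτ' : -τ < 0 := by linarith
  -- continuity at interior points
  have hxc : ∀ t : ℝ, -τ < t → ContinuousAt x t := fun t ht =>
    hx_cont.continuousAt (Ici_mem_nhds ht)
  have hx2c : ContinuousOn (fun s => (x s)^2) (Set.Ici (-τ)) := hx_cont.pow 2
  have hx2c' : ∀ t : ℝ, -τ < t → ContinuousAt (fun s => (x s)^2) t := fun t ht =>
    hx2c.continuousAt (Ici_mem_nhds ht)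
  -- interval integrability
  have hsub : ∀ a b : ℝ, -τ ≤ a → -τ ≤ b → Set.uIcc a b ⊆ Set.Ici (-τ) := by
    intro a b ha hb s hs
    rw [Set.mem_uIcc] at hs
    rcases hs with ⟨h1, _⟩ | ⟨h1, _⟩
    · exact le_trans ha h1
    · exact le_trans hb h1
  have hInt : ∀ a b : ℝ, -τ ≤ a → -τ ≤ b → IntervalIntegrable x volume a b := fun a b ha hb =>
    (hx_cont.mono (hsub a b ha hb)).intervalIntegrable
  have hInt2 : ∀ a b : ℝ, -τ ≤ a → -τ ≤ b →
      IntervalIntegrable (fun s => (x s)^2) volume a b := fun a b ha hb =>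
    (hx2c.mono (hsub a b ha hb)).intervalIntegrable
  -- measurability at filters
  have hmeas : ∀ t : ℝ, -τ < t → StronglyMeasurableAtFilter x (𝓝 t) volume := fun t ht =>
    (hx_cont.mono Ioi_subset_Ici_self).stronglyMeasurableAtFilter isOpen_Ioi t ht
  have hmeas2 : ∀ t : ℝ, -τ < t →
      StronglyMeasurableAtFilter (fun s => (x s)^2) (𝓝 t) volume := fun t ht =>
    (hx2c.mono Ioi_subset_Ici_self).stronglyMeasurableAtFilter isOpen_Ioi t ht
  -- primitives
  set F : ℝ → ℝ := fun t => ∫ s in (-τ)..t, x s with hFdef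
  set G : ℝ → ℝ := fun t => ∫ s in (0:ℝ)..t, (x s)^2 with hGdef
  have hF_deriv : ∀ t : ℝ, -τ < t → HasDerivAt F (x t) t := fun t ht =>
    integral_hasDerivAt_right (hInt _ _ le_rfl ht.le) (hmeas t ht) (hxc t ht)
  have hG_deriv : ∀ t : ℝ, -τ < t → HasDerivAt G ((x t)^2) t := fun t ht =>
    integral_hasDerivAt_right (hInt2 _ _ hτ'.le ht.le) (hmeas2 t ht) (hx2c' t ht)
  have hFsplit : ∀ t : ℝ, 0 < t → (∫ s in (t - τ)..t, x s) = F t - F (t - τ) := by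
    intro t ht
    have h1 : IntervalIntegrable x volume (-τ) (t - τ) := hInt _ _ le_rfl (by linarith)
    have h2 : IntervalIntegrable x volume (t - τ) t := hInt _ _ (by linarith) (by linarith)
    have := integral_add_adjacent_intervals h1 h2
    simp only [hFdef]
    linarith [this]
  -- Lyapunov functional g
  set g : ℝ → ℝ := fun t => x t + μ * (F t - F (t - τ)) + κ * G t with hgdef
  have hg_deriv : ∀ t : ℝ, 0 < t →
      HasDerivAt g (x (t - τ) * (γ * Real.exp (-μ * τ - κ * ∫ s in (t - τ)..t, x s) - μ)) t := by
    intro t ht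
    have hFt : HasDerivAt F (x t) t := hF_deriv t (by linarith)
    have hFtτ : HasDerivAt (fun u => F (u - τ)) (x (t - τ)) t := by
      have h1 : HasDerivAt F (x (t - τ)) (t - τ) := hF_deriv (t - τ) (by linarith)
      have h2 : HasDerivAt (fun u : ℝ => u - τ) 1 t := (hasDerivAt_id t).sub_const τ
      simpa [Function.comp_def] using h1.comp t h2
    have hGt : HasDerivAt G ((x t)^2) t := hG_deriv t (by linarith)
    have := ((hx_ode t ht).add (((hFt.sub hFtτ)).const_mul μ)).add (hGt.const_mul κ)
    refine HasDerivAt.congr_deriv this ?_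
    ring
  have hd_nonpos : ∀ t : ℝ, 0 < t →
      x (t - τ) * (γ * Real.exp (-μ * τ - κ * ∫ s in (t - τ)..t, x s) - μ) ≤ 0 := by
    intro t ht
    have hInn : 0 ≤ ∫ s in (t - τ)..t, x s := by
      apply intervalIntegral.integral_nonneg (by linarith)
      intro s hs
      exact hx_nonneg s (by linarith [hs.1])
    have hexp : Real.exp (-μ * τ - κ * ∫ s in (t - τ)..t, x s) ≤ Real.exp (-μ * τ) := by
      apply Real.exp_le_exp.2
      nlinarith
    have hxn : 0 ≤ x (t - τ) := hx_nonneg _ (by linarith)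
    have : γ * Real.exp (-μ * τ - κ * ∫ s in (t - τ)..t, x s) - μ ≤ 0 := by nlinarith
    exact mul_nonpos_of_nonneg_of_nonpos hxn this
  -- g is antitone on [1, ∞)
  have hg_mono : ∀ T : ℝ, 1 ≤ T → g T ≤ g 1 := by
    intro T hT
    rcases eq_or_lt_of_le hT with rfl | hT'
    · exact le_rfl
    have : AntitoneOn g (Set.Icc 1 T) := by
      apply antitoneOn_of_deriv_nonpos (convex_Icc 1 T)
      · intro s hs
        exact ((hg_deriv s (by linarith [hs.1])).continuousAt).continuousWithinAt
      · intro s hs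
        rw [interior_Icc] at hs
        exact ((hg_deriv s (by linarith [hs.1])).differentiableAt).differentiableWithinAt
      · intro s hs
        rw [interior_Icc] at hs
        rw [(hg_deriv s (by linarith [hs.1])).deriv]
        exact hd_nonpos s (by linarith [hs.1])
    exact this (Set.left_mem_Icc.2 hT) ⟨hT, le_rfl⟩ hT
  -- G is bounded: κ * G T ≤ g 1 for T ≥ 1
  have hG_bound : ∀ T : ℝ, 1 ≤ T → κ * G T ≤ g 1 := by
    intro T hT
    have h1 : 0 ≤ x T := hx_nonneg T (by linarith)
    have h2 : 0 ≤ F T - F (T - τ) := by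
      rw [← hFsplit T (by linarith)]
      apply intervalIntegral.integral_nonneg (by linarith)
      intro s hs
      exact hx_nonneg s (by linarith [hs.1])
    have hmn := hg_mono T hT
    have hgT : g T = x T + μ * (F T - F (T - τ)) + κ * G T := rfl
    rw [hgT] at hmn
    nlinarith
  -- Lipschitz estimate on [1/2, ∞)
  have hLip : ∀ a b : ℝ, 1/2 ≤ a → a ≤ b → |x b - x a| ≤ K * (b - a) := by
    intro a b ha hab
    have key := Convex.norm_image_sub_le_of_norm_hasDerivWithin_le
      (f := x)
      (f' := fun t => γ * x (t - τ) * Real.exp (-μ * τ - κ * ∫ s in (t - τ)..t, x s)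
        - μ * x t - κ * (x t) ^ 2)
      (s := Set.Icc a b) (C := K)
      (fun t ht => ((hx_ode t (by linarith [ht.1])).hasDerivWithinAt))
      (fun t ht => by
        have ht0 : (0:ℝ) < t := by linarith [ht.1]
        have htτ : -τ ≤ t - τ := by linarith
        have hInn : 0 ≤ ∫ s in (t - τ)..t, x s := by
          apply intervalIntegral.integral_nonneg (by linarith)
          intro s hs
          exact hx_nonneg s (by linarith [hs.1])
        have hexp : Real.exp (-μ * τ - κ * ∫ s in (t - τ)..t, x s) ≤ 1 := by
          rw [show (1:ℝ) = Real.exp 0 by simp]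
          apply Real.exp_le_exp.2
          nlinarith
        have hexp0 : 0 < Real.exp (-μ * τ - κ * ∫ s in (t - τ)..t, x s) := Real.exp_pos _
        have hx1 : 0 ≤ x (t - τ) := hx_nonneg _ htτ
        have hx2 : x (t - τ) ≤ B := hB _ htτ
        have hx3 : 0 ≤ x t := hx_nonneg _ (by linarith)
        have hx4 : x t ≤ B := hB _ (by linarith)
        have hA1 : 0 ≤ γ * x (t - τ) * Real.exp (-μ * τ - κ * ∫ s in (t - τ)..t, x s) :=
          by positivity
        have hA2 : γ * x (t - τ) * Real.exp (-μ * τ - κ * ∫ s in (t - τ)..t, x s) ≤ γ * B := by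
          nlinarith [mul_le_mul_of_nonneg_left hexp (mul_nonneg hγ.le hx1),
            mul_le_mul_of_nonneg_left hx2 hγ.le]
        have hP1 : 0 ≤ μ * x t + κ * (x t) ^ 2 := by positivity
        have hP2 : μ * x t + κ * (x t) ^ 2 ≤ μ * B + κ * B ^ 2 := by
          nlinarith [mul_le_mul_of_nonneg_left hx4 hμ.le,
            mul_le_mul_of_nonneg_left (pow_le_pow_left₀ hx3 hx4 2) hκ.le]
        rw [Real.norm_eq_abs, abs_le]
        refine ⟨?_, ?_⟩ <;> nlinarith)
      (convex_Icc a b) (Set.left_mem_Icc.2 hab) (Set.right_mem_Icc.2 hab)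
    rw [Real.norm_eq_abs, Real.norm_eq_abs, abs_of_nonneg (by linarith : (0:ℝ) ≤ b - a)] at key
    exact key
  -- splitting / monotonicity of G
  have hGadd : ∀ a b : ℝ, 0 ≤ a → a ≤ b → G a + (∫ s in a..b, (x s)^2) = G b := by
    intro a b ha hab
    exact integral_add_adjacent_intervals (hInt2 _ _ hτ'.le (by linarith))
      (hInt2 _ _ (by linarith) (by linarith))
  have hG_monotone : ∀ a b : ℝ, 0 ≤ a → a ≤ b → G a ≤ G b := by
    intro a b ha hab
    rw [← hGadd a b ha hab]
    have : 0 ≤ ∫ s in a..b, (x s)^2 := by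
      apply intervalIntegral.integral_nonneg hab
      intro s _
      positivity
    linarith
  have hG0 : ∀ a : ℝ, 0 ≤ a → 0 ≤ G a := by
    intro a ha
    have := hG_monotone 0 a le_rfl ha
    simpa [hGdef] using this
  -- main contradiction argument (Barbalat)
  by_contra hcon
  rw [Metric.tendsto_atTop] at hcon
  push_neg at hcon
  obtain ⟨ε, hε, hfreq⟩ := hcon
  have hfreq' : ∀ N : ℝ, ∃ t, max N 1 ≤ t ∧ ε ≤ x t := by
    intro N
    obtain ⟨t, ht, hd⟩ := hfreq (max N 1)
    refine ⟨t, ht, ?_⟩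
    have ht1 : (1:ℝ) ≤ t := le_trans (le_max_right _ _) ht
    have : 0 ≤ x t := hx_nonneg t (by linarith)
    rwa [Real.dist_eq, sub_zero, abs_of_nonneg this] at hd
  set δ : ℝ := ε / (2 * K) with hδdef
  have hδpos : 0 < δ := by positivity
  -- on [t, t+δ] with x t ≥ ε we have x ≥ ε/2, hence integral of square ≥ δ(ε/2)²
  have hseg : ∀ t : ℝ, 1 ≤ t → ε ≤ x t → δ * (ε/2)^2 ≤ ∫ s in t..(t+δ), (x s)^2 := by
    intro t ht hxt
    have hle : ∀ s ∈ Set.Icc t (t + δ), (ε/2)^2 ≤ (x s)^2 := by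
      intro s hs
      have h1 : |x s - x t| ≤ K * (s - t) := hLip t s (by linarith) hs.1
      have h2 : K * (s - t) ≤ K * δ := by
        apply mul_le_mul_of_nonneg_left (by linarith [hs.2]) hKpos.le
      have h3 : K * δ = ε / 2 := by
        rw [hδdef]; field_simp
      have h4 : ε / 2 ≤ x s := by
        have := abs_le.1 (h1.trans (h2.trans_eq h3))
        linarith [this.1]
      have h5 : 0 ≤ ε / 2 := by linarith
      nlinarith
    have := intervalIntegral.integral_mono_on (by linarith : t ≤ t + δ)
      (intervalIntegrable_const) (hInt2 t (t+δ) (by linarith) (by linarith)) hle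
    rw [intervalIntegral.integral_const, smul_eq_mul, add_sub_cancel_left] at this
    linarith
  -- inductively find points with large G
  have hclaim : ∀ n : ℕ, ∃ t : ℝ, 1 ≤ t ∧ (n + 1 : ℝ) * (δ * (ε/2)^2) ≤ G (t + δ) := by
    intro n
    induction n with
    | zero =>
        obtain ⟨t, ht, hxt⟩ := hfreq' 1
        have ht1 : (1:ℝ) ≤ t := le_trans (le_max_right _ _) ht
        refine ⟨t, ht1, ?_⟩
        have := hseg t ht1 hxt
        have hG := hGadd t (t + δ) (by linarith) (by linarith)
        have := hG0 t (by linarith)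
        push_cast
        linarith
    | succ n ih =>
        obtain ⟨t, ht1, hGt⟩ := ih
        obtain ⟨t', ht', hxt'⟩ := hfreq' (t + δ)
        have ht'1 : (1:ℝ) ≤ t' := le_trans (le_max_right _ _) ht'
        have ht'2 : t + δ ≤ t' := le_trans (le_max_left _ _) ht'
        refine ⟨t', ht'1, ?_⟩
        have hseg' := hseg t' ht'1 hxt'
        have hmono := hG_monotone (t + δ) t' (by linarith) ht'2
        have hG := hGadd t' (t' + δ) (by linarith) (by linarith)
        push_cast
        linarith
  -- contradiction with boundedness of G
  have hpos : 0 < δ * (ε/2)^2 := by positivity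
  obtain ⟨n, hn⟩ := exists_nat_gt ((g 1 / κ) / (δ * (ε/2)^2))
  obtain ⟨t, ht1, hGt⟩ := hclaim n
  have h1 : g 1 / κ < n * (δ * (ε/2)^2) := (div_lt_iff₀ hpos).1 hn
  have h2 : (n : ℝ) * (δ * (ε/2)^2) ≤ (n + 1 : ℝ) * (δ * (ε/2)^2) := by nlinarith
  have hGb := hG_bound (t + δ) (by linarith)
  have h3 : G (t + δ) ≤ g 1 / κ := (le_div_iff₀ hκ).2 (by linarith)
  linarith
end

section
/- Let γ, μ, κ, τ > 0 with γ·e^{−μτ} > μ (i.e., R₀ > 1), and let x* > 0 be the unique positive root of γ·e^{−τ(μ+κx)} = μ + κx. Let x : [−τ, ∞) → ℝ be continuous, positive on [−τ, 0], differentiable on (0, ∞), and satisfy x'(t) = γ·x(t−τ)·exp(−μτ − κ∫_{t−τ}^{t} x(s) ds) − μ·x(t) − κ·x(t)² for all t > 0. Then x(t) → x* as t → ∞. -/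
set_option maxHeartbeats 1000000
open Filter Set intervalIntegral MeasureTheory

namespace Stmt6Aux


lemma integral_exp_mul {lam : ℝ} (hlam : lam ≠ 0) (a b : ℝ) :
    ∫ s in a..b, Real.exp (lam * s) = (Real.exp (lam * b) - Real.exp (lam * a)) / lam := by
  have h : ∀ s ∈ Set.uIcc a b, HasDerivAt (fun u => Real.exp (lam * u) / lam)
      (Real.exp (lam * s)) s := by
    intro s _
    have h1 : HasDerivAt (fun u => Real.exp (lam * u)) (Real.exp (lam * s) * lam) s := by
      have := (Real.hasDerivAt_exp (lam * s)).comp s ((hasDerivAt_id s).const_mul lam)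
      simpa [mul_comm, Function.comp_def] using this
    have := h1.div_const lam
    simpa [mul_div_assoc, mul_div_cancel_right₀ _ hlam] using this
  have hint : IntervalIntegrable (fun s => Real.exp (lam * s)) volume a b :=
    (Real.continuous_exp.comp (continuous_const.mul continuous_id)).continuousOn.intervalIntegrable
  have := intervalIntegral.integral_eq_sub_of_hasDerivAt h hint
  rw [this]
  ring

lemma contOn_primitive {f : ℝ → ℝ} {a : ℝ} (hf : ContinuousOn f (Set.Ici a)) (c : ℝ)
    (hc : a ≤ c) : ContinuousOn (fun t => ∫ s in c..t, f s) (Set.Ici a) := by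
  intro t ht
  set b := max c t + 1 with hb
  have hcb : c ≤ b := le_trans (le_max_left _ _) (by linarith [le_refl (max c t)])
  have htb : t < b := lt_of_le_of_lt (le_max_right c t) (by linarith)
  have hab : a ≤ b := le_trans hc hcb
  have hint : IntegrableOn f (Set.Icc a b) volume :=
    (hf.mono (Set.Icc_subset_Ici_self)).integrableOn_compact isCompact_Icc
  have hprim : ContinuousOn (fun u => ∫ s in Set.Ioc a u, f s) (Set.Icc a b) :=
    intervalIntegral.continuousOn_primitive hint
  have heq : ∀ u ∈ Set.Icc a b, (∫ s in c..u, f s)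
      = (∫ s in Set.Ioc a u, f s) - ∫ s in Set.Ioc a c, f s := by
    intro u hu
    have h1 : (∫ s in a..u, f s) = ∫ s in Set.Ioc a u, f s :=
      intervalIntegral.integral_of_le hu.1
    have h2 : (∫ s in a..c, f s) = ∫ s in Set.Ioc a c, f s :=
      intervalIntegral.integral_of_le hc
    have h3 : (∫ s in a..c, f s) + (∫ s in c..u, f s) = ∫ s in a..u, f s := by
      apply intervalIntegral.integral_add_adjacent_intervals
      · exact (hf.mono (by
          rw [Set.uIcc_of_le hc]; exact Set.Icc_subset_Ici_self)).intervalIntegrable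
      · apply ContinuousOn.intervalIntegrable
        apply hf.mono
        intro z hz
        rcases Set.mem_uIcc.1 hz with h | h
        · exact le_trans hc h.1
        · exact le_trans hu.1 h.1
    linarith [h1, h2, h3]
  have hcw : ContinuousWithinAt (fun u => (∫ s in Set.Ioc a u, f s) - ∫ s in Set.Ioc a c, f s)
      (Set.Icc a b) t := (hprim t ⟨ht, le_of_lt htb⟩).sub continuousWithinAt_const
  have : ContinuousWithinAt (fun u => ∫ s in c..u, f s) (Set.Icc a b) t := by
    apply hcw.congr heq (heq t ⟨ht, le_of_lt htb⟩)
  apply this.mono_of_mem_nhdsWithin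
  have : Set.Icc a b = Set.Ici a ∩ Set.Iic b := (Set.Ici_inter_Iic).symm
  rw [this]
  exact Filter.inter_mem self_mem_nhdsWithin
    (mem_nhdsWithin_of_mem_nhds (Iic_mem_nhds htb))



section Delay

variable {lam τ : ℝ} {V : ℝ → ℝ}

lemma key1 (hτ : 0 < τ) (hVc : ContinuousOn V (Set.Ici (-τ)))
    (hVd : ∀ t > (0:ℝ), HasDerivAt V (lam * Real.exp (lam * τ) * V (t - τ)) t)
    {t0 t : ℝ} (ht0 : 0 ≤ t0) (ht : t0 ≤ t) :
    V t = V t0 + (lam * Real.exp (lam * τ)) * ∫ s in (t0 - τ)..(t - τ), V s := by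
  have hsub : ∀ a b : ℝ, t0 ≤ a → b ≤ t → a ≤ b →
      ContinuousOn (fun s => V (s - τ)) (Set.Icc a b) := by
    intro a b ha hb hab
    apply hVc.comp (Continuous.continuousOn (by continuity))
    intro s hs
    simp only [Set.mem_Ici]
    have : -τ ≤ t0 - τ := by linarith
    linarith [hs.1]
  have hint : IntervalIntegrable (fun s => lam * Real.exp (lam * τ) * V (s - τ)) volume t0 t := by
    apply ContinuousOn.intervalIntegrable
    rw [Set.uIcc_of_le ht]
    exact (continuousOn_const.mul (hsub t0 t le_rfl le_rfl ht))
  have hftc := intervalIntegral.integral_eq_sub_of_hasDeriv_right_of_le ht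
    (hVc.mono (by intro s hs; simp only [Set.mem_Ici]; linarith [hs.1, Set.mem_Icc.1 hs |>.1]))
    (fun s hs => ((hVd s (lt_of_le_of_lt ht0 hs.1)).hasDerivWithinAt)) hint
  have hshift : (∫ s in t0..t, V (s - τ)) = ∫ s in (t0 - τ)..(t - τ), V s :=
    intervalIntegral.integral_comp_sub_right (fun s => V s) τ
  rw [intervalIntegral.integral_const_mul, hshift] at hftc
  linarith [hftc]

lemma claimU (hlam : 0 < lam) (hτ : 0 < τ) (hVc : ContinuousOn V (Set.Ici (-τ)))
    (hVd : ∀ t > (0:ℝ), HasDerivAt V (lam * Real.exp (lam * τ) * V (t - τ)) t)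
    {A t0 : ℝ} (ht0 : 0 ≤ t0)
    (hwin : ∀ s ∈ Set.Icc (t0 - τ) t0, V s ≤ A * Real.exp (lam * s)) :
    ∀ t, t0 ≤ t → V t ≤ A * Real.exp (lam * t) := by
  have main : ∀ n : ℕ, ∀ t, t0 ≤ t → t ≤ t0 + n * τ → V t ≤ A * Real.exp (lam * t) := by
    intro n
    induction n with
    | zero =>
      intro t ht1 ht2
      have : t = t0 := le_antisymm (by simpa using ht2) ht1
      subst this
      exact hwin t ⟨by linarith, le_rfl⟩
    | succ n ih =>
      intro t ht1 ht2
      by_cases hc : t ≤ t0 + n * τ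
      · exact ih t ht1 hc
      push_neg at hc
      set t1 := t0 + n * τ with ht1def
      have htt1 : t1 ≤ t := le_of_lt hc
      have ht1nn : 0 ≤ t1 := by
        have : (0:ℝ) ≤ n * τ := by positivity
        linarith
      have hkey := key1 hτ hVc hVd ht1nn htt1
      have hptw : ∀ s ∈ Set.Icc (t1 - τ) (t - τ), V s ≤ A * Real.exp (lam * s) := by
        intro s hs
        by_cases hs0 : s ≤ t0
        · exact hwin s ⟨by
            have : t0 - τ ≤ t1 - τ := by
              have : (0:ℝ) ≤ n * τ := by positivity
              linarith
            linarith [hs.1], hs0⟩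
        · push_neg at hs0
          apply ih s (le_of_lt hs0)
          have : t ≤ t0 + (n+1) * τ := by push_cast at ht2 ⊢; linarith
          have := hs.2
          push_cast at *
          linarith
      have hVt1 : V t1 ≤ A * Real.exp (lam * t1) := by
        by_cases hn : n = 0
        · subst hn
          apply hwin
          constructor <;> simp [ht1def] <;> linarith
        · exact ih t1 (by
            have : (0:ℝ) ≤ n * τ := by positivity
            linarith) le_rfl
      -- integral bound
      have hintV : IntervalIntegrable V volume (t1 - τ) (t - τ) := by
        apply ContinuousOn.intervalIntegrable
        rw [Set.uIcc_of_le (by linarith)]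
        apply hVc.mono
        intro s hs
        simp only [Set.mem_Ici]
        linarith [hs.1]
      have hintE : IntervalIntegrable (fun s => A * Real.exp (lam * s)) volume (t1 - τ) (t - τ) := by
        apply ContinuousOn.intervalIntegrable
        exact Continuous.continuousOn (by continuity)
      have hmono : (∫ s in (t1 - τ)..(t - τ), V s)
          ≤ ∫ s in (t1 - τ)..(t - τ), A * Real.exp (lam * s) :=
        intervalIntegral.integral_mono_on (by linarith) hintV hintE hptw
      have hexp : (∫ s in (t1 - τ)..(t - τ), A * Real.exp (lam * s))
          = A * ((Real.exp (lam * (t - τ)) - Real.exp (lam * (t1 - τ))) / lam) := by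
        rw [intervalIntegral.integral_const_mul, integral_exp_mul (ne_of_gt hlam)]
      have hpos : (0:ℝ) < lam * Real.exp (lam * τ) := by positivity
      have hchain : V t ≤ A * Real.exp (lam * t1)
          + (lam * Real.exp (lam * τ)) * (A * ((Real.exp (lam * (t - τ)) - Real.exp (lam * (t1 - τ))) / lam)) := by
        rw [hkey]
        have := mul_le_mul_of_nonneg_left (le_trans hmono (le_of_eq hexp)) (le_of_lt hpos)
        linarith [hVt1]
      have hsimp : A * Real.exp (lam * t1)
          + (lam * Real.exp (lam * τ)) * (A * ((Real.exp (lam * (t - τ)) - Real.exp (lam * (t1 - τ))) / lam))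
          = A * Real.exp (lam * t) := by
        have e1 : Real.exp (lam * τ) * Real.exp (lam * (t - τ)) = Real.exp (lam * t) := by
          rw [← Real.exp_add]; ring_nf
        have e2 : Real.exp (lam * τ) * Real.exp (lam * (t1 - τ)) = Real.exp (lam * t1) := by
          rw [← Real.exp_add]; ring_nf
        have hcancel : (lam * Real.exp (lam * τ)) * (A * ((Real.exp (lam * (t - τ)) - Real.exp (lam * (t1 - τ))) / lam))
            = A * (Real.exp (lam * τ) * Real.exp (lam * (t - τ)) - Real.exp (lam * τ) * Real.exp (lam * (t1 - τ))) := by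
          field_simp
        rw [hcancel, e1, e2]
        ring
      linarith [hchain, le_of_eq hsimp]
  intro t ht
  obtain ⟨n, hn⟩ := exists_nat_ge ((t - t0) / τ)
  apply main n t ht
  have : t - t0 ≤ n * τ := by
    rw [div_le_iff₀ hτ] at hn
    linarith
  linarith

lemma claimL (hlam : 0 < lam) (hτ : 0 < τ) (hVc : ContinuousOn V (Set.Ici (-τ)))
    (hVd : ∀ t > (0:ℝ), HasDerivAt V (lam * Real.exp (lam * τ) * V (t - τ)) t)
    {B t0 : ℝ} (ht0 : 0 ≤ t0)
    (hwin : ∀ s ∈ Set.Icc (t0 - τ) t0, B * Real.exp (lam * s) ≤ V s) :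
    ∀ t, t0 ≤ t → B * Real.exp (lam * t) ≤ V t := by
  have hVd' : ∀ t > (0:ℝ), HasDerivAt (fun s => -V s) (lam * Real.exp (lam * τ) * (-V (t - τ))) t := by
    intro t ht
    simpa [mul_comm, mul_neg, Pi.neg_def] using (hVd t ht).neg
  have := claimU hlam hτ hVc.neg hVd' ht0 (A := -B)
    (fun s hs => by simpa [neg_mul] using neg_le_neg (hwin s hs))
  intro t ht
  have := this t ht
  simp only [neg_mul, Pi.neg_apply] at this
  linarith

end Delay

section Est


variable {lam τ : ℝ} {w : ℝ → ℝ}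

/-- the exp-weighted version of w -/
noncomputable def Vf (lam : ℝ) (w : ℝ → ℝ) : ℝ → ℝ := fun u => Real.exp (lam * u) * w u

lemma Vf_cont (hw_cont : ContinuousOn w (Set.Ici (-τ))) :
    ContinuousOn (Vf lam w) (Set.Ici (-τ)) :=
  (Real.continuous_exp.comp (continuous_const.mul continuous_id)).continuousOn.mul hw_cont

lemma Vf_deriv (hw_ode : ∀ t > (0:ℝ), HasDerivAt w (lam * (w (t - τ) - w t)) t) :
    ∀ t > (0:ℝ), HasDerivAt (Vf lam w) (lam * Real.exp (lam * τ) * Vf lam w (t - τ)) t := by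
  intro t ht
  have hE : HasDerivAt (fun u => Real.exp (lam * u)) (lam * Real.exp (lam * t)) t := by
    have := (Real.hasDerivAt_exp (lam * t)).comp t ((hasDerivAt_id t).const_mul lam)
    simpa [mul_comm, Function.comp_def] using this
  have := hE.mul (hw_ode t ht)
  have heq : lam * Real.exp (lam * t) * w t + Real.exp (lam * t) * (lam * (w (t - τ) - w t))
      = lam * Real.exp (lam * τ) * Vf lam w (t - τ) := by
    unfold Vf
    have : Real.exp (lam * τ) * Real.exp (lam * (t - τ)) = Real.exp (lam * t) := by
      rw [← Real.exp_add]; ring_nf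
    linear_combination (-(lam * w (t - τ))) * this
  rw [heq] at this
  exact this

lemma supEstimate (hlam : 0 < lam) (hτ : 0 < τ)
    (hw_cont : ContinuousOn w (Set.Ici (-τ)))
    (hw_ode : ∀ t > (0:ℝ), HasDerivAt w (lam * (w (t - τ) - w t)) t)
    {α β C ε T0 t : ℝ} (hε : 0 < ε) (hT0 : 0 ≤ T0)
    (hbound : ∀ s, T0 ≤ s → α ≤ w s ∧ w s ≤ β)
    (hC : ∀ s, τ ≤ s → w s + lam * ∫ u in (s - τ)..s, w u = C)
    (ht : T0 + 3 * τ ≤ t) (hwt : β - 2 * ε ≤ w t) :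
    β - 2 * ε + lam * τ * α ≤ C ∧
    Real.exp (-(lam * τ)) * α + (1 - Real.exp (-(lam * τ))) * β + lam * τ * β
      - 4 * Real.exp (lam * τ) * ε ≤ C := by
  set V := Vf lam w with hVdef
  set E : ℝ → ℝ := fun u => Real.exp (lam * u) with hEdef
  have hVc : ContinuousOn V (Set.Ici (-τ)) := Vf_cont hw_cont
  have hVd := Vf_deriv hw_ode
  have hEpos : ∀ u, 0 < E u := fun u => Real.exp_pos _
  have hγpos : 0 < lam * Real.exp (lam * τ) := by positivity
  set γ := lam * Real.exp (lam * τ) with hγdef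
  -- basic position facts
  have h0T0 : (0:ℝ) ≤ T0 := hT0
  have ht3 : T0 ≤ t - 3 * τ := by linarith
  have htpos : 0 ≤ t - 3 * τ := by linarith
  -- continuity/integrability helpers
  have hwcont' : ∀ {a b : ℝ}, -τ ≤ a → a ≤ b → ContinuousOn w (Set.Icc a b) := by
    intro a b ha hab
    exact hw_cont.mono (fun s hs => le_trans ha hs.1)
  have hVcont' : ∀ {a b : ℝ}, -τ ≤ a → a ≤ b → ContinuousOn V (Set.Icc a b) := by
    intro a b ha hab
    exact hVc.mono (fun s hs => le_trans ha hs.1)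
  have hwi : ∀ {a b : ℝ}, -τ ≤ a → a ≤ b → IntervalIntegrable w volume a b := by
    intro a b ha hab
    apply ContinuousOn.intervalIntegrable
    rw [Set.uIcc_of_le hab]; exact hwcont' ha hab
  have hVi : ∀ {a b : ℝ}, -τ ≤ a → a ≤ b → IntervalIntegrable V volume a b := by
    intro a b ha hab
    apply ContinuousOn.intervalIntegrable
    rw [Set.uIcc_of_le hab]; exact hVcont' ha hab
  have hEi : ∀ (c : ℝ) {a b : ℝ}, IntervalIntegrable (fun u => c * E u) volume a b := by
    intro c a b
    apply ContinuousOn.intervalIntegrable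
    exact Continuous.continuousOn (by fun_prop)
  -- pointwise bounds on V
  have hVub : ∀ u, T0 ≤ u → V u ≤ β * E u := by
    intro u hu
    have := (hbound u hu).2
    have := mul_le_mul_of_nonneg_left this (le_of_lt (hEpos u))
    simpa [hVdef, Vf, hEdef, mul_comm] using this
  have hVlb : ∀ u, T0 ≤ u → α * E u ≤ V u := by
    intro u hu
    have := (hbound u hu).1
    have := mul_le_mul_of_nonneg_left this (le_of_lt (hEpos u))
    simpa [hVdef, Vf, hEdef, mul_comm] using this
  -- exp identities
  have hEmul : ∀ a b : ℝ, E a * E b = Real.exp (lam * (a + b)) := by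
    intro a b; rw [hEdef]; simp only [← Real.exp_add]; ring_nf
  have hE2 : Real.exp (lam * τ) * E (t - τ) = E t := by
    have := hEmul τ (t - τ); simp only [hEdef] at this ⊢
    rw [← Real.exp_add]; ring_nf
  have hE3 : Real.exp (lam * τ) * E (t - 2*τ) = E (t - τ) := by
    simp only [hEdef]; rw [← Real.exp_add]; ring_nf
  have hE4 : Real.exp (lam * τ) * E (t - 3*τ) = E (t - 2*τ) := by
    simp only [hEdef]; rw [← Real.exp_add]; ring_nf
  -- key1 applications
  have k1a : V t = V (t - 2*τ) + γ * ∫ s in (t - 3*τ)..(t - τ), V s := by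
    have := key1 hτ hVc hVd (t0 := t - 2*τ) (t := t) (by linarith) (by linarith)
    convert this using 3 <;> ring
  have k1b : V (t - τ) = V (t - 2*τ) + γ * ∫ s in (t - 3*τ)..(t - 2*τ), V s := by
    have := key1 hτ hVc hVd (t0 := t - 2*τ) (t := t - τ) (by linarith) (by linarith)
    convert this using 3 <;> ring
  -- exact integrals of β E
  have hIβ : ∀ a b : ℝ, γ * ∫ s in a..b, β * E s
      = β * (Real.exp (lam * τ) * E b - Real.exp (lam * τ) * E a) := by
    intro a b
    rw [intervalIntegral.integral_const_mul]
    simp only [hEdef]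
    rw [integral_exp_mul (ne_of_gt hlam)]
    rw [hγdef]
    field_simp
  -- D1 : γ ∫_{t-3τ}^{t-τ} (βE - V) ≤ 2 ε E t
  have hD1 : γ * ∫ s in (t - 3*τ)..(t - τ), (β * E s - V s) ≤ 2 * ε * E t := by
    rw [intervalIntegral.integral_sub (hEi β) (hVi (by linarith) (by linarith))]
    have h1 : γ * ∫ s in (t - 3*τ)..(t - τ), β * E s = β * (E t - E (t - 2*τ)) := by
      rw [hIβ]; rw [hE2, hE4]
    have h2 : γ * ∫ s in (t - 3*τ)..(t - τ), V s = V t - V (t - 2*τ) := by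
      linarith [k1a]
    have hVt : (β - 2*ε) * E t ≤ V t := by
      have := mul_le_mul_of_nonneg_left hwt (le_of_lt (hEpos t))
      simpa [hVdef, Vf, hEdef, mul_comm] using this
    have hVt2 : V (t - 2*τ) ≤ β * E (t - 2*τ) := hVub _ (by linarith)
    have expand : γ * ((∫ s in (t - 3*τ)..(t - τ), β * E s) - ∫ s in (t - 3*τ)..(t - τ), V s)
        = γ * (∫ s in (t - 3*τ)..(t - τ), β * E s) - γ * ∫ s in (t - 3*τ)..(t - τ), V s := by ring
    rw [expand, h1, h2]
    nlinarith [hEpos t, hEpos (t - 2*τ)]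
  -- nonnegativity of integrand βE - V on [t-3τ, t-τ]
  have hnn : ∀ u ∈ Set.Icc (t - 3*τ) (t - τ), 0 ≤ β * E u - V u := by
    intro u hu
    have := hVub u (le_trans ht3 hu.1)
    linarith
  have hsplit : (∫ s in (t - 3*τ)..(t - 2*τ), (β * E s - V s))
      + (∫ s in (t - 2*τ)..(t - τ), (β * E s - V s))
      = ∫ s in (t - 3*τ)..(t - τ), (β * E s - V s) := by
    apply intervalIntegral.integral_add_adjacent_intervals
    · exact ((hEi β).sub (hVi (by linarith) (by linarith)))
    · exact ((hEi β).sub (hVi (by linarith) (by linarith)))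
  have hI1nn : 0 ≤ ∫ s in (t - 3*τ)..(t - 2*τ), (β * E s - V s) :=
    intervalIntegral.integral_nonneg (by linarith)
      (fun u hu => hnn u ⟨hu.1, by linarith [hu.2]⟩)
  have hI2nn : 0 ≤ ∫ s in (t - 2*τ)..(t - τ), (β * E s - V s) :=
    intervalIntegral.integral_nonneg (by linarith)
      (fun u hu => hnn u ⟨by linarith [hu.1], hu.2⟩)
  have hD2 : γ * ∫ s in (t - 3*τ)..(t - 2*τ), (β * E s - V s) ≤ 2 * ε * E t := by
    nlinarith [hD1, hI2nn, hsplit, hγpos]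
  have hD3 : γ * ∫ s in (t - 2*τ)..(t - τ), (β * E s - V s) ≤ 2 * ε * E t := by
    nlinarith [hD1, hI1nn, hsplit, hγpos]
  -- E3 : lower bound on w(t - τ)
  have hE3w : Real.exp (-(lam * τ)) * α + (1 - Real.exp (-(lam * τ))) * β
      - 2 * Real.exp (lam * τ) * ε ≤ w (t - τ) := by
    -- V(t-τ) ≥ α E(t-2τ) + β (E(t-τ) - E(t-2τ)) - 2 ε E t
    have h1 : γ * ∫ s in (t - 3*τ)..(t - 2*τ), β * E s = β * (E (t - τ) - E (t - 2*τ)) := by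
      rw [hIβ, hE3, hE4]
    have h2 : γ * ∫ s in (t - 3*τ)..(t - 2*τ), V s
        ≥ β * (E (t - τ) - E (t - 2*τ)) - 2 * ε * E t := by
      have : γ * ∫ s in (t - 3*τ)..(t - 2*τ), V s
          = γ * (∫ s in (t - 3*τ)..(t - 2*τ), β * E s)
            - γ * ∫ s in (t - 3*τ)..(t - 2*τ), (β * E s - V s) := by
        rw [intervalIntegral.integral_sub (hEi β) (hVi (by linarith) (by linarith))]
        ring
      rw [this, h1]
      linarith [hD2]
    have hVlow : α * E (t - 2*τ) + β * (E (t - τ) - E (t - 2*τ)) - 2 * ε * E t ≤ V (t - τ) := by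
      have := hVlb (t - 2*τ) (by linarith)
      linarith [k1b, h2]
    -- translate to w(t-τ) : divide by E(t-τ)
    have hq : (Real.exp (-(lam * τ)) * α + (1 - Real.exp (-(lam * τ))) * β
        - 2 * Real.exp (lam * τ) * ε) * E (t - τ)
        = α * E (t - 2*τ) + β * (E (t - τ) - E (t - 2*τ)) - 2 * ε * E t := by
      have e1 : Real.exp (-(lam * τ)) * E (t - τ) = E (t - 2*τ) := by
        simp only [hEdef]; rw [← Real.exp_add]; ring_nf
      have e2 : Real.exp (lam * τ) * E (t - τ) = E t := hE2
      linear_combination (α - β) * e1 - 2 * ε * e2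
    have hVw : V (t - τ) = E (t - τ) * w (t - τ) := rfl
    have hEp := hEpos (t - τ)
    have h8 : (Real.exp (-(lam * τ)) * α + (1 - Real.exp (-(lam * τ))) * β
        - 2 * Real.exp (lam * τ) * ε) * E (t - τ) ≤ w (t - τ) * E (t - τ) := by
      rw [hVw] at hVlow
      rw [hq]
      linarith [hVlow]
    exact le_of_mul_le_mul_right h8 hEp
  -- E2 : integral lower bound
  have hE2w : τ * β - (2 * Real.exp (2 * lam * τ) / γ) * ε ≤ ∫ u in (t - 2*τ)..(t - τ), w u := by
    have hptw : ∀ u ∈ Set.Icc (t - 2*τ) (t - τ), β - w u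
        ≤ (β * E u - V u) * Real.exp (-(lam * (t - 2*τ))) := by
      intro u hu
      have h1 : (β - w u) * E u = β * E u - V u := by
        simp only [hVdef, Vf, hEdef]; ring
      have h2 : 0 ≤ β * E u - V u := hnn u ⟨by linarith [hu.1], hu.2⟩
      have h3 : Real.exp (lam * (t - 2*τ)) ≤ E u := by
        simp only [hEdef]
        apply Real.exp_le_exp.2
        nlinarith [hu.1, hlam]
      have h4 : β - w u = (β * E u - V u) / E u := by
        rw [eq_div_iff (ne_of_gt (hEpos u))]
        exact h1
      rw [h4, Real.exp_neg, ← div_eq_mul_inv]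
      exact div_le_div_of_nonneg_left h2 (Real.exp_pos _) h3  -- may need name fix
    have hint1 : IntervalIntegrable (fun u => β - w u) volume (t - 2*τ) (t - τ) :=
      (intervalIntegrable_const (c := β)).sub (hwi (by linarith) (by linarith))
    have hint2 : IntervalIntegrable
        (fun u => (β * E u - V u) * Real.exp (-(lam * (t - 2*τ)))) volume (t - 2*τ) (t - τ) :=
      ((hEi β).sub (hVi (by linarith) (by linarith))).mul_const _
    have hmono := intervalIntegral.integral_mono_on (by linarith) hint1 hint2 hptw
    have hL : (∫ u in (t - 2*τ)..(t - τ), (β - w u))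
        = τ * β - ∫ u in (t - 2*τ)..(t - τ), w u := by
      rw [intervalIntegral.integral_sub (intervalIntegrable_const (c := β)) (hwi (by linarith) (by linarith))]
      rw [intervalIntegral.integral_const]
      have : (t - τ) - (t - 2*τ) = τ := by ring
      rw [this]
      simp [smul_eq_mul, mul_comm]
    have hR : (∫ u in (t - 2*τ)..(t - τ), ((β * E u - V u) * Real.exp (-(lam * (t - 2*τ)))))
        = (∫ u in (t - 2*τ)..(t - τ), (β * E u - V u)) * Real.exp (-(lam * (t - 2*τ))) :=
      intervalIntegral.integral_mul_const _ _
    have hbnd : (∫ u in (t - 2*τ)..(t - τ), (β * E u - V u)) * Real.exp (-(lam * (t - 2*τ)))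
        ≤ (2 * ε * E t / γ) * Real.exp (-(lam * (t - 2*τ))) := by
      apply mul_le_mul_of_nonneg_right _ (le_of_lt (Real.exp_pos _))
      rw [le_div_iff₀ hγpos, mul_comm]
      linarith [hD3]
    have hexpid : E t * Real.exp (-(lam * (t - 2*τ))) = Real.exp (2 * lam * τ) := by
      simp only [hEdef]
      rw [← Real.exp_add]
      ring_nf
    have : τ * β - (∫ u in (t - 2*τ)..(t - τ), w u)
        ≤ (2 * ε / γ) * Real.exp (2 * lam * τ) := by
      have h5 : (2 * ε * E t / γ) * Real.exp (-(lam * (t - 2*τ)))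
          = (2 * ε / γ) * Real.exp (2 * lam * τ) := by
        rw [← hexpid]; field_simp
      calc τ * β - (∫ u in (t - 2*τ)..(t - τ), w u)
          = ∫ u in (t - 2*τ)..(t - τ), (β - w u) := hL.symm
        _ ≤ (∫ u in (t - 2*τ)..(t - τ), (β * E u - V u)) * Real.exp (-(lam * (t - 2*τ))) :=
            le_trans hmono (le_of_eq hR)
        _ ≤ (2 * ε * E t / γ) * Real.exp (-(lam * (t - 2*τ))) := hbnd
        _ = (2 * ε / γ) * Real.exp (2 * lam * τ) := h5
    have : (2 * ε / γ) * Real.exp (2 * lam * τ) = (2 * Real.exp (2 * lam * τ) / γ) * ε := by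
      ring
    linarith [‹τ * β - (∫ u in (t - 2*τ)..(t - τ), w u) ≤ (2 * ε / γ) * Real.exp (2 * lam * τ)›, this]
  -- A-lower
  constructor
  · have hCt := hC t (by linarith)
    have hint : τ * α ≤ ∫ u in (t - τ)..t, w u := by
      have h1 : (∫ u in (t - τ)..t, (α : ℝ)) ≤ ∫ u in (t - τ)..t, w u := by
        apply intervalIntegral.integral_mono_on (by linarith) (intervalIntegrable_const (c := α))
          (hwi (by linarith) (by linarith))
        intro u hu
        exact (hbound u (by linarith [hu.1])).1
      rw [intervalIntegral.integral_const] at h1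
      have : (t - (t - τ)) • α = τ * α := by
        rw [smul_eq_mul]; ring_nf
      linarith [h1, le_of_eq this.symm]
    have h9 := mul_le_mul_of_nonneg_left hint (le_of_lt hlam)
    linarith [hwt, hCt, h9]
  -- B-lower
  · have hCt' := hC (t - τ) (by linarith)
    have harith : lam * (2 * Real.exp (2 * lam * τ) / γ) = 2 * Real.exp (lam * τ) := by
      rw [hγdef]
      have : Real.exp (2 * lam * τ) = Real.exp (lam * τ) * Real.exp (lam * τ) := by
        rw [← Real.exp_add]; ring_nf
      rw [this]
      field_simp
    have hwin : (t - τ) - τ = t - 2*τ := by ring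
    rw [hwin] at hCt'
    have h6 : lam * (τ * β - (2 * Real.exp (2 * lam * τ) / γ) * ε)
        ≤ lam * ∫ u in (t - 2*τ)..(t - τ), w u :=
      mul_le_mul_of_nonneg_left hE2w (le_of_lt hlam)
    have h7 : lam * ((2 * Real.exp (2 * lam * τ) / γ) * ε) = 2 * Real.exp (lam * τ) * ε := by
      rw [← mul_assoc, harith]
    nlinarith [hE3w, h6, h7, hCt']

end Est

section Cons

variable {lam τ : ℝ} {w : ℝ → ℝ}

lemma primitive_hasDeriv {c : ℝ} (hw_cont : ContinuousOn w (Set.Ici (-τ))) (hc : -τ ≤ c) :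
    ∀ u, -τ < u → HasDerivAt (fun v => ∫ s in c..v, w s) (w u) u := by
  intro u hu
  apply intervalIntegral.integral_hasDerivAt_right
  · apply ContinuousOn.intervalIntegrable
    apply hw_cont.mono
    intro s hs
    rcases Set.mem_uIcc.1 hs with h | h
    · exact le_trans hc h.1
    · exact le_trans (le_of_lt hu) h.1
  · exact (hw_cont.mono (fun s (hs : s ∈ Set.Ioi (-τ)) => Set.mem_Ici.2 (le_of_lt (Set.mem_Ioi.1 hs)))).stronglyMeasurableAtFilter
      isOpen_Ioi u hu
  · exact hw_cont.continuousAt (Ici_mem_nhds hu)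

lemma conserved (hlam : 0 < lam) (hτ : 0 < τ)
    (hw_cont : ContinuousOn w (Set.Ici (-τ)))
    (hw_ode : ∀ t > (0:ℝ), HasDerivAt w (lam * (w (t - τ) - w t)) t) :
    ∀ s, τ ≤ s → w s + lam * ∫ u in (s - τ)..s, w u
      = w τ + lam * ∫ u in (0:ℝ)..τ, w u := by
  set Iw : ℝ → ℝ := fun v => ∫ s in (-τ)..v, w s with hIwdef
  have hIwc : ContinuousOn Iw (Set.Ici (-τ)) := contOn_primitive hw_cont (-τ) le_rfl
  have hIwd := primitive_hasDeriv hw_cont (le_refl (-τ))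
  have hadd : ∀ s : ℝ, 0 ≤ s → (∫ u in (s - τ)..s, w u) = Iw s - Iw (s - τ) := by
    intro s hs
    have h1 : (∫ u in (-τ)..(s - τ), w u) + (∫ u in (s - τ)..s, w u) = ∫ u in (-τ)..s, w u := by
      apply intervalIntegral.integral_add_adjacent_intervals
      · apply ContinuousOn.intervalIntegrable
        apply hw_cont.mono
        rw [Set.uIcc_of_le (by linarith)]
        exact fun z hz => hz.1
      · apply ContinuousOn.intervalIntegrable
        apply hw_cont.mono
        rw [Set.uIcc_of_le (by linarith)]
        exact fun z hz => le_trans (by linarith) hz.1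
    simp only [hIwdef]
    linarith [h1]
  set F : ℝ → ℝ := fun s => w s + lam * (Iw s - Iw (s - τ)) with hFdef
  have hFd : ∀ s > (0:ℝ), HasDerivAt F 0 s := by
    intro s hs
    have h1 := hw_ode s hs
    have h2 := hIwd s (by linarith)
    have h3 : HasDerivAt (fun v => Iw (v - τ)) (w (s - τ)) s := by
      have := (hIwd (s - τ) (by linarith)).comp s ((hasDerivAt_id s).sub_const τ)
      simpa [Function.comp_def] using this
    have := h1.add (((h2.sub h3)).const_mul lam)
    have heq : lam * (w (s - τ) - w s) + lam * (w s - w (s - τ)) = 0 := by ring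
    rw [heq] at this
    exact this
  have hFc : ContinuousOn F (Set.Ici 0) := by
    apply ContinuousOn.add
    · exact hw_cont.mono (fun z hz => le_trans (by linarith : -τ ≤ 0) hz)
    · apply continuousOn_const.mul
      apply ContinuousOn.sub
      · exact hIwc.mono (fun z hz => le_trans (by linarith : -τ ≤ 0) hz)
      · apply hIwc.comp (continuousOn_id.sub continuousOn_const)
        intro z hz
        simp only [Set.mem_Ici] at hz ⊢
        change -τ ≤ z - τ
        linarith
  intro s hs
  have key : F s = F τ := by
    rcases eq_or_lt_of_le hs with h | h
    · rw [h]
    · have := constant_of_has_deriv_right_zero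
        (hFc.mono (fun z hz => le_trans (by linarith) hz.1) : ContinuousOn F (Set.Icc τ s))
        (fun z hz => (hFd z (by linarith [hz.1])).hasDerivWithinAt)
      exact this s ⟨le_of_lt h, le_rfl⟩
  have e1 : (∫ u in (s - τ)..s, w u) = Iw s - Iw (s - τ) := hadd s (by linarith)
  have e2 : (∫ u in (0:ℝ)..τ, w u) = Iw τ - Iw (τ - τ) := by
    have := hadd τ (by linarith)
    simpa using this
  simp only [hFdef] at key
  rw [e1, e2]
  have : τ - τ = (0:ℝ) := by ring
  rw [this] at key ⊢
  linarith [key]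

end Cons

lemma delay_converges {lam τ : ℝ} (hlam : 0 < lam) (hτ : 0 < τ) {w : ℝ → ℝ}
    (hw_cont : ContinuousOn w (Set.Ici (-τ)))
    (hw_pos : ∀ t, -τ ≤ t → 0 < w t)
    (hw_ode : ∀ t > (0:ℝ), HasDerivAt w (lam * (w (t - τ) - w t)) t) :
    ∃ L, 0 < L ∧ Filter.Tendsto w Filter.atTop (nhds L) := by
  have hVc := Vf_cont (lam := lam) hw_cont
  have hVd := Vf_deriv (τ := τ) hw_ode
  -- window min/max on [0, τ]
  have hKc : IsCompact (w '' Set.Icc 0 τ) :=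
    (isCompact_Icc.image_of_continuousOn
      (hw_cont.mono (fun z hz => le_trans (by linarith) hz.1)))
  have hKne : (w '' Set.Icc 0 τ).Nonempty :=
    (Set.nonempty_Icc.2 (le_of_lt hτ)).image w
  set M0 := sSup (w '' Set.Icc 0 τ) with hM0
  set m0 := sInf (w '' Set.Icc 0 τ) with hm0
  have hm0_mem : m0 ∈ w '' Set.Icc 0 τ := hKc.sInf_mem hKne
  have hm0pos : 0 < m0 := by
    obtain ⟨s0, hs0, hws0⟩ := hm0_mem
    rw [← hws0]
    exact hw_pos s0 (by linarith [hs0.1])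
  have hwin_bounds : ∀ s ∈ Set.Icc (0:ℝ) τ, m0 ≤ w s ∧ w s ≤ M0 := by
    intro s hs
    exact ⟨csInf_le hKc.bddBelow (Set.mem_image_of_mem w hs),
      le_csSup hKc.bddAbove (Set.mem_image_of_mem w hs)⟩
  -- global bounds for t ≥ τ
  have hub : ∀ t, τ ≤ t → w t ≤ M0 := by
    intro t ht
    have h := claimU hlam hτ hVc hVd (A := M0) (t0 := τ) (le_of_lt hτ)
      (fun s hs => by
        have hs' : s ∈ Set.Icc (0:ℝ) τ := ⟨by linarith [hs.1], hs.2⟩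
        have := (hwin_bounds s hs').2
        have := mul_le_mul_of_nonneg_left this (le_of_lt (Real.exp_pos (lam * s)))
        simpa [Vf, mul_comm] using this) t ht
    have hE := Real.exp_pos (lam * t)
    have : Real.exp (lam * t) * w t ≤ M0 * Real.exp (lam * t) := by
      simpa [Vf] using h
    nlinarith [this, hE]
  have hlb : ∀ t, τ ≤ t → m0 ≤ w t := by
    intro t ht
    have h := claimL hlam hτ hVc hVd (B := m0) (t0 := τ) (le_of_lt hτ)
      (fun s hs => by
        have hs' : s ∈ Set.Icc (0:ℝ) τ := ⟨by linarith [hs.1], hs.2⟩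
        have := (hwin_bounds s hs').1
        have := mul_le_mul_of_nonneg_left this (le_of_lt (Real.exp_pos (lam * s)))
        simpa [Vf, mul_comm] using this) t ht
    have hE := Real.exp_pos (lam * t)
    have : m0 * Real.exp (lam * t) ≤ Real.exp (lam * t) * w t := by
      simpa [Vf] using h
    nlinarith [this, hE]
  -- filter boundedness
  have hevub : ∀ᶠ t in atTop, w t ≤ M0 := eventually_atTop.2 ⟨τ, hub⟩
  have hevlb : ∀ᶠ t in atTop, m0 ≤ w t := eventually_atTop.2 ⟨τ, hlb⟩
  have hbdd_le : IsBoundedUnder (· ≤ ·) atTop w := isBoundedUnder_of_eventually_le hevub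
  have hbdd_ge : IsBoundedUnder (· ≥ ·) atTop w := isBoundedUnder_of_eventually_ge hevlb
  set b := limsup w atTop with hbdef
  set a := liminf w atTop with hadef
  have hab : a ≤ b := liminf_le_limsup hbdd_le hbdd_ge
  have ham : m0 ≤ a := le_liminf_of_le hbdd_le.isCoboundedUnder_ge hevlb
  -- conservation constant
  set C := w τ + lam * ∫ u in (0:ℝ)..τ, w u with hCdef
  have hC : ∀ s, τ ≤ s → w s + lam * ∫ u in (s - τ)..s, w u = C :=
    conserved hlam hτ hw_cont hw_ode
  -- negated solution facts
  have hw_cont' : ContinuousOn (fun t => -w t) (Set.Ici (-τ)) := hw_cont.neg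
  have hw_ode' : ∀ t > (0:ℝ), HasDerivAt (fun t => -w t)
      (lam * ((fun t => -w t) (t - τ) - (fun t => -w t) t)) t := by
    intro t ht
    have := (hw_ode t ht).neg
    have heq : -(lam * (w (t - τ) - w t)) = lam * (-w (t - τ) - -w t) := by ring
    rw [heq] at this
    exact this
  have hC' : ∀ s, τ ≤ s → (fun t => -w t) s + lam * ∫ u in (s - τ)..s, (fun t => -w t) u = -C := by
    intro s hs
    have h1 := hC s hs
    have h2 : (∫ u in (s - τ)..s, -w u) = -∫ u in (s - τ)..s, w u :=
      intervalIntegral.integral_neg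
    simp only [h2]
    linarith [h1]
  -- main ε-inequality
  have key : ∀ ε : ℝ, 0 < ε →
      (2 - 2 * Real.exp (-(lam * τ))) * (b - a) ≤ (4 + 8 * Real.exp (lam * τ)) * ε := by
    intro ε hε
    obtain ⟨T1, hT1⟩ := eventually_atTop.1
      ((eventually_lt_of_limsup_lt (by linarith : limsup w atTop < b + ε) hbdd_le).and
       (eventually_lt_of_lt_liminf (by linarith : a - ε < liminf w atTop) hbdd_ge))
    set T0 := max T1 0 with hT0def
    have hT0 : 0 ≤ T0 := le_max_right _ _
    have hbound : ∀ s, T0 ≤ s → a - ε ≤ w s ∧ w s ≤ b + ε := by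
      intro s hsT
      have := hT1 s (le_trans (le_max_left _ _) hsT)
      exact ⟨le_of_lt this.2, le_of_lt this.1⟩
    have hbound' : ∀ s, T0 ≤ s → -(b + ε) ≤ (fun t => -w t) s ∧ (fun t => -w t) s ≤ -(a - ε) := by
      intro s hsT
      have := hbound s hsT
      constructor <;> simp <;> linarith [this.1, this.2]
    -- sup time
    obtain ⟨t, htt, hwt⟩ := frequently_atTop.1
      (frequently_lt_of_lt_limsup hbdd_ge.isCoboundedUnder_le
        (by linarith : b - ε < limsup w atTop)) (T0 + 3 * τ)
    have hsup := supEstimate hlam hτ hw_cont hw_ode hε hT0 hbound hC htt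
      (by linarith [hwt] : (b + ε) - 2 * ε ≤ w t)
    -- inf time
    obtain ⟨t', htt', hwt'⟩ := frequently_atTop.1
      (frequently_lt_of_liminf_lt hbdd_le.isCoboundedUnder_ge
        (by linarith : liminf w atTop < a + ε)) (T0 + 3 * τ)
    have hinf := supEstimate hlam hτ hw_cont' hw_ode' hε hT0 hbound' hC' htt'
      (by simp; linarith [hwt'] : -(a - ε) - 2 * ε ≤ (fun t => -w t) t')
    have e1 := hsup.1
    have e2 := hsup.2
    have e3 := hinf.1
    have e4 := hinf.2
    have he : Real.exp (-(lam * τ)) ≤ 1 := Real.exp_le_one_iff.2 (by nlinarith)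
    have hh : Real.exp (-(lam * τ)) * ε ≤ 1 * ε := mul_le_mul_of_nonneg_right he (le_of_lt hε)
    linarith [e1, e2, e3, e4, hh]
  -- conclude b ≤ a
  have hba : b ≤ a := by
    have hcoef : 0 < 2 - 2 * Real.exp (-(lam * τ)) := by
      have : Real.exp (-(lam * τ)) < 1 := Real.exp_lt_one_iff.2 (by nlinarith)
      linarith
    have h0 : (2 - 2 * Real.exp (-(lam * τ))) * (b - a) ≤ 0 := by
      apply le_of_forall_pos_le_add
      intro ε' hε'
      have hKpos : (0:ℝ) < 4 + 8 * Real.exp (lam * τ) := by positivity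
      have := key (ε' / (4 + 8 * Real.exp (lam * τ))) (by positivity)
      rw [mul_div_cancel₀ _ (ne_of_gt hKpos)] at this
      linarith
    nlinarith [h0, hcoef, hab]
  have hLeq : a = b := le_antisymm hab hba
  refine ⟨b, by linarith [ham, hm0pos, hab], ?_⟩
  exact tendsto_of_liminf_eq_limsup (by rw [← hadef, hLeq]) (by rw [← hbdef]) hbdd_le hbdd_ge


lemma eventually_le_drift {g d : ℝ → ℝ} {T B c0 : ℝ} (hT : 0 < T) (hc0 : 0 < c0)
    (hg_deriv : ∀ t > (0:ℝ), HasDerivAt g (d t) t)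
    (hdrift : ∀ s, T ≤ s → B ≤ g s → d s ≤ -c0) :
    ∀ᶠ t in Filter.atTop, g t ≤ B := by
  have hgc : ∀ {a b : ℝ}, 0 < a → ContinuousOn g (Set.Icc a b) := by
    intro a b ha
    intro s hs
    exact ((hg_deriv s (lt_of_lt_of_le ha hs.1)).continuousAt).continuousWithinAt
  -- step 1 : g eventually dips below B
  have step1 : ∃ t0, T ≤ t0 ∧ g t0 ≤ B := by
    by_contra h
    push_neg at h
    obtain ⟨T', hT'def⟩ : ∃ T', T' = T + (g T - B) / c0 + 1 := ⟨_, rfl⟩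
    have hgTB : B < g T := h T le_rfl
    have hq : 0 < (g T - B) / c0 := div_pos (by linarith) hc0
    have hTT' : T ≤ T' := by linarith
    have hanti : AntitoneOn (fun s => g s + c0 * s) (Set.Icc T T') := by
      apply antitoneOn_of_deriv_nonpos (convex_Icc T T')
      · exact (hgc hT).add (continuous_const.mul continuous_id).continuousOn
      · intro s hs
        rw [interior_Icc] at hs
        have hs0 : 0 < s := lt_of_lt_of_le hT (le_of_lt hs.1)
        exact (((hg_deriv s hs0).add (((hasDerivAt_id s).const_mul c0))).differentiableAt).differentiableWithinAt
      · intro s hs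
        rw [interior_Icc] at hs
        have hs0 : 0 < s := lt_of_lt_of_le hT (le_of_lt hs.1)
        have hder : HasDerivAt (fun s => g s + c0 * s) (d s + c0 * 1) s :=
          (hg_deriv s hs0).add ((hasDerivAt_id s).const_mul c0)
        rw [hder.deriv]
        have := hdrift s (le_of_lt hs.1) (le_of_lt (h s (le_of_lt hs.1)))
        linarith
    have := hanti (Set.left_mem_Icc.2 hTT') (Set.right_mem_Icc.2 hTT') hTT'
    have hc0T : c0 * (T' - T) = g T - B + c0 := by
      rw [hT'def]
      field_simp
      ring
    have h2 : g T' + c0 * T' ≤ g T + c0 * T := this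
    have hgT' : g T' ≤ B - c0 := by nlinarith [h2, hc0T]
    have := h T' hTT'
    linarith
  obtain ⟨t0, ht0T, hgt0⟩ := step1
  have ht0pos : 0 < t0 := lt_of_lt_of_le hT ht0T
  -- step 2 : stays below B
  have step2 : ∀ t, t0 ≤ t → g t ≤ B := by
    intro t1 ht1
    by_contra hgt
    push_neg at hgt
    set S := Set.Icc t0 t1 ∩ g ⁻¹' Set.Iic B with hSdef
    have hSne : S.Nonempty := ⟨t0, ⟨le_rfl, ht1⟩, hgt0⟩
    have hSbdd : BddAbove S := ⟨t1, fun s hs => hs.1.2⟩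
    have hSclosed : IsClosed S := by
      have hc : ContinuousOn g (Set.Icc t0 t1) := hgc ht0pos
      exact hc.preimage_isClosed_of_isClosed isClosed_Icc isClosed_Iic
    set s0 := sSup S with hs0def
    have hs0mem : s0 ∈ S := hSclosed.csSup_mem hSne hSbdd
    have hs0le : s0 ≤ t1 := hs0mem.1.2
    have hgs0 : g s0 ≤ B := hs0mem.2
    have hs0lt : s0 < t1 := lt_of_le_of_ne hs0le (fun hE => by rw [hE] at hgs0; linarith)
    have habove : ∀ s, s0 < s → s ≤ t1 → B < g s := by
      intro s hss hst
      by_contra hb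
      push_neg at hb
      have : s ∈ S := ⟨⟨le_trans hs0mem.1.1 (le_of_lt hss), hst⟩, hb⟩
      have := le_csSup hSbdd this
      linarith
    have hs0pos : 0 < s0 := lt_of_lt_of_le ht0pos hs0mem.1.1
    have hanti : StrictAntiOn g (Set.Icc s0 t1) := by
      apply strictAntiOn_of_deriv_neg (convex_Icc s0 t1) (hgc hs0pos)
      intro s hs
      rw [interior_Icc] at hs
      have hspos : 0 < s := lt_trans hs0pos hs.1
      rw [(hg_deriv s hspos).deriv]
      have hTs : T ≤ s := le_trans ht0T (le_trans hs0mem.1.1 (le_of_lt hs.1))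
      have := hdrift s hTs (le_of_lt (habove s hs.1 (le_of_lt hs.2)))
      linarith
    have := hanti (Set.left_mem_Icc.2 (le_of_lt hs0lt)) (Set.right_mem_Icc.2 (le_of_lt hs0lt)) hs0lt
    linarith
  exact Filter.eventually_atTop.2 ⟨t0, step2⟩

lemma g_tendsto {κ xs L : ℝ} (hκ : 0 < κ) (hxs : 0 < xs) (hL : 0 < L)
    {w g : ℝ → ℝ} (hw : Filter.Tendsto w Filter.atTop (nhds L))
    (hg_deriv : ∀ t > (0:ℝ), HasDerivAt g (κ * (w t * Real.exp (-g t) - xs)) t) :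
    Filter.Tendsto g Filter.atTop (nhds (Real.log (L / xs))) := by
  set l := Real.log (L / xs) with hldef
  have hexpl : Real.exp l = L / xs := Real.exp_log (by positivity)
  rw [tendsto_order]
  constructor
  · -- ∀ c < l, eventually c < g t
    intro c hc
    set δ := (l - c) / 4 with hδdef
    have hδpos : 0 < δ := by rw [hδdef]; linarith
    set ε := min (L / 2) (L * (1 - Real.exp (-δ)) / 2) with hεdef
    have hexpδ : Real.exp (-δ) < 1 := Real.exp_lt_one_iff.2 (by linarith)
    have hεpos : 0 < ε := by
      apply lt_min (by positivity)
      have : 0 < 1 - Real.exp (-δ) := by linarith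
      positivity
    have hεL : ε < L := lt_of_le_of_lt (min_le_left _ _) (by linarith)
    -- L - ε > L e^{-δ}
    have hLε : L * Real.exp (-δ) < L - ε := by
      have h2 : ε ≤ L * (1 - Real.exp (-δ)) / 2 := min_le_right _ _
      nlinarith [hexpδ, hL]
    set B := l - 3 * δ with hBdef
    have hBc : c < B := by rw [hBdef, hδdef]; linarith
    -- (L - ε) e^{-B} > xs
    have hc0key : xs < (L - ε) * Real.exp (-B) := by
      have h1 : xs * Real.exp (l - δ) < (L - ε) * Real.exp 0 := by
        rw [Real.exp_sub, hexpl, Real.exp_zero]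
        have : xs * (L / xs * Real.exp (-δ))  = L * Real.exp (-δ) := by
          field_simp
        rw [show xs * (L / xs / Real.exp δ) = xs * (L / xs * Real.exp (-δ)) by
          rw [Real.exp_neg]; ring]
        rw [this]
        linarith [hLε]
      have h2 : Real.exp (l - δ) * Real.exp (-B) = Real.exp (2 * δ) := by
        rw [← Real.exp_add, hBdef]; ring_nf
      have h3 : (1:ℝ) ≤ Real.exp (2 * δ) := Real.one_le_exp_iff.2 (by linarith)
      calc xs = xs * 1 := by ring
        _ ≤ xs * Real.exp (2 * δ) := by nlinarith [hxs]
        _ = (xs * Real.exp (l - δ)) * Real.exp (-B) := by rw [mul_assoc, h2]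
        _ < ((L - ε) * 1) * Real.exp (-B) := by
            have := Real.exp_pos (-B)
            rw [Real.exp_zero] at h1
            nlinarith [h1, this]
        _ = (L - ε) * Real.exp (-B) := by ring
    set c0 := κ * ((L - ε) * Real.exp (-B) - xs) with hc0def
    have hc0pos : 0 < c0 := by
      rw [hc0def]
      exact mul_pos hκ (by linarith [hc0key])
    -- choose T
    obtain ⟨T1, hT1⟩ := Metric.tendsto_atTop.1 hw ε hεpos
    set T := max T1 1 with hTdef
    have hTpos : (0:ℝ) < T := lt_of_lt_of_le one_pos (le_max_right _ _)
    have hwb : ∀ s, T ≤ s → L - ε ≤ w s ∧ w s ≤ L + ε := by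
      intro s hs
      have := hT1 s (le_trans (le_max_left _ _) hs)
      rw [Real.dist_eq, abs_lt] at this
      constructor <;> linarith [this.1, this.2]
    -- apply drift lemma to -g
    have hdrift : ∀ s, T ≤ s → -B ≤ -g s → -(κ * (w s * Real.exp (-g s) - xs)) ≤ -c0 := by
      intro s hs hBs
      have hgB : g s ≤ B := by linarith
      have hws := hwb s hs
      have h1 : Real.exp (-B) ≤ Real.exp (-g s) := Real.exp_le_exp.2 (by linarith)
      have h2 : (L - ε) * Real.exp (-B) ≤ w s * Real.exp (-g s) := by
        apply mul_le_mul hws.1 h1 (le_of_lt (Real.exp_pos _)) (by linarith [hws.1, hεL])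
      rw [hc0def]
      nlinarith [h2, hκ]
    have hg_deriv' : ∀ t > (0:ℝ), HasDerivAt (fun t => -g t)
        (-(κ * (w t * Real.exp (-g t) - xs))) t := fun t ht => (hg_deriv t ht).neg
    have := eventually_le_drift hTpos hc0pos hg_deriv' hdrift
    filter_upwards [this] with t ht
    have : g t ≥ B := by linarith
    linarith [hBc, this]
  · -- ∀ c > l, eventually g t < c
    intro c hc
    set δ := (c - l) / 4 with hδdef
    have hδpos : 0 < δ := by rw [hδdef]; linarith
    set ε := min (L / 2) (L * (Real.exp δ - 1) / 2) with hεdef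
    have hexpδ : 1 < Real.exp δ := by nlinarith [Real.add_one_le_exp δ, hδpos]
    have hεpos : 0 < ε := by
      apply lt_min (by positivity)
      have : 0 < Real.exp δ - 1 := by linarith
      positivity
    have hεL : ε < L := lt_of_le_of_lt (min_le_left _ _) (by linarith)
    have hLε : L + ε < L * Real.exp δ := by
      have h2 : ε ≤ L * (Real.exp δ - 1) / 2 := min_le_right _ _
      nlinarith [hexpδ, hL]
    set B := l + 3 * δ with hBdef
    have hBc : B < c := by rw [hBdef, hδdef]; linarith
    have hc0key : (L + ε) * Real.exp (-B) < xs := by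
      have h2 : Real.exp (l + δ) * Real.exp (-B) = Real.exp (-(2 * δ)) := by
        rw [← Real.exp_add, hBdef]; ring_nf
      have h3 : Real.exp (-(2 * δ)) ≤ 1 := Real.exp_le_one_iff.2 (by linarith)
      have h4 : L * Real.exp δ = xs * Real.exp (l + δ) := by
        rw [Real.exp_add, hexpl]
        field_simp
      calc (L + ε) * Real.exp (-B) < (L * Real.exp δ) * Real.exp (-B) := by
            have := Real.exp_pos (-B)
            nlinarith [hLε, this]
        _ = xs * (Real.exp (l + δ) * Real.exp (-B)) := by rw [h4]; ring
        _ = xs * Real.exp (-(2 * δ)) := by rw [h2]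
        _ ≤ xs * 1 := by nlinarith [hxs, h3]
        _ = xs := by ring
    set c0 := κ * (xs - (L + ε) * Real.exp (-B)) with hc0def
    have hc0pos : 0 < c0 := by
      rw [hc0def]
      exact mul_pos hκ (by linarith [hc0key])
    obtain ⟨T1, hT1⟩ := Metric.tendsto_atTop.1 hw ε hεpos
    set T := max T1 1 with hTdef
    have hTpos : (0:ℝ) < T := lt_of_lt_of_le one_pos (le_max_right _ _)
    have hwb : ∀ s, T ≤ s → L - ε ≤ w s ∧ w s ≤ L + ε := by
      intro s hs
      have := hT1 s (le_trans (le_max_left _ _) hs)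
      rw [Real.dist_eq, abs_lt] at this
      constructor <;> linarith [this.1, this.2]
    have hdrift : ∀ s, T ≤ s → B ≤ g s → κ * (w s * Real.exp (-g s) - xs) ≤ -c0 := by
      intro s hs hBs
      have hws := hwb s hs
      have h1 : Real.exp (-g s) ≤ Real.exp (-B) := Real.exp_le_exp.2 (by linarith)
      have h2 : w s * Real.exp (-g s) ≤ (L + ε) * Real.exp (-B) := by
        apply mul_le_mul hws.2 h1 (le_of_lt (Real.exp_pos _)) (by linarith [hεL])
      rw [hc0def]
      nlinarith [h2, hκ]
    have := eventually_le_drift hTpos hc0pos hg_deriv hdrift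
    filter_upwards [this] with t ht
    linarith [hBc, ht]


end Stmt6Aux

open Stmt6Aux Filter Set intervalIntegral MeasureTheory in
/-- Global stability: if `γ e^{-μτ} > μ` (i.e. `R₀ > 1`) and `x* > 0` is the positive
equilibrium (root of `γ e^{-τ(μ+κx)} = μ+κx`), every solution of the mixed alternative
logistic DDE with positive initial data on `[-τ,0]` converges to `x*`. -/
theorem stmt_6 (γ μ κ τ xs : ℝ) (hγ : 0 < γ) (hμ : 0 < μ) (hκ : 0 < κ) (hτ : 0 < τ)
    (hR0 : μ < γ * Real.exp (-μ * τ))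
    (hxs : 0 < xs) (hxs_eq : γ * Real.exp (-τ * (μ + κ * xs)) = μ + κ * xs)
    (x : ℝ → ℝ)
    (hx_cont : ContinuousOn x (Set.Ici (-τ)))
    (hx_pos : ∀ t ∈ Set.Icc (-τ) (0 : ℝ), 0 < x t)
    (hx_ode : ∀ t > (0 : ℝ), HasDerivAt x
      (γ * x (t - τ) * Real.exp (-μ * τ - κ * ∫ s in (t - τ)..t, x s)
        - μ * x t - κ * (x t) ^ 2) t) :
    Filter.Tendsto x Filter.atTop (nhds xs) := by
  set lam := μ + κ * xs with hlamdef
  have hlampos : 0 < lam := by positivity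
  have hgam : γ = lam * Real.exp (lam * τ) := by
    have h1 : -τ * (μ + κ * xs) = -(lam * τ) := by rw [hlamdef]; ring
    rw [h1] at hxs_eq
    have h2 : Real.exp (-(lam * τ)) * Real.exp (lam * τ) = 1 := by
      rw [← Real.exp_add]; simp
    calc γ = γ * (Real.exp (-(lam * τ)) * Real.exp (lam * τ)) := by rw [h2]; ring
      _ = (γ * Real.exp (-(lam * τ))) * Real.exp (lam * τ) := by ring
      _ = lam * Real.exp (lam * τ) := by rw [hxs_eq]
  have hτ' : -τ ≤ (0:ℝ) := by linarith
  set I : ℝ → ℝ := fun t => ∫ s in (0:ℝ)..t, x s with hIdef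
  have hI_cont : ContinuousOn I (Set.Ici (-τ)) := contOn_primitive hx_cont 0 hτ'
  have hI_deriv : ∀ u, -τ < u → HasDerivAt I (x u) u := primitive_hasDeriv hx_cont hτ'
  set E : ℝ → ℝ := fun t => Real.exp (μ * t + κ * I t) with hEdef
  have hEpos : ∀ t, 0 < E t := fun t => Real.exp_pos _
  set V : ℝ → ℝ := fun t => x t * E t with hVdef
  have hE_deriv : ∀ t, -τ < t → HasDerivAt E ((μ + κ * x t) * E t) t := by
    intro t ht
    have h1 : HasDerivAt (fun u => μ * u + κ * I u) (μ + κ * x t) t := by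
      have := ((hasDerivAt_id t).const_mul μ).add ((hI_deriv t ht).const_mul κ)
      simpa [mul_comm, Pi.add_def] using this
    have h2 := (Real.hasDerivAt_exp (μ * t + κ * I t)).comp t h1
    rw [hEdef]
    simpa [mul_comm, Function.comp_def] using h2
  have hV_cont : ContinuousOn V (Set.Ici (-τ)) := by
    apply hx_cont.mul
    apply Real.continuous_exp.comp_continuousOn
    exact ((continuous_const.mul continuous_id).continuousOn).add (continuousOn_const.mul hI_cont)
  have hV_deriv : ∀ t > (0:ℝ), HasDerivAt V (lam * Real.exp (lam * τ) * V (t - τ)) t := by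
    intro t ht
    have hx' := hx_ode t ht
    have hprod := hx'.mul (hE_deriv t (by linarith))
    have hJ : I t - (∫ s in (t-τ)..t, x s) = I (t - τ) := by
      have hadd : (∫ s in (0:ℝ)..(t-τ), x s) + (∫ s in (t-τ)..t, x s) = ∫ s in (0:ℝ)..t, x s := by
        apply intervalIntegral.integral_add_adjacent_intervals
        · apply ContinuousOn.intervalIntegrable
          apply hx_cont.mono
          intro z hz
          rcases Set.mem_uIcc.1 hz with h | h
          · exact le_trans hτ' h.1
          · exact le_trans (by linarith) h.1
        · apply ContinuousOn.intervalIntegrable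
          apply hx_cont.mono
          intro z hz
          rcases Set.mem_uIcc.1 hz with h | h
          · exact le_trans (by linarith) h.1
          · exact le_trans (by linarith) h.1
      simp only [hIdef]
      linarith [hadd]
    have hEJ : Real.exp (-μ * τ - κ * ∫ s in (t-τ)..t, x s) * E t = E (t - τ) := by
      rw [hEdef]
      simp only []
      rw [← Real.exp_add]
      congr 1
      have := hJ
      nlinarith [hJ]
    have heq : (γ * x (t - τ) * Real.exp (-μ * τ - κ * ∫ s in (t - τ)..t, x s)
        - μ * x t - κ * (x t) ^ 2) * E t + x t * ((μ + κ * x t) * E t)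
        = lam * Real.exp (lam * τ) * V (t - τ) := by
      have expand : (γ * x (t - τ) * Real.exp (-μ * τ - κ * ∫ s in (t - τ)..t, x s)
          - μ * x t - κ * (x t) ^ 2) * E t + x t * ((μ + κ * x t) * E t)
          = γ * x (t - τ) * (Real.exp (-μ * τ - κ * ∫ s in (t - τ)..t, x s) * E t) := by
        ring
      rw [expand, hEJ, hVdef]
      simp only []
      rw [hgam]
      ring
    rw [heq] at hprod
    exact hprod
  -- positivity of V on [-τ, ∞)
  have hV_pos : ∀ t, -τ ≤ t → 0 < V t := by
    have hbase : ∀ t, -τ ≤ t → t ≤ 0 → 0 < V t := by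
      intro t h1 h2
      exact mul_pos (hx_pos t ⟨h1, h2⟩) (hEpos t)
    have main : ∀ n : ℕ, ∀ t, -τ ≤ t → t ≤ n * τ → 0 < V t := by
      intro n
      induction n with
      | zero => intro t h1 h2; exact hbase t h1 (by simpa using h2)
      | succ n ih =>
        intro t h1 h2
        by_cases hc : t ≤ n * τ
        · exact ih t h1 hc
        push_neg at hc
        have htnn : (0:ℝ) ≤ t := le_trans (by positivity) (le_of_lt hc)
        have hkey := key1 hτ hV_cont hV_deriv (t0 := 0) (t := t) le_rfl htnn
        have hnn : 0 ≤ ∫ s in ((0:ℝ) - τ)..(t - τ), V s := by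
          apply intervalIntegral.integral_nonneg (by linarith)
          intro u hu
          have hu1 : -τ ≤ u := by linarith [hu.1]
          have hu2 : u ≤ n * τ := by
            have : t ≤ (n+1) * τ := by push_cast at h2 ⊢; linarith
            linarith [hu.2]
          exact le_of_lt (ih u hu1 hu2)
        have hV0 : 0 < V 0 := hbase 0 (by linarith) le_rfl
        have hpos : 0 < lam * Real.exp (lam * τ) := by positivity
        nlinarith [hkey, hnn, hV0, hpos, mul_nonneg (le_of_lt hpos) hnn]
    intro t ht
    rcases le_or_gt t 0 with h | h
    · exact hbase t ht h
    · obtain ⟨n, hn⟩ := exists_nat_ge (t / τ)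
      apply main n t ht
      rw [div_le_iff₀ hτ] at hn
      linarith
  -- the rescaled function w
  set w : ℝ → ℝ := fun t => Real.exp (-(lam * t)) * V t with hwdef
  have hw_cont : ContinuousOn w (Set.Ici (-τ)) := by
    apply ContinuousOn.mul _ hV_cont
    exact (Real.continuous_exp.comp (continuous_const.mul continuous_id).neg).continuousOn
  have hw_pos : ∀ t, -τ ≤ t → 0 < w t := fun t ht => mul_pos (Real.exp_pos _) (hV_pos t ht)
  have hw_ode : ∀ t > (0:ℝ), HasDerivAt w (lam * (w (t - τ) - w t)) t := by
    intro t ht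
    have h1 : HasDerivAt (fun u => Real.exp (-(lam * u))) (-lam * Real.exp (-(lam * t))) t := by
      have hin : HasDerivAt (fun u : ℝ => -(lam * u)) (-lam) t := by
        simpa [Pi.neg_def] using ((hasDerivAt_id t).const_mul lam).neg
      have := (Real.hasDerivAt_exp (-(lam * t))).comp t hin
      simpa [mul_comm, Function.comp_def] using this
    have hprod := h1.mul (hV_deriv t ht)
    have heq : -lam * Real.exp (-(lam * t)) * V t
        + Real.exp (-(lam * t)) * (lam * Real.exp (lam * τ) * V (t - τ))
        = lam * (w (t - τ) - w t) := by
      rw [hwdef]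
      simp only []
      have hid : Real.exp (-(lam * t)) * Real.exp (lam * τ) = Real.exp (-(lam * (t - τ))) := by
        rw [← Real.exp_add]; ring_nf
      linear_combination (lam * V (t - τ)) * hid
    rw [heq] at hprod
    exact hprod
  obtain ⟨L, hLpos, hwL⟩ := delay_converges hlampos hτ hw_cont hw_pos hw_ode
  -- the phase function g
  set g : ℝ → ℝ := fun t => κ * I t - κ * xs * t with hgdef
  have hxw : ∀ t, x t = w t * Real.exp (-g t) := by
    intro t
    have hcollapse : Real.exp (-(lam * t)) * Real.exp (μ * t + κ * I t)
        * Real.exp (-(κ * I t - κ * xs * t)) = 1 := by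
      rw [← Real.exp_add, ← Real.exp_add]
      rw [show -(lam * t) + (μ * t + κ * I t) + -(κ * I t - κ * xs * t) = 0 from by
        rw [hlamdef]; ring]
      exact Real.exp_zero
    have hrearr : w t * Real.exp (-g t)
        = x t * (Real.exp (-(lam * t)) * Real.exp (μ * t + κ * I t)
            * Real.exp (-(κ * I t - κ * xs * t))) := by
      simp only [hwdef, hVdef, hEdef, hgdef]
      ring
    rw [hrearr, hcollapse, mul_one]
  have hg_deriv : ∀ t > (0:ℝ), HasDerivAt g (κ * (w t * Real.exp (-g t) - xs)) t := by
    intro t ht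
    have h1 : HasDerivAt g (κ * x t - κ * xs) t := by
      rw [hgdef]
      have ha := (hI_deriv t (by linarith)).const_mul κ
      have hb : HasDerivAt (fun u : ℝ => κ * xs * u) (κ * xs) t := by
        simpa using (hasDerivAt_id t).const_mul (κ * xs)
      simpa [Pi.sub_def] using ha.sub hb
    have heq : κ * (w t * Real.exp (-g t) - xs) = κ * x t - κ * xs := by
      rw [← hxw t]; ring
    rw [heq]
    exact h1
  have hgL := g_tendsto hκ hxs hLpos hwL hg_deriv
  have hexp : Filter.Tendsto (fun t => Real.exp (-g t)) Filter.atTop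
      (nhds (Real.exp (-(Real.log (L / xs))))) := by
    have := (Real.continuous_exp.tendsto (-(Real.log (L / xs)))).comp hgL.neg
    exact this
  have hmul := hwL.mul hexp
  have hval : L * Real.exp (-(Real.log (L / xs))) = xs := by
    rw [Real.exp_neg, Real.exp_log (by positivity)]
    field_simp
  rw [hval] at hmul
  exact hmul.congr (fun t => (hxw t).symm)
end

section
/- Let γ, μ, κ, τ > 0 and let x : [−τ, ∞) → ℝ be continuous, differentiable on (0, ∞), and satisfy x'(t) = γ·x(t−τ)·exp(−μτ − κ∫_{t−τ}^{t} x(s) ds) − μ·x(t) − κ·x(t)² for all t > 0. Define Y(t) = γ·exp(−μτ − κ∫_{t−τ}^{t} x(s) ds) − μ − κ·x(t). Then Y is differentiable on (0, ∞) and Y'(t) = −κ·x(t)·Y(t) for all t > 0. -/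
/-- Along any solution of the mixed alternative logistic DDE, the Lyapunov-type function
`Y(t) = γ e^{-μτ - κ∫_{t-τ}^t x} - μ - κ x(t)` satisfies `Y'(t) = -κ x(t) Y(t)` for `t > 0`. -/
theorem stmt_7 (γ μ κ τ : ℝ) (hγ : 0 < γ) (hμ : 0 < μ) (hκ : 0 < κ) (hτ : 0 < τ)
    (x : ℝ → ℝ)
    (hx_cont : ContinuousOn x (Set.Ici (-τ)))
    (hx_ode : ∀ t > (0 : ℝ), HasDerivAt x
      (γ * x (t - τ) * Real.exp (-μ * τ - κ * ∫ s in (t - τ)..t, x s)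
        - μ * x t - κ * (x t) ^ 2) t) :
    ∀ t > (0 : ℝ), HasDerivAt
      (fun u => γ * Real.exp (-μ * τ - κ * ∫ s in (u - τ)..u, x s) - μ - κ * x u)
      (-(κ * x t) *
        (γ * Real.exp (-μ * τ - κ * ∫ s in (t - τ)..t, x s) - μ - κ * x t)) t := by
  intro t ht
  have hmeas := hx_cont.mono (Set.Ioi_subset_Ici le_rfl)
    |>.stronglyMeasurableAtFilter (μ := MeasureTheory.volume) isOpen_Ioi
  have hct : ContinuousAt x t := hx_cont.continuousAt (Ici_mem_nhds (by linarith))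
  have hct' : ContinuousAt x (t - τ) := hx_cont.continuousAt (Ici_mem_nhds (by linarith))
  have hIntF : ∀ u, -τ ≤ u → IntervalIntegrable x MeasureTheory.volume (-τ) u := by
    intro u hu
    exact (hx_cont.mono (by rw [Set.uIcc_of_le hu]; exact Set.Icc_subset_Ici_self)).intervalIntegrable
  have hF : HasDerivAt (fun u => ∫ s in (-τ)..u, x s) (x t) t :=
    intervalIntegral.integral_hasDerivAt_right (hIntF t (by linarith))
      (hmeas t (by simpa using ht.trans_le' (by linarith))) hct
  have hF2 : HasDerivAt (fun u => ∫ s in (-τ)..(u - τ), x s) (x (t - τ)) t := by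
    have h0 : HasDerivAt (fun u => ∫ s in (-τ)..u, x s) (x (t - τ)) (t - τ) :=
      intervalIntegral.integral_hasDerivAt_right (hIntF (t - τ) (by linarith))
        (hmeas (t - τ) (by simp only [Set.mem_Ioi]; linarith)) hct'
    have := h0.comp t ((hasDerivAt_id t).sub_const τ)
    simpa [Function.comp_def] using this
  have hI : HasDerivAt (fun u => ∫ s in (u - τ)..u, x s) (x t - x (t - τ)) t := by
    refine (hF.sub hF2).congr_of_eventuallyEq ?_
    filter_upwards [Ioi_mem_nhds ht] with u hu
    have hu0 : (0 : ℝ) < u := hu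
    exact (intervalIntegral.integral_interval_sub_left (hIntF u (by linarith))
      (hIntF (u - τ) (by linarith))).symm
  have hinner : HasDerivAt (fun u => -μ * τ - κ * ∫ s in (u - τ)..u, x s)
      (-(κ * (x t - x (t - τ)))) t := (hI.const_mul κ).const_sub (-μ * τ)
  have hE : HasDerivAt (fun u => γ * Real.exp (-μ * τ - κ * ∫ s in (u - τ)..u, x s))
      (Real.exp (-μ * τ - κ * ∫ s in (t - τ)..t, x s) * -(κ * (x t - x (t - τ))) * γ) t :=
    (hinner.exp).mul_const γ |>.congr_of_eventuallyEq (by filter_upwards with u; ring)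
  have hY := (hE.sub_const μ).sub ((hx_ode t ht).const_mul κ)
  exact hY.congr_deriv (by ring)
end

section
/- Let μ, κ, τ > 0 and let x : [−τ, ∞) → ℝ be continuous, positive, differentiable on (0, ∞), and satisfy x'(t) = (μ + κ·x(t))·(x(t−τ) − x(t)) for all t > 0. Define A_n = max_{s∈[0,τ]} x(nτ + s) for n = 0, 1, 2, …. Then A_{n+1} ≤ A_n for every n, i.e., the sequence of windowed maxima is nonincreasing. -/
/-- For a positive solution of the limiting equation `x'(t) = (μ + κ x(t))(x(t-τ) - x(t))`,
the sequence of windowed maxima `A_n = max_{s ∈ [0,τ]} x(nτ + s)` is nonincreasing. -/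
theorem stmt_8 (μ κ τ : ℝ) (hμ : 0 < μ) (hκ : 0 < κ) (hτ : 0 < τ)
    (x : ℝ → ℝ)
    (hx_cont : ContinuousOn x (Set.Ici (-τ)))
    (hx_pos : ∀ t, -τ ≤ t → 0 < x t)
    (hx_ode : ∀ t > (0 : ℝ), HasDerivAt x ((μ + κ * x t) * (x (t - τ) - x t)) t) :
    ∀ n : ℕ,
      sSup ((fun s => x (((n : ℝ) + 1) * τ + s)) '' Set.Icc (0 : ℝ) τ) ≤
      sSup ((fun s => x ((n : ℝ) * τ + s)) '' Set.Icc (0 : ℝ) τ) := by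
  intro n
  set a : ℝ := (n : ℝ) * τ with ha
  have hn0 : (0 : ℝ) ≤ (n : ℝ) := Nat.cast_nonneg n
  have ha0 : 0 ≤ a := mul_nonneg hn0 hτ.le
  -- boundedness of the lower window sup
  have hcont' : ContinuousOn (fun s => x (a + s)) (Set.Icc (0 : ℝ) τ) := by
    apply hx_cont.comp (continuous_const.add continuous_id).continuousOn
    intro s hs
    simp only [Set.mem_Ici]
    have := hs.1
    simp only [Pi.add_apply, id_eq]
    linarith
  have hbdd : BddAbove ((fun s => x (a + s)) '' Set.Icc (0 : ℝ) τ) :=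
    (isCompact_Icc.image_of_continuousOn hcont').bddAbove
  have hne : ((fun s => x (a + s)) '' Set.Icc (0 : ℝ) τ).Nonempty :=
    ⟨x (a + 0), ⟨0, ⟨le_rfl, hτ.le⟩, rfl⟩⟩
  set B : ℝ := sSup ((fun s => x (a + s)) '' Set.Icc (0 : ℝ) τ) with hB
  -- maximum of x over the two-window interval
  have hJcont : ContinuousOn x (Set.Icc a (a + τ + τ)) := by
    apply hx_cont.mono
    intro t ht
    simp only [Set.mem_Ici]
    have := ht.1
    linarith
  obtain ⟨t0, ht0J, hmax⟩ := isCompact_Icc.exists_isMaxOn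
    (⟨a, le_rfl, by linarith⟩ : (Set.Icc a (a + τ + τ)).Nonempty) hJcont
  -- the global max over both windows is at most B
  have ht0B : x t0 ≤ B := by
    by_cases hc : t0 ≤ a + τ
    · exact le_csSup hbdd ⟨t0 - a, ⟨by linarith [ht0J.1], by linarith⟩,
        congrArg x (by ring)⟩
    · push_neg at hc
      by_contra hBlt
      push_neg at hBlt
      have ht0pos : (0 : ℝ) < t0 := by linarith
      have hder := hx_ode t0 ht0pos
      -- delayed value is in the lower window, hence ≤ B
      have hdel : x (t0 - τ) ≤ B :=
        le_csSup hbdd ⟨t0 - τ - a, ⟨by linarith, by linarith [ht0J.2]⟩,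
          congrArg x (by ring)⟩
      -- derivative at t0 is nonneg (max from the left)
      have hslope := hasDerivAt_iff_tendsto_slope.1 hder
      have hmono : nhdsWithin t0 (Set.Iio t0) ≤ nhdsWithin t0 {t0}ᶜ :=
        nhdsWithin_mono t0 (fun y hy => ne_of_lt hy)
      have hd_nonneg : 0 ≤ (μ + κ * x t0) * (x (t0 - τ) - x t0) := by
        refine ge_of_tendsto (hslope.mono_left hmono) ?_
        filter_upwards [Ioo_mem_nhdsLT_of_mem (⟨by linarith, le_rfl⟩ :
          t0 ∈ Set.Ioc a t0)] with t ht
        have hxle : x t ≤ x t0 := hmax ⟨ht.1.le, by linarith [ht0J.2, ht.2]⟩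
        have : slope x t0 t = (x t - x t0) / (t - t0) := by
          simp [slope_def_field]
        rw [this]
        exact div_nonneg_iff.2 (Or.inr ⟨by linarith, by linarith [ht.2]⟩)
      have hxt0pos : 0 < x t0 := hx_pos t0 (by linarith)
      have hd_neg : (μ + κ * x t0) * (x (t0 - τ) - x t0) < 0 :=
        mul_neg_of_pos_of_neg (by nlinarith) (by linarith)
      linarith
  -- conclude
  refine csSup_le ⟨x (((n : ℝ) + 1) * τ + 0), ⟨0, ⟨le_rfl, hτ.le⟩, rfl⟩⟩ ?_
  rintro y ⟨s, hs, rfl⟩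
  have hexp : ((n : ℝ) + 1) * τ = a + τ := by rw [ha]; ring
  have hmem : ((n : ℝ) + 1) * τ + s ∈ Set.Icc a (a + τ + τ) := by
    constructor <;> rw [hexp] <;> [linarith [hs.1]; linarith [hs.2]]
  exact le_trans (hmax hmem) ht0B
end

section
/- Let γ, μ, κ, τ > 0 with γ·e^{−μτ} > μ, and let x* > 0 be the unique positive root of γ·e^{−τ(μ+κx)} = μ + κx. Let x : [−τ, ∞) → ℝ be continuous, positive, bounded, differentiable on (0, ∞), satisfying x'(t) = (μ + κ·x(t))·(x(t−τ) − x(t)) for all t > 0 together with the integral relation κ·x(t) = γ·exp(−μτ − κ∫_{t−τ}^{t} x(s) ds) − μ for all t ≥ 0. Then x(t) → x* as t → ∞. -/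
open intervalIntegral MeasureTheory Real Set Filter

set_option maxHeartbeats 1600000

private lemma aux_ftc (f : ℝ → ℝ) (hf : Continuous f) (t : ℝ) :
    HasDerivAt (fun u => ∫ s in (0:ℝ)..u, f s) (f t) t :=
  intervalIntegral.integral_hasDerivAt_right (hf.intervalIntegrable _ _)
    (hf.stronglyMeasurableAtFilter _ _) hf.continuousAt

private lemma aux_expint (a b s t : ℝ) (ha : a ≠ 0) :
    ∫ u in s..t, Real.exp (a*u - b) = (Real.exp (a*t - b) - Real.exp (a*s - b))/a := by
  have h : ∀ u : ℝ, HasDerivAt (fun u => Real.exp (a*u - b)/a) (Real.exp (a*u - b)) u := by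
    intro u
    have h1 := (((hasDerivAt_id u).const_mul a).sub_const b).exp.div_const a
    have h2 : Real.exp (a*u - b) = Real.exp (a * id u - b) * (a*1) / a := by field_simp; rfl
    rw [h2]; exact h1
  rw [intervalIntegral.integral_eq_sub_of_hasDerivAt (fun u _ => h u)
    ((by continuity : Continuous fun u => Real.exp (a*u - b)).intervalIntegrable _ _)]
  ring

private lemma aux_claim (a τ ε L : ℝ) (v : ℝ → ℝ) (hv : Continuous v)
    (ha : 0 < a) (hτ : 0 < τ) (hε : 0 < ε) (t₁ : ℝ)
    (hrep : Real.exp (a*t₁) * v t₁ - Real.exp (a*(t₁-τ)) * v (t₁-τ)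
      = a * Real.exp (a*τ) * ∫ u in (t₁-τ)..t₁, Real.exp (a*(u-τ)) * v (u-τ))
    (hub : ∀ u ∈ Set.Icc (t₁ - 2*τ) t₁, v u < L + ε)
    (hlb : L - ε < v t₁) :
    L - 2*ε*Real.exp (a*τ) ≤ v (t₁-τ) ∧
    τ*L - 2*ε*Real.exp (a*τ)/a ≤ ∫ u in (t₁-2*τ)..(t₁-τ), v u := by
  set e := Real.exp (a*τ) with he_def
  set A := Real.exp (a*(t₁-τ)) with hA_def
  set B := Real.exp (a*t₁) with hB_def
  set C := Real.exp (a*(t₁-2*τ)) with hC_def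
  have he : 0 < e := Real.exp_pos _
  have hA : 0 < A := Real.exp_pos _
  have hB : 0 < B := Real.exp_pos _
  have hC : 0 < C := Real.exp_pos _
  clear_value e A B C
  have hBA : B = A * e := by rw [hA_def, hB_def, he_def, ← Real.exp_add]; ring_nf
  have hAC : A = C * e := by rw [hA_def, hC_def, he_def, ← Real.exp_add]; ring_nf
  set J := ∫ u in (t₁-τ)..t₁, Real.exp (a*(u-τ)) * v (u-τ) with hJ_def
  clear_value J
  have hconv : Continuous fun u : ℝ => v (u - τ) := hv.comp (continuous_id.sub continuous_const)
  have hcexp : Continuous fun u : ℝ => Real.exp (a*(u-τ)) := by continuity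
  have ht1le : t₁ - τ ≤ t₁ := by linarith
  have hEI : ∫ u in (t₁-τ)..t₁, Real.exp (a*(u-τ)) = (A - C)/a := by
    rw [intervalIntegral.integral_congr (g := fun u => Real.exp (a*u - a*τ))
      (fun u _ => by rw [mul_sub])]
    rw [aux_expint a (a*τ) (t₁-τ) t₁ ha.ne']
    rw [show a*t₁ - a*τ = a*(t₁-τ) by ring, show a*(t₁-τ) - a*τ = a*(t₁-2*τ) by ring,
      hA_def, hC_def]
  have hmem : ∀ u ∈ Set.Icc (t₁-τ) t₁, u - τ ∈ Set.Icc (t₁ - 2*τ) t₁ := by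
    intro u hu; exact ⟨by linarith [hu.1], by linarith [hu.2]⟩
  have hJub : J ≤ (L+ε) * ((A - C)/a) := by
    rw [hJ_def]
    calc ∫ u in (t₁-τ)..t₁, Real.exp (a*(u-τ)) * v (u-τ)
        ≤ ∫ u in (t₁-τ)..t₁, Real.exp (a*(u-τ)) * (L+ε) := by
          apply intervalIntegral.integral_mono_on ht1le
            ((hcexp.mul hconv).intervalIntegrable _ _)
            ((hcexp.mul continuous_const).intervalIntegrable _ _)
          intro u hu
          exact mul_le_mul_of_nonneg_left (hub _ (hmem u hu)).le (Real.exp_nonneg _)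
      _ = (L+ε) * ((A - C)/a) := by
          rw [intervalIntegral.integral_mul_const, hEI]; ring
  have hexp1 : e * (A - C) = B - A := by rw [mul_sub, mul_comm e A, mul_comm e C, ← hBA, ← hAC]
  have e1 : a * e * J ≤ (L+ε) * (B - A) := by
    have h := mul_le_mul_of_nonneg_left hJub (by positivity : (0:ℝ) ≤ a * e)
    calc a*e*J ≤ a*e*((L+ε)*((A-C)/a)) := h
      _ = (L+ε)*(e*(A-C)) := by field_simp
      _ = (L+ε)*(B-A) := by rw [hexp1]
  have e2 : B * (L - ε) ≤ B * v t₁ := mul_le_mul_of_nonneg_left hlb.le hB.le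
  have e3 : A * v (t₁ - τ) = B * v t₁ - a*e*J := by rw [hrep.symm]; ring
  have e4 : A * (L + ε - 2*ε*e) ≤ A * v (t₁-τ) := by
    rw [hBA] at e1 e2 e3
    ring_nf at e1 e2 e3 ⊢
    linarith
  have conc1 : L - 2*ε*e ≤ v (t₁-τ) := by
    have := (mul_le_mul_iff_right₀ hA).mp e4
    linarith
  have hvub : v (t₁ - τ) < L + ε := hub _ ⟨by linarith, by linarith⟩
  set K := ∫ u in (t₁-τ)..t₁, Real.exp (a*(u-τ)) * ((L+ε) - v (u-τ)) with hK_def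
  clear_value K
  set G := ∫ u in (t₁-τ)..t₁, ((L+ε) - v (u-τ)) with hG_def
  clear_value G
  have e6 : K = (L+ε)*((A-C)/a) - J := by
    rw [hK_def, hJ_def]
    rw [intervalIntegral.integral_congr
      (g := fun u => Real.exp (a*(u-τ)) * (L+ε) - Real.exp (a*(u-τ)) * v (u-τ))
      (fun u _ => by ring)]
    rw [intervalIntegral.integral_sub (f := fun u => Real.exp (a*(u-τ)) * (L+ε)) (g := fun u => Real.exp (a*(u-τ)) * v (u-τ)) ((hcexp.mul continuous_const).intervalIntegrable _ _)
      ((hcexp.mul hconv).intervalIntegrable _ _)]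
    rw [intervalIntegral.integral_mul_const, hEI]; ring
  have e5 : C * G ≤ K := by
    rw [hK_def, hG_def, ← intervalIntegral.integral_const_mul]
    apply intervalIntegral.integral_mono_on ht1le
      ((continuous_const.mul (continuous_const.sub hconv)).intervalIntegrable _ _)
      ((hcexp.mul (continuous_const.sub hconv)).intervalIntegrable _ _)
    intro u hu
    apply mul_le_mul_of_nonneg_right _ (by simp only [Pi.sub_apply]; linarith [hub _ (hmem u hu)])
    rw [hC_def]
    exact Real.exp_le_exp.mpr (by nlinarith [hu.1])
  have e8 : A * v (t₁-τ) ≤ A * (L+ε) := mul_le_mul_of_nonneg_left hvub.le hA.le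
  have e7 : a*e*K ≤ 2*ε*B := by
    have h1 : a*e*K = (L+ε)*(B-A) - (B * v t₁ - A * v (t₁-τ)) := by
      rw [e6, ← hexp1, e3]; field_simp; ring
    ring_nf at h1 e2 e8 ⊢
    linarith
  have hBC : B = C * (e*e) := by rw [hAC] at hBA; rw [hBA]; ring
  have e9 : G * a ≤ 2*ε*e := by
    have h9 : a*e*(C*G) ≤ 2*ε*(C*(e*e)) := by
      calc a*e*(C*G) ≤ a*e*K := mul_le_mul_of_nonneg_left e5 (by positivity)
        _ ≤ 2*ε*B := e7
        _ = 2*ε*(C*(e*e)) := by rw [hBC]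
    have h10 : (C*e) * (G * a) ≤ (C*e) * (2*ε*e) := by ring_nf; ring_nf at h9; linarith
    exact le_of_mul_le_mul_left h10 (by positivity)
  have hGval : G = τ*(L+ε) - ∫ u in (t₁-τ)..t₁, v (u-τ) := by
    rw [hG_def, intervalIntegral.integral_sub (by exact intervalIntegrable_const)
      (hconv.intervalIntegrable _ _), intervalIntegral.integral_const]
    simp [smul_eq_mul]
  have hCV : (∫ u in (t₁-τ)..t₁, v (u-τ)) = ∫ u in (t₁-2*τ)..(t₁-τ), v u := by
    rw [intervalIntegral.integral_comp_sub_right v τ]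
    congr 1; ring
  have conc2 : τ*L - 2*ε*e/a ≤ ∫ u in (t₁-2*τ)..(t₁-τ), v u := by
    rw [← hCV]
    have hiv : (∫ u in (t₁-τ)..t₁, v (u-τ)) = τ*(L+ε) - G := by linarith [hGval]
    rw [hiv]
    have hG2 : G ≤ 2*ε*e/a := by rw [le_div_iff₀ ha]; exact e9
    have hexp2 : τ*(L+ε) = τ*L + τ*ε := by ring
    rw [hexp2]
    linarith [mul_pos hτ hε]
  exact ⟨conc1, conc2⟩

/-- Every positive bounded solution of the limiting system
`x'(t) = (μ + κ x(t))(x(t-τ) - x(t))` satisfying the integral relation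
`κ x(t) = γ e^{-μτ - κ∫_{t-τ}^t x} - μ` converges to the positive equilibrium `x*`. -/
theorem stmt_9 (γ μ κ τ xs : ℝ) (hγ : 0 < γ) (hμ : 0 < μ) (hκ : 0 < κ) (hτ : 0 < τ)
    (hR0 : μ < γ * Real.exp (-μ * τ))
    (hxs : 0 < xs) (hxs_eq : γ * Real.exp (-τ * (μ + κ * xs)) = μ + κ * xs)
    (x : ℝ → ℝ)
    (hx_cont : ContinuousOn x (Set.Ici (-τ)))
    (hx_pos : ∀ t, -τ ≤ t → 0 < x t)
    (hx_bdd : ∃ B : ℝ, ∀ t, -τ ≤ t → x t ≤ B)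
    (hx_ode : ∀ t > (0 : ℝ), HasDerivAt x ((μ + κ * x t) * (x (t - τ) - x t)) t)
    (hx_int : ∀ t ≥ (0 : ℝ),
      κ * x t = γ * Real.exp (-μ * τ - κ * ∫ s in (t - τ)..t, x s) - μ) :
    Filter.Tendsto x Filter.atTop (nhds xs) := by
  -- continuous positive extension of x
  set xt : ℝ → ℝ := fun t => x (max t (-τ)) with hxt_def
  have hxt_cont : Continuous xt :=
    hx_cont.comp_continuous (continuous_id.max continuous_const) (fun t => Set.mem_Ici.mpr (le_max_right _ _))
  have hxt_eq : ∀ t, -τ ≤ t → xt t = x t := by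
    intro t ht; rw [hxt_def]; simp only; rw [max_eq_left ht]
  have hxt_pos : ∀ t, 0 < xt t := fun t => hx_pos _ (le_max_right _ _)
  -- p
  set p : ℝ → ℝ := fun t => μ + κ * xt t with hp_def
  have hp_cont : Continuous p := continuous_const.add (continuous_const.mul hxt_cont)
  -- a = equilibrium of p
  set a := μ + κ * xs with ha_def
  have ha : 0 < a := by rw [ha_def]; positivity
  clear_value a
  have hkey : γ * Real.exp (-(a*τ)) = a := by
    rw [show -(a*τ) = -τ*a by ring]
    exact hxs_eq
  -- P = ∫ p, v = exp(P - at)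
  set P : ℝ → ℝ := fun t => ∫ s in (0:ℝ)..t, p s with hP_def
  have hP_deriv : ∀ t, HasDerivAt P (p t) t := aux_ftc p hp_cont
  have hPsub : ∀ t : ℝ, P t - P (t-τ) = ∫ s in (t-τ)..t, p s := by
    intro t
    have h := intervalIntegral.integral_add_adjacent_intervals (a := (0:ℝ)) (b := t-τ) (c := t)
      (hp_cont.intervalIntegrable (μ := MeasureTheory.volume) _ _)
      (hp_cont.intervalIntegrable (μ := MeasureTheory.volume) _ _)
    rw [hP_def]; simp only; linarith [h]
  have hrelp : ∀ t, 0 ≤ t → p t = γ * Real.exp (-(P t - P (t-τ))) := by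
    intro t ht
    have hint := hx_int t ht
    have hcong : (∫ s in (t-τ)..t, x s) = ∫ s in (t-τ)..t, xt s := by
      apply intervalIntegral.integral_congr
      intro s hs
      rw [Set.uIcc_of_le (by linarith : t - τ ≤ t)] at hs
      exact (hxt_eq s (by linarith [hs.1])).symm
    have hPint : P t - P (t-τ) = μ*τ + κ * ∫ s in (t-τ)..t, xt s := by
      rw [hPsub t, hp_def]
      rw [intervalIntegral.integral_add (f := fun _ => μ) (g := fun s => κ * xt s) ((continuous_const (y := μ)).intervalIntegrable _ _)
        ((continuous_const.mul hxt_cont).intervalIntegrable _ _),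
        intervalIntegral.integral_const, intervalIntegral.integral_const_mul]
      simp [smul_eq_mul]; ring
    have hpt : p t = γ * Real.exp (-μ*τ - κ * ∫ s in (t-τ)..t, x s) := by
      rw [hp_def]; simp only; rw [hxt_eq t (by linarith)]; linarith [hint]
    rw [hpt, hcong, hPint]
    congr 1
    rw [Real.exp_eq_exp]
    ring
  set v : ℝ → ℝ := fun t => Real.exp (P t - a*t) with hv_def
  have hv_pos : ∀ t, 0 < v t := fun t => Real.exp_pos _
  have hP_cont : Continuous P := by
    apply continuous_iff_continuousAt.mpr
    exact fun t => (hP_deriv t).continuousAt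
  have hv_cont : Continuous v := Real.continuous_exp.comp
    (hP_cont.sub (continuous_const.mul continuous_id))
  have hv_deriv : ∀ t, HasDerivAt v ((p t - a) * v t) t := by
    intro t
    have h := ((hP_deriv t).sub ((hasDerivAt_id t).const_mul a)).exp
    have heq : (p t - a) * v t = Real.exp (P t - a * id t) * (p t - a * 1) := by
      rw [hv_def]; simp only [id]; ring
    rw [hv_def]
    simp only [id] at h ⊢
    rw [heq]
    exact h
  have hpv : ∀ t, 0 ≤ t → p t * v t = a * v (t - τ) := by
    intro t ht
    rw [hrelp t ht, hv_def]
    simp only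
    rw [show a * Real.exp (P (t-τ) - a*(t-τ)) = γ * Real.exp (-(a*τ) + (P (t-τ) - a*(t-τ))) by
      rw [Real.exp_add, ← mul_assoc, hkey], mul_assoc, ← Real.exp_add]
    congr 1
    rw [Real.exp_eq_exp]
    ring
  -- W = exp(at) v and its derivative for t ≥ 0
  have hW_deriv : ∀ t, 0 ≤ t → HasDerivAt (fun u => Real.exp (a*u) * v u)
      (a * Real.exp (a*τ) * (Real.exp (a*(t-τ)) * v (t-τ))) t := by
    intro t ht
    have hexp : HasDerivAt (fun u : ℝ => Real.exp (a*u)) (Real.exp (a*id t) * (a*1)) t :=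
      ((hasDerivAt_id t).const_mul a).exp
    have h := hexp.mul (hv_deriv t)
    have h1 : Real.exp (a*τ) * Real.exp (a*(t-τ)) = Real.exp (a*t) := by
      rw [← Real.exp_add]; congr 1; ring
    have h2 := hpv t ht
    have heq : a * Real.exp (a*τ) * (Real.exp (a*(t-τ)) * v (t-τ))
        = Real.exp (a*id t) * (a*1) * v t + Real.exp (a*id t) * ((p t - a) * v t) := by
      simp only [id]
      linear_combination (a * v (t-τ)) * h1 - Real.exp (a*t) * h2
    rw [heq]
    exact h
  -- representation formula
  have hrep : ∀ t₁, τ ≤ t₁ → Real.exp (a*t₁) * v t₁ - Real.exp (a*(t₁-τ)) * v (t₁-τ)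
      = a * Real.exp (a*τ) * ∫ u in (t₁-τ)..t₁, Real.exp (a*(u-τ)) * v (u-τ) := by
    intro t₁ ht₁
    rw [← intervalIntegral.integral_const_mul]
    have hds : ∀ u ∈ Set.uIcc (t₁-τ) t₁, HasDerivAt (fun u => Real.exp (a*u) * v u)
        (a * Real.exp (a*τ) * (Real.exp (a*(u-τ)) * v (u-τ))) u := by
      intro u hu
      rw [Set.uIcc_of_le (by linarith : t₁ - τ ≤ t₁)] at hu
      exact hW_deriv u (by linarith [hu.1])
    have hintg : Continuous fun u : ℝ => a * Real.exp (a*τ) * (Real.exp (a*(u-τ)) * v (u-τ)) :=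
      continuous_const.mul ((Real.continuous_exp.comp (continuous_const.mul (continuous_id.sub continuous_const))).mul (hv_cont.comp (continuous_id.sub continuous_const)))
    have h := intervalIntegral.integral_eq_sub_of_hasDerivAt hds (hintg.intervalIntegrable _ _)
    rw [h]
  -- conserved quantity
  set Q : ℝ → ℝ := fun t => ∫ s in (0:ℝ)..t, v s with hQ_def
  have hQ_deriv : ∀ t, HasDerivAt Q (v t) t := aux_ftc v hv_cont
  have hQint : ∀ t : ℝ, Q t - Q (t-τ) = ∫ s in (t-τ)..t, v s := by
    intro t
    have h := intervalIntegral.integral_add_adjacent_intervals (a := (0:ℝ)) (b := t-τ) (c := t)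
      (hv_cont.intervalIntegrable (μ := MeasureTheory.volume) _ _)
      (hv_cont.intervalIntegrable (μ := MeasureTheory.volume) _ _)
    rw [hQ_def]; simp only; linarith [h]
  have hE : ∀ t, 0 ≤ t → v t + a * (Q t - Q (t - τ)) = v 0 + a * (Q 0 - Q (0 - τ)) := by
    intro t ht
    have hds : ∀ u ∈ Set.uIcc 0 t, HasDerivAt (fun s => v s + a * (Q s - Q (s - τ))) 0 u := by
      intro u hu
      rw [Set.uIcc_of_le ht] at hu
      have h1 : HasDerivAt v (a * v (u-τ) - a * v u) u := by
        have h := hv_deriv u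
        rw [show (p u - a) * v u = a * v (u-τ) - a * v u by
          rw [sub_mul, hpv u hu.1]] at h
        exact h
      have h3 : HasDerivAt (fun s => Q (s - τ)) (v (u - τ)) u := by
        have := (hQ_deriv (u - τ)).comp u ((hasDerivAt_id u).sub_const τ)
        simpa [Function.comp_def] using this
      have h := h1.add (((hQ_deriv u).sub h3).const_mul a)
      have heq : (0:ℝ) = a * v (u-τ) - a * v u + a * (v u - v (u-τ)) := by ring
      rw [heq]
      exact h
    have h := intervalIntegral.integral_eq_sub_of_hasDerivAt hds
      ((continuous_const (y := (0:ℝ))).intervalIntegrable _ _)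
    simp only [intervalIntegral.integral_zero] at h
    linarith [h]
  set E0 := v 0 + a * (Q 0 - Q (0 - τ)) with hE0_def
  clear_value E0
  -- upper bound
  have hub : ∀ t, 0 ≤ t → v t ≤ E0 := by
    intro t ht
    have h := hE t ht
    have h2 : 0 ≤ Q t - Q (t - τ) := by
      rw [hQint t]
      exact intervalIntegral.integral_nonneg (by linarith) (fun u _ => (hv_pos u).le)
    nlinarith [mul_nonneg ha.le h2]
  -- lower bound
  obtain ⟨u0, hu0mem, hu0min⟩ := isCompact_Icc.exists_isMinOn
    (Set.nonempty_Icc.mpr (by linarith : -τ ≤ (0:ℝ))) (hv_cont.continuousOn)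
  set m0 := v u0 with hm0_def
  have hm0pos : 0 < m0 := hm0_def ▸ hv_pos u0
  clear_value m0
  have hlow : ∀ n : ℕ, ∀ t, -τ ≤ t → t ≤ n*τ → m0 ≤ v t := by
    intro n
    induction n with
    | zero =>
      intro t ht1 ht2
      simp only [Nat.cast_zero, zero_mul] at ht2
      rw [hm0_def]
      exact hu0min ⟨ht1, ht2⟩
    | succ n ih =>
      intro t ht1 ht2
      by_cases hc : t ≤ n*τ
      · exact ih t ht1 hc
      push_neg at hc
      have hs0 : (0:ℝ) ≤ n*τ := by positivity
      have hds : ∀ u ∈ Set.uIcc (n*τ : ℝ) t, HasDerivAt (fun u => Real.exp (a*u) * v u)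
          (a * Real.exp (a*τ) * (Real.exp (a*(u-τ)) * v (u-τ))) u := by
        intro u hu
        rw [Set.uIcc_of_le hc.le] at hu
        exact hW_deriv u (by linarith [hu.1])
      have hintg : Continuous fun u : ℝ => a * Real.exp (a*τ) * (Real.exp (a*(u-τ)) * v (u-τ)) :=
        continuous_const.mul ((Real.continuous_exp.comp (continuous_const.mul (continuous_id.sub continuous_const))).mul (hv_cont.comp (continuous_id.sub continuous_const)))
      have hft := intervalIntegral.integral_eq_sub_of_hasDerivAt hds
        (hintg.intervalIntegrable _ _)
      -- lower bound the integral
      have hlbint : m0 * ((Real.exp (a*t - a*τ) - Real.exp (a*(n*τ) - a*τ))/a)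
          ≤ ∫ u in (n*τ:ℝ)..t, Real.exp (a*(u-τ)) * v (u-τ) := by
        rw [← aux_expint a (a*τ) (n*τ) t ha.ne', ← intervalIntegral.integral_const_mul]
        have hce : Continuous fun u : ℝ => Real.exp (a*u - a*τ) :=
          Real.continuous_exp.comp ((continuous_const.mul continuous_id).sub continuous_const)
        have hce2 : Continuous fun u : ℝ => Real.exp (a*(u-τ)) := (Real.continuous_exp.comp (continuous_const.mul (continuous_id.sub continuous_const)))
        apply intervalIntegral.integral_mono_on hc.le
          ((continuous_const.mul hce).intervalIntegrable _ _)
          ((hce2.mul (hv_cont.comp (continuous_id.sub continuous_const))).intervalIntegrable _ _)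
        intro u hu
        simp only [Pi.mul_apply, Pi.sub_apply, Function.comp_apply, id_eq]; rw [show a*u - a*τ = a*(u-τ) by ring, mul_comm]
        apply mul_le_mul_of_nonneg_left _ (Real.exp_nonneg _)
        exact ih (u-τ) (by linarith [hu.1]) (by push_cast at ht2 ⊢; linarith [hu.2])
      have hWn : Real.exp (a*(n*τ)) * m0 ≤ Real.exp (a*(n*τ)) * v (n*τ) := by
        apply mul_le_mul_of_nonneg_left _ (Real.exp_nonneg _)
        exact ih (n*τ) (by linarith) (le_refl _)
      have hintval : a * Real.exp (a*τ) *
          (m0 * ((Real.exp (a*t - a*τ) - Real.exp (a*(n*τ) - a*τ))/a))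
          = m0 * (Real.exp (a*t) - Real.exp (a*(n*τ))) := by
        rw [Real.exp_sub, Real.exp_sub]
        field_simp
      have hfin : m0 * Real.exp (a*t) ≤ Real.exp (a*t) * v t := by
        have h5 := mul_le_mul_of_nonneg_left hlbint (by positivity : (0:ℝ) ≤ a * Real.exp (a*τ))
        rw [hintval] at h5
        rw [intervalIntegral.integral_const_mul] at hft
        linarith [hWn, h5, hft]
      have := (mul_le_mul_iff_right₀ (Real.exp_pos (a*t))).mp (by linarith [hfin] :
        Real.exp (a*t) * m0 ≤ Real.exp (a*t) * v t)
      exact this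
  have hlowall : ∀ t, -τ ≤ t → m0 ≤ v t := by
    intro t ht
    refine hlow ⌈t/τ⌉₊ t ht ?_
    have h1 := Nat.le_ceil (t/τ)
    rw [div_le_iff₀ hτ] at h1
    linarith [h1]
  -- limsup / liminf
  have hev_ub : ∀ᶠ t in atTop, v t ≤ E0 := (eventually_ge_atTop 0).mono (fun t ht => hub t ht)
  have hev_lb : ∀ᶠ t in atTop, m0 ≤ v t :=
    (eventually_ge_atTop (-τ)).mono (fun t ht => hlowall t ht)
  have hbdd : Filter.IsBoundedUnder (· ≤ ·) atTop v := ⟨E0, by exact hev_ub⟩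
  have hbdd' : Filter.IsBoundedUnder (· ≥ ·) atTop v := ⟨m0, by exact hev_lb⟩
  set L := Filter.limsup v atTop with hL_def
  set l := Filter.liminf v atTop with hl_def
  clear_value L l
  have hll : l ≤ L := by rw [hL_def, hl_def]; exact Filter.liminf_le_limsup hbdd hbdd'
  have hm0l : m0 ≤ l := by rw [hl_def]; exact Filter.le_liminf_of_le hbdd.isCoboundedUnder_ge hev_lb
  have he : 0 < Real.exp (a*τ) := Real.exp_pos _
  have main1 : ∀ ε, 0 < ε → (1 + a*τ)*L ≤ E0 + 4*Real.exp (a*τ)*ε := by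
    intro ε hε
    have hev1 : ∀ᶠ t in atTop, v t < L + ε :=
      Filter.eventually_lt_of_limsup_lt (show limsup v atTop < L + ε by rw [← hL_def]; linarith) hbdd
    obtain ⟨N, hN⟩ := Filter.eventually_atTop.mp hev1
    have hfreq : ∃ᶠ t in atTop, L - ε < v t :=
      Filter.frequently_lt_of_lt_limsup hbdd'.isCoboundedUnder_le (show L - ε < limsup v atTop by rw [← hL_def]; linarith)
    obtain ⟨t₁, ht₁ge, ht₁⟩ := (Filter.frequently_atTop.mp hfreq) (max N 0 + 2*τ)
    have htN : N ≤ t₁ - 2*τ := by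
      have := le_max_left N 0
      linarith
    have ht0 : 0 ≤ t₁ - 2*τ := by
      have := le_max_right N 0
      linarith
    have hIcc : ∀ u ∈ Set.Icc (t₁ - 2*τ) t₁, v u < L + ε := fun u hu =>
      hN u (by linarith [hu.1])
    obtain ⟨hc1, hc2⟩ := aux_claim a τ ε L v hv_cont ha hτ hε t₁
      (hrep t₁ (by linarith)) hIcc ht₁
    have hE1 := hE (t₁ - τ) (by linarith)
    have hQ1 : Q (t₁-τ) - Q (t₁-τ-τ) = ∫ s in (t₁-2*τ)..(t₁-τ), v s := by
      rw [hQint (t₁-τ)]; congr 1; ring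
    have hstep := mul_le_mul_of_nonneg_left hc2 ha.le
    have hstep2 : a*(τ*L - 2*ε*Real.exp (a*τ)/a) = a*τ*L - 2*ε*Real.exp (a*τ) := by field_simp
    rw [hstep2] at hstep
    have hE0eq : E0 = v (t₁-τ) + a * ∫ s in (t₁-2*τ)..(t₁-τ), v s := by
      rw [← hQ1]; linarith [hE1]
    nlinarith [hstep, hc1, hE0eq]
  have main2 : ∀ ε, 0 < ε → E0 ≤ (1 + a*τ)*l + 4*Real.exp (a*τ)*ε := by
    intro ε hε
    have hev1 : ∀ᶠ t in atTop, l - ε < v t :=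
      Filter.eventually_lt_of_lt_liminf (show l - ε < liminf v atTop by rw [← hl_def]; linarith) hbdd'
    obtain ⟨N, hN⟩ := Filter.eventually_atTop.mp hev1
    have hfreq : ∃ᶠ t in atTop, v t < l + ε :=
      Filter.frequently_lt_of_liminf_lt hbdd.isCoboundedUnder_ge (show liminf v atTop < l + ε by rw [← hl_def]; linarith)
    obtain ⟨t₁, ht₁ge, ht₁⟩ := (Filter.frequently_atTop.mp hfreq) (max N 0 + 2*τ)
    have htN : N ≤ t₁ - 2*τ := by
      have := le_max_left N 0
      linarith
    have ht0 : 0 ≤ t₁ - 2*τ := by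
      have := le_max_right N 0
      linarith
    -- apply aux_claim to -v with L := -l
    have hIcc : ∀ u ∈ Set.Icc (t₁ - 2*τ) t₁, (-v u) < (-l) + ε := fun u hu => by
      have := hN u (by linarith [hu.1])
      linarith
    have hrepneg : Real.exp (a*t₁) * (-v t₁) - Real.exp (a*(t₁-τ)) * (-v (t₁-τ))
        = a * Real.exp (a*τ) * ∫ u in (t₁-τ)..t₁, Real.exp (a*(u-τ)) * (-v (u-τ)) := by
      have h := hrep t₁ (by linarith)
      have hnegint : (∫ u in (t₁-τ)..t₁, Real.exp (a*(u-τ)) * (-v (u-τ)))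
          = -∫ u in (t₁-τ)..t₁, Real.exp (a*(u-τ)) * v (u-τ) := by
        rw [← intervalIntegral.integral_neg]
        apply intervalIntegral.integral_congr
        intro u _; ring
      rw [hnegint]
      linarith [h]
    obtain ⟨hc1, hc2⟩ := aux_claim a τ ε (-l) (fun t => -v t) hv_cont.neg ha hτ hε t₁
      hrepneg hIcc (show (-l) - ε < -v t₁ by linarith [ht₁])
    -- translate back
    have hc1b : (-l) - 2*ε*Real.exp (a*τ) ≤ -v (t₁-τ) := hc1
    have hc1' : v (t₁-τ) ≤ l + 2*ε*Real.exp (a*τ) := by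
      linarith [hc1b]
    have hnegint2 : (∫ u in (t₁-2*τ)..(t₁-τ), -v u) = -∫ u in (t₁-2*τ)..(t₁-τ), v u := by
      rw [← intervalIntegral.integral_neg]
    have hc2' : (∫ u in (t₁-2*τ)..(t₁-τ), v u) ≤ τ*l + 2*ε*Real.exp (a*τ)/a := by
      rw [hnegint2] at hc2
      linarith [hc2]
    have hE1 := hE (t₁ - τ) (by linarith)
    have hQ1 : Q (t₁-τ) - Q (t₁-τ-τ) = ∫ s in (t₁-2*τ)..(t₁-τ), v s := by
      rw [hQint (t₁-τ)]; congr 1; ring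
    have hE0eq : E0 = v (t₁-τ) + a * ∫ s in (t₁-2*τ)..(t₁-τ), v s := by
      rw [← hQ1]; linarith [hE1]
    have hstep := mul_le_mul_of_nonneg_left hc2' ha.le
    have hstep2 : a*(τ*l + 2*ε*Real.exp (a*τ)/a) = a*τ*l + 2*ε*Real.exp (a*τ) := by field_simp
    rw [hstep2] at hstep
    nlinarith [hstep, hc1', hE0eq]
  have key1 : (1 + a*τ)*L ≤ E0 := by
    by_contra hcon
    push_neg at hcon
    have hε : 0 < ((1 + a*τ)*L - E0)/(8*Real.exp (a*τ)) := by
      apply div_pos (by linarith) (by linarith)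
    have := main1 _ hε
    have h4 : 4*Real.exp (a*τ)*(((1 + a*τ)*L - E0)/(8*Real.exp (a*τ))) = ((1 + a*τ)*L - E0)/2 := by
      field_simp; ring
    rw [h4] at this
    linarith
  have key2 : E0 ≤ (1 + a*τ)*l := by
    by_contra hcon
    push_neg at hcon
    have hε : 0 < (E0 - (1 + a*τ)*l)/(8*Real.exp (a*τ)) := by
      apply div_pos (by linarith) (by linarith)
    have := main2 _ hε
    have h4 : 4*Real.exp (a*τ)*((E0 - (1 + a*τ)*l)/(8*Real.exp (a*τ))) = (E0 - (1 + a*τ)*l)/2 := by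
      field_simp; ring
    rw [h4] at this
    linarith
  have hLl : L ≤ l := by
    have h1aτ : 0 < 1 + a*τ := by positivity
    have h := key1.trans key2
    exact le_of_mul_le_mul_left (by linarith [h]) h1aτ
  have hLeq : l = L := le_antisymm hll hLl
  have hVpos : 0 < L := lt_of_lt_of_le hm0pos (hm0l.trans hll)
  have hvt : Tendsto v atTop (nhds L) := by
    refine tendsto_of_liminf_eq_limsup ?_ hL_def.symm hbdd hbdd'
    rw [← hl_def, hLeq]
  -- conclude
  have hshift : Tendsto (fun t : ℝ => t - τ) atTop atTop := by
    have := tendsto_atTop_add_const_right atTop (-τ) (tendsto_id (α := ℝ) (x := atTop))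
    simpa [sub_eq_add_neg] using this
  have hvshift : Tendsto (fun t => v (t - τ)) atTop (nhds L) := hvt.comp hshift
  have hptend : Tendsto p atTop (nhds a) := by
    have hq : Tendsto (fun t => a * (v (t-τ) / v t)) atTop (nhds (a * (L / L))) :=
      tendsto_const_nhds.mul (hvshift.div hvt hVpos.ne')
    rw [div_self hVpos.ne', mul_one] at hq
    apply hq.congr'
    filter_upwards [eventually_ge_atTop (0:ℝ)] with t ht
    have h := hpv t ht
    field_simp [(hv_pos t).ne']
    linarith [h]
  have h1 : Tendsto (fun t => (p t - μ)/κ) atTop (nhds ((a - μ)/κ)) :=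
    (hptend.sub tendsto_const_nhds).div_const κ
  have h2 : (a - μ)/κ = xs := by rw [ha_def]; field_simp; ring
  rw [h2] at h1
  apply h1.congr'
  filter_upwards [eventually_ge_atTop (0:ℝ)] with t ht
  rw [hp_def]
  simp only
  rw [hxt_eq t (by linarith)]
  field_simp; ring
end

section
/- Let γ, μ, κ, τ > 0 with γ·e^{−μτ} > μ, and set K = (γ·e^{−μτ} − μ)/κ. Let x : [−τ, ∞) → ℝ be a positive continuous solution of x'(t) = γ·x(t−τ)·exp(−μτ − κ∫_{t−τ}^{t} x(s) ds) − μ·x(t) − κ·x(t)² on (0, ∞). Then limsup_{t→∞} x(t) ≤ K. -/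
set_option maxHeartbeats 1000000

/-- Eventual boundedness by the delay reduced carrying capacity: any positive continuous
solution of the mixed alternative logistic DDE satisfies
`limsup_{t→∞} x(t) ≤ K = (γ e^{-μτ} - μ)/κ`. -/
theorem stmt_10 (γ μ κ τ : ℝ) (hγ : 0 < γ) (hμ : 0 < μ) (hκ : 0 < κ) (hτ : 0 < τ)
    (hR0 : μ < γ * Real.exp (-μ * τ))
    (x : ℝ → ℝ)
    (hx_cont : ContinuousOn x (Set.Ici (-τ)))
    (hx_pos : ∀ t, -τ ≤ t → 0 < x t)
    (hx_ode : ∀ t > (0 : ℝ), HasDerivAt x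
      (γ * x (t - τ) * Real.exp (-μ * τ - κ * ∫ s in (t - τ)..t, x s)
        - μ * x t - κ * (x t) ^ 2) t) :
    Filter.limsup x Filter.atTop ≤ (γ * Real.exp (-μ * τ) - μ) / κ := by
  have hE : (0:ℝ) < Real.exp (-μ * τ) := Real.exp_pos _
  have hK0 : 0 < (γ * Real.exp (-μ * τ) - μ) / κ := div_pos (by linarith) hκ
  by_cases hb : ∃ b, ∀ᶠ t in Filter.atTop, x t ≤ b
  swap
  · -- unbounded case: the set of eventual upper bounds is empty, limsup = 0
    have hset : {a : ℝ | ∀ᶠ t in Filter.atTop, x t ≤ a} = ∅ := by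
      ext a
      simp only [Set.mem_setOf_eq, Set.mem_empty_iff_false, iff_false]
      exact fun h => hb ⟨a, h⟩
    rw [Filter.limsup_eq, hset, Real.sInf_empty]
    exact hK0.le
  -- bounded case
  obtain ⟨b₀, hb₀⟩ := hb
  have hbdd : Filter.IsBoundedUnder (· ≤ ·) Filter.atTop x := ⟨b₀, by
    simpa [Filter.eventually_map] using hb₀⟩
  set L := Filter.limsup x Filter.atTop with hL
  by_contra hLK
  push_neg at hLK
  have hKL : (γ * Real.exp (-μ * τ) - μ) / κ < L := hLK
  have hL0 : 0 < L := lt_trans hK0 hKL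
  have hKmul : γ * Real.exp (-μ * τ) - μ < κ * L := by
    rw [div_lt_iff₀ hκ] at hKL; linarith [hKL]
  -- δ > 0
  set δ : ℝ := κ * L ^ 2 + μ * L - γ * L * Real.exp (-μ * τ) with hδdef
  have hδ : 0 < δ := by
    have : γ * Real.exp (-μ * τ) * L - μ * L < κ * L * L := by
      have := mul_lt_mul_of_pos_right hKmul hL0
      nlinarith
    nlinarith
  set A : ℝ := 2 * κ * L + μ + γ * Real.exp (-μ * τ) + 1 with hAdef
  have hA : 0 < A := by positivity
  set η : ℝ := min (L / 2) (δ / A) with hηdef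
  have hη0 : 0 < η := lt_min (by linarith) (div_pos hδ hA)
  have hηL : η ≤ L / 2 := min_le_left _ _
  have hηδ : η * A ≤ δ := by
    have h1 : η ≤ δ / A := min_le_right _ _
    calc η * A ≤ (δ / A) * A := by nlinarith
    _ = δ := by field_simp
  set c : ℝ := L - η with hcdef
  have hc0 : 0 < c := by simp only [hcdef]; linarith
  set C : ℝ := γ * (L + η) * Real.exp (-μ * τ) with hCdef
  have hCpos : 0 < C := by positivity
  set δ' : ℝ := μ * c + κ * c ^ 2 - C with hδ'def
  have hδ' : 0 < δ' := by
    have hexp : η * (2 * κ * L + μ + γ * Real.exp (-μ * τ)) < δ := by nlinarith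
    have hsq : κ * c ^ 2 = κ * L ^ 2 - 2 * κ * L * η + κ * η ^ 2 := by ring
    nlinarith [sq_nonneg η]
  -- eventual bound x t < L + η
  have hev : ∀ᶠ t in Filter.atTop, x t < L + η :=
    Filter.eventually_lt_of_limsup_lt (by linarith) hbdd
  obtain ⟨T₀, hT₀⟩ := Filter.eventually_atTop.1 hev
  set T : ℝ := max T₀ (τ + 1) + τ with hTdef
  have hTτ : τ + 1 + τ ≤ T := by
    have := le_max_right T₀ (τ + 1); simp only [hTdef]; linarith
  have hTpos : 0 < T := by linarith
  -- derivative bound for t ≥ T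
  have hub : ∀ t, T ≤ t →
      γ * x (t - τ) * Real.exp (-μ * τ - κ * ∫ s in (t - τ)..t, x s)
        - μ * x t - κ * (x t) ^ 2 ≤ C - μ * x t - κ * (x t) ^ 2 := by
    intro t ht
    have htτ : T₀ ≤ t - τ := by
      have := le_max_left T₀ (τ + 1); simp only [hTdef] at ht; linarith
    have htm : -τ ≤ t - τ := by linarith
    have hxtτ : x (t - τ) < L + η := hT₀ _ htτ
    have hxtτ0 : 0 < x (t - τ) := hx_pos _ htm
    have hint : 0 ≤ ∫ s in (t - τ)..t, x s := by
      apply intervalIntegral.integral_nonneg (by linarith)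
      intro u hu
      exact (hx_pos u (by linarith [hu.1])).le
    have hexp : Real.exp (-μ * τ - κ * ∫ s in (t - τ)..t, x s) ≤ Real.exp (-μ * τ) := by
      apply Real.exp_le_exp.2
      have := mul_nonneg hκ.le hint
      linarith
    have h1 : γ * x (t - τ) * Real.exp (-μ * τ - κ * ∫ s in (t - τ)..t, x s)
        ≤ γ * (L + η) * Real.exp (-μ * τ) := by
      have s1 : γ * x (t - τ) * Real.exp (-μ * τ - κ * ∫ s in (t - τ)..t, x s)
          ≤ γ * x (t - τ) * Real.exp (-μ * τ) :=
        mul_le_mul_of_nonneg_left hexp (by positivity)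
      have s2 : γ * x (t - τ) * Real.exp (-μ * τ) ≤ γ * (L + η) * Real.exp (-μ * τ) :=
        mul_le_mul_of_nonneg_right (mul_le_mul_of_nonneg_left hxtτ.le hγ.le) hE.le
      linarith
    simp only [hCdef]; linarith
  -- Step A: there is t₁ ≥ T with x t₁ ≤ c
  have hstepA : ∃ t₁, T ≤ t₁ ∧ x t₁ ≤ c := by
    by_contra hcon
    push_neg at hcon
    -- then x' ≤ -δ' on [T, ∞)
    set g : ℝ → ℝ := fun t => x t + δ' * t with hgdef
    have hIci : Set.Ici T ⊆ Set.Ici (-τ) := Set.Ici_subset_Ici.2 (by linarith)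
    have hderiv : ∀ t ∈ interior (Set.Ici T), HasDerivAt g
        ((γ * x (t - τ) * Real.exp (-μ * τ - κ * ∫ s in (t - τ)..t, x s)
          - μ * x t - κ * (x t) ^ 2) + δ') t := by
      intro t ht
      rw [interior_Ici] at ht
      exact ((hx_ode t (by have := ht.out; simp only [Set.mem_Ioi] at *; linarith)).add
        ((hasDerivAt_id t).const_mul δ')).congr_deriv (by ring)
    have hanti : AntitoneOn g (Set.Ici T) := by
      apply antitoneOn_of_deriv_nonpos (convex_Ici T)
      · exact (hx_cont.mono hIci).add (continuousOn_const.mul continuousOn_id)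
      · intro t ht
        exact ((hderiv t ht).differentiableAt).differentiableWithinAt
      · intro t ht
        rw [(hderiv t ht).deriv]
        have ht' : T ≤ t := le_of_lt (by rwa [interior_Ici, Set.mem_Ioi] at ht)
        have h1 := hub t ht'
        have h2 : c < x t := hcon t ht'
        have hsq : c ^ 2 ≤ (x t) ^ 2 := by nlinarith
        have hm1 := mul_le_mul_of_nonneg_left h2.le hμ.le
        have hm2 := mul_le_mul_of_nonneg_left hsq hκ.le
        have h3 : μ * c + κ * c ^ 2 ≤ μ * x t + κ * (x t) ^ 2 := by linarith
        simp only [hδ'def] at *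
        linarith
    -- contradiction: g decays linearly, but x > 0
    set t₂ : ℝ := max T ((x T + δ' * T) / δ' + 1) with ht₂def
    have ht₂T : T ≤ t₂ := le_max_left _ _
    have hgle : g t₂ ≤ g T := hanti (Set.mem_Ici.2 le_rfl) (Set.mem_Ici.2 ht₂T) ht₂T
    have hxt₂ : 0 < x t₂ := hx_pos _ (by linarith)
    have ht₂big : (x T + δ' * T) / δ' + 1 ≤ t₂ := le_max_right _ _
    have : x T + δ' * T < δ' * t₂ := by
      have := mul_le_mul_of_nonneg_left ht₂big hδ'.le
      have he : δ' * ((x T + δ' * T) / δ') = x T + δ' * T := by field_simp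
      nlinarith
    simp only [hgdef] at hgle
    linarith
  obtain ⟨t₁, ht₁T, ht₁c⟩ := hstepA
  -- Step B: x stays below c for t ≥ t₁
  have hstepB : ∀ t, t₁ ≤ t → x t ≤ c := by
    intro t ht
    have hcont : ContinuousOn x (Set.Icc t₁ t) :=
      hx_cont.mono (fun s hs => by
        simp only [Set.mem_Icc] at hs; simp only [Set.mem_Ici]; linarith [hs.1])
    have hder : ∀ s ∈ Set.Ico t₁ t, HasDerivWithinAt x
        (γ * x (s - τ) * Real.exp (-μ * τ - κ * ∫ u in (s - τ)..s, x u)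
          - μ * x s - κ * (x s) ^ 2) (Set.Ici s) s := fun s hs =>
      (hx_ode s (by linarith [hs.1])).hasDerivWithinAt
    have hbound : ∀ s ∈ Set.Ico t₁ t, x s = (fun _ : ℝ => c) s →
        γ * x (s - τ) * Real.exp (-μ * τ - κ * ∫ u in (s - τ)..s, x u)
          - μ * x s - κ * (x s) ^ 2 < (fun _ : ℝ => (0:ℝ)) s := by
      intro s hs hxs
      have h1 := hub s (by linarith [hs.1])
      simp only at hxs
      have : C - μ * x s - κ * (x s) ^ 2 = -δ' := by
        rw [hxs]; simp only [hδ'def]; ring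
      simp only
      linarith
    have key := image_le_of_deriv_right_lt_deriv_boundary (B := fun _ : ℝ => c)
      (B' := fun _ : ℝ => (0:ℝ)) hcont hder ht₁c (fun s => hasDerivAt_const _ _) hbound
    exact key ⟨ht, le_rfl⟩
  -- conclude limsup ≤ c < L, contradiction
  have hcS : c ∈ {a : ℝ | ∀ᶠ t in Filter.atTop, x t ≤ a} :=
    Filter.eventually_atTop.2 ⟨t₁, hstepB⟩
  have hbdd' : BddBelow {a : ℝ | ∀ᶠ t in Filter.atTop, x t ≤ a} := by
    refine ⟨0, fun a ha => ?_⟩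
    obtain ⟨t, h1, h2⟩ := (ha.and (Filter.eventually_ge_atTop (0:ℝ))).exists
    exact le_trans (hx_pos t (by linarith)).le h1
  have : L ≤ c := by
    rw [hL, Filter.limsup_eq]
    exact csInf_le hbdd' hcS
  simp only [hcdef] at this
  linarith
end

section
/- For i = 1, 2 let γ_i, μ_i, κ_i, α_i > 0 and τ_i > 0, and suppose γ₁·e^{−μ₁τ₁} ≤ μ₁ (i.e., R₀⁽¹⁾ ≤ 1). Let (x₁, x₂) : [−max(τ₁,τ₂), ∞) → ℝ² be a bounded continuous positive solution, differentiable on (0, ∞), of the competition system x₁'(t) = γ₁·x₁(t−τ₁)·exp(−μ₁τ₁ − ∫_{t−τ₁}^{t}(κ₁x₁(s) + α₂x₂(s))ds) − μ₁x₁(t) − κ₁x₁²(t) − α₂x₁(t)x₂(t), x₂'(t) = γ₂·x₂(t−τ₂)·exp(−μ₂τ₂ − ∫_{t−τ₂}^{t}(κ₂x₂(s) + α₁x₁(s))ds) − μ₂x₂(t) − κ₂x₂²(t) − α₁x₁(t)x₂(t). Then x₁(t) → 0 as t → ∞. -/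
set_option maxHeartbeats 1000000

open Set Filter MeasureTheory intervalIntegral


/-- In the two-species competition delay model, if `R₀⁽¹⁾ = γ₁e^{-μ₁τ₁}/μ₁ ≤ 1`,
then the first species dies out: `x₁(t) → 0` as `t → ∞`. -/
theorem stmt_14 (γ₁ μ₁ κ₁ α₁ τ₁ γ₂ μ₂ κ₂ α₂ τ₂ : ℝ)
    (hγ₁ : 0 < γ₁) (hμ₁ : 0 < μ₁) (hκ₁ : 0 < κ₁) (hα₁ : 0 < α₁) (hτ₁ : 0 < τ₁)
    (hγ₂ : 0 < γ₂) (hμ₂ : 0 < μ₂) (hκ₂ : 0 < κ₂) (hα₂ : 0 < α₂) (hτ₂ : 0 < τ₂)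
    (hR1 : γ₁ * Real.exp (-μ₁ * τ₁) ≤ μ₁)
    (x₁ x₂ : ℝ → ℝ)
    (hx₁_cont : ContinuousOn x₁ (Set.Ici (-(max τ₁ τ₂))))
    (hx₂_cont : ContinuousOn x₂ (Set.Ici (-(max τ₁ τ₂))))
    (hx₁_pos : ∀ t, -(max τ₁ τ₂) ≤ t → 0 < x₁ t)
    (hx₂_pos : ∀ t, -(max τ₁ τ₂) ≤ t → 0 < x₂ t)
    (hx₁_bdd : ∃ B : ℝ, ∀ t, -(max τ₁ τ₂) ≤ t → x₁ t ≤ B)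
    (hx₂_bdd : ∃ B : ℝ, ∀ t, -(max τ₁ τ₂) ≤ t → x₂ t ≤ B)
    (hx₁_ode : ∀ t > (0 : ℝ), HasDerivAt x₁
      (γ₁ * x₁ (t - τ₁) *
          Real.exp (-μ₁ * τ₁ - ∫ s in (t - τ₁)..t, (κ₁ * x₁ s + α₂ * x₂ s))
        - μ₁ * x₁ t - κ₁ * (x₁ t) ^ 2 - α₂ * x₁ t * x₂ t) t)
    (hx₂_ode : ∀ t > (0 : ℝ), HasDerivAt x₂
      (γ₂ * x₂ (t - τ₂) *
          Real.exp (-μ₂ * τ₂ - ∫ s in (t - τ₂)..t, (κ₂ * x₂ s + α₁ * x₁ s))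
        - μ₂ * x₂ t - κ₂ * (x₂ t) ^ 2 - α₁ * x₁ t * x₂ t) t) :
    Filter.Tendsto x₁ Filter.atTop (nhds 0) := by
  obtain ⟨B₁, hB₁⟩ := hx₁_bdd
  obtain ⟨B₂, hB₂⟩ := hx₂_bdd
  set m := max τ₁ τ₂ with hm_def
  have hτm : τ₁ ≤ m := le_max_left _ _
  have hm : 0 < m := lt_of_lt_of_le hτ₁ hτm
  set b₁ := max B₁ 1 with hb₁_def
  set b₂ := max B₂ 1 with hb₂_def
  have hb₁pos : (0:ℝ) < b₁ := lt_of_lt_of_le one_pos (le_max_right _ _)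
  have hb₂pos : (0:ℝ) < b₂ := lt_of_lt_of_le one_pos (le_max_right _ _)
  have hb₁ : ∀ t, -m ≤ t → x₁ t ≤ b₁ := fun t ht => le_trans (hB₁ t ht) (le_max_left _ _)
  have hb₂ : ∀ t, -m ≤ t → x₂ t ≤ b₂ := fun t ht => le_trans (hB₂ t ht) (le_max_left _ _)
  -- interval integrability of continuous functions on the domain
  have hInt : ∀ (f : ℝ → ℝ), ContinuousOn f (Ici (-m)) → ∀ a b : ℝ, -m ≤ a → -m ≤ b →
      IntervalIntegrable f MeasureTheory.volume a b := by
    intro f hf a b ha hb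
    apply ContinuousOn.intervalIntegrable
    apply hf.mono
    intro s hs
    rcases Set.mem_uIcc.1 hs with ⟨h1,_⟩|⟨h1,_⟩ <;> [exact le_trans ha h1; exact le_trans hb h1]
  -- FTC for primitives based at -m
  have hFTC : ∀ (f : ℝ → ℝ), ContinuousOn f (Ici (-m)) → ∀ t : ℝ, -m < t →
      HasDerivAt (fun u => ∫ s in (-m)..u, f s) (f t) t := by
    intro f hf t ht
    apply intervalIntegral.integral_hasDerivAt_right (hInt f hf _ _ le_rfl ht.le)
    · exact (hf.mono Ioi_subset_Ici_self).stronglyMeasurableAtFilter isOpen_Ioi t ht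
    · exact hf.continuousAt (Ici_mem_nhds ht)
  have hx₁sq_cont : ContinuousOn (fun s => (x₁ s) ^ 2) (Ici (-m)) := hx₁_cont.pow 2
  set F : ℝ → ℝ := fun u => ∫ s in (-m)..u, x₁ s with hF_def
  set G : ℝ → ℝ := fun u => ∫ s in (-m)..u, (x₁ s) ^ 2 with hG_def
  have hF : ∀ t : ℝ, -m < t → HasDerivAt F (x₁ t) t := hFTC x₁ hx₁_cont
  have hG : ∀ t : ℝ, -m < t → HasDerivAt G ((x₁ t) ^ 2) t := hFTC _ hx₁sq_cont
  have hFdiff : ∀ a b : ℝ, -m ≤ a → -m ≤ b → F b - F a = ∫ s in a..b, x₁ s := by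
    intro a b ha hb
    exact intervalIntegral.integral_interval_sub_left (hInt x₁ hx₁_cont _ _ le_rfl hb)
      (hInt x₁ hx₁_cont _ _ le_rfl ha)
  have hGdiff : ∀ a b : ℝ, -m ≤ a → -m ≤ b → G b - G a = ∫ s in a..b, (x₁ s) ^ 2 := by
    intro a b ha hb
    exact intervalIntegral.integral_interval_sub_left (hInt _ hx₁sq_cont _ _ le_rfl hb)
      (hInt _ hx₁sq_cont _ _ le_rfl ha)
  have hGmono : ∀ a b : ℝ, -m ≤ a → a ≤ b → G a ≤ G b := by
    intro a b ha hab
    have h := hGdiff a b ha (le_trans ha hab)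
    have h2 : (0:ℝ) ≤ ∫ s in a..b, (x₁ s) ^ 2 :=
      intervalIntegral.integral_nonneg hab (fun u _ => sq_nonneg _)
    linarith
  set c := γ₁ * Real.exp (-μ₁ * τ₁) with hc_def
  have hc0 : 0 < c := mul_pos hγ₁ (Real.exp_pos _)
  -- the Lyapunov function
  set W : ℝ → ℝ := fun t => x₁ t + c * (F t - F (t - τ₁)) + κ₁ * G t with hW_def
  -- domain facts
  have hdom : ∀ t : ℝ, 0 < t → -m < t - τ₁ := by
    intro t ht
    have : -m ≤ -τ₁ := neg_le_neg hτm
    linarith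
  -- derivative of W
  have hW : ∀ t : ℝ, 0 < t → HasDerivAt W
      ((γ₁ * x₁ (t - τ₁) *
          Real.exp (-μ₁ * τ₁ - ∫ s in (t - τ₁)..t, (κ₁ * x₁ s + α₂ * x₂ s))
        - μ₁ * x₁ t - κ₁ * (x₁ t) ^ 2 - α₂ * x₁ t * x₂ t)
        + c * (x₁ t - x₁ (t - τ₁)) + κ₁ * (x₁ t) ^ 2) t := by
    intro t ht
    have htm : -m < t := lt_of_lt_of_le (neg_neg_iff_pos.2 hm) ht.le
    have h1 : HasDerivAt (fun u => F (u - τ₁)) (x₁ (t - τ₁)) t := by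
      have := (hF (t - τ₁) (hdom t ht)).comp t ((hasDerivAt_id t).sub_const τ₁)
      exact this.congr_deriv (by ring)
    exact ((hx₁_ode t ht).add ((((hF t htm).sub h1)).const_mul c)).add
      ((hG t htm).const_mul κ₁)
  -- W' ≤ 0
  have hW'le : ∀ t : ℝ, 0 < t →
      ((γ₁ * x₁ (t - τ₁) *
          Real.exp (-μ₁ * τ₁ - ∫ s in (t - τ₁)..t, (κ₁ * x₁ s + α₂ * x₂ s))
        - μ₁ * x₁ t - κ₁ * (x₁ t) ^ 2 - α₂ * x₁ t * x₂ t)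
        + c * (x₁ t - x₁ (t - τ₁)) + κ₁ * (x₁ t) ^ 2) ≤ 0 := by
    intro t ht
    have htm : -m ≤ t := le_trans (neg_nonpos_of_nonneg hm.le) ht.le
    have htm' : -m ≤ t - τ₁ := (hdom t ht).le
    have hI : (0:ℝ) ≤ ∫ s in (t - τ₁)..t, (κ₁ * x₁ s + α₂ * x₂ s) := by
      apply intervalIntegral.integral_nonneg (by linarith)
      intro u hu
      have hu1 : -m ≤ u := le_trans htm' hu.1
      have := hx₁_pos u hu1
      have := hx₂_pos u hu1
      positivity
    have hExp : Real.exp (-μ₁ * τ₁ - ∫ s in (t - τ₁)..t, (κ₁ * x₁ s + α₂ * x₂ s))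
        ≤ Real.exp (-μ₁ * τ₁) := Real.exp_le_exp.2 (by linarith)
    have hxp : 0 < x₁ (t - τ₁) := hx₁_pos _ htm'
    have hkey : γ₁ * x₁ (t - τ₁) *
        Real.exp (-μ₁ * τ₁ - ∫ s in (t - τ₁)..t, (κ₁ * x₁ s + α₂ * x₂ s))
        ≤ c * x₁ (t - τ₁) := by
      rw [hc_def]
      calc γ₁ * x₁ (t - τ₁) * Real.exp (-μ₁ * τ₁ - _) ≤
          γ₁ * x₁ (t - τ₁) * Real.exp (-μ₁ * τ₁) :=
            mul_le_mul_of_nonneg_left hExp (by positivity)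
        _ = γ₁ * Real.exp (-μ₁ * τ₁) * x₁ (t - τ₁) := by ring
    have hx1t : 0 < x₁ t := hx₁_pos t htm
    have hx2t : 0 < x₂ t := hx₂_pos t htm
    have hcm : c ≤ μ₁ := hR1
    nlinarith [mul_pos (mul_pos hα₂ hx1t) hx2t, mul_nonneg (sub_nonneg.2 hcm) hx1t.le]
  -- W is antitone on Ici 1
  have hWanti : AntitoneOn W (Ici (1:ℝ)) := by
    apply antitoneOn_of_deriv_nonpos (convex_Ici 1)
    · exact fun t ht => ((hW t (lt_of_lt_of_le one_pos ht)).continuousAt).continuousWithinAt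
    · rw [interior_Ici]
      exact fun t ht => (hW t (lt_trans one_pos ht)).differentiableAt.differentiableWithinAt
    · rw [interior_Ici]
      intro t ht
      rw [(hW t (lt_trans one_pos ht)).deriv]
      exact hW'le t (lt_trans one_pos ht)
  -- the integral bound
  have hGbd : ∀ T : ℝ, 1 ≤ T → κ₁ * G T ≤ W 1 := by
    intro T hT
    have hTpos : (0:ℝ) < T := lt_of_lt_of_le one_pos hT
    have hTm : -m ≤ T := le_trans (neg_nonpos_of_nonneg hm.le) hTpos.le
    have hWT : W T ≤ W 1 := hWanti (self_mem_Ici) hT hT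
    have hFnn : 0 ≤ F T - F (T - τ₁) := by
      rw [hFdiff _ _ (hdom T hTpos).le hTm]
      exact intervalIntegral.integral_nonneg (by linarith)
        (fun u hu => (hx₁_pos u (le_trans (hdom T hTpos).le hu.1)).le)
    have hx1T : 0 < x₁ T := hx₁_pos T hTm
    have := mul_nonneg hc0.le hFnn
    simp only [hW_def] at hWT ⊢
    linarith
  -- Lipschitz-type bound: x₁ t - K * t is antitone on Ici 1, K = γ₁ * b₁
  set K := γ₁ * b₁ with hK_def
  have hK : 0 < K := by positivity
  have hg : ∀ t : ℝ, 0 < t → HasDerivAt (fun u => x₁ u - K * u)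
      ((γ₁ * x₁ (t - τ₁) *
          Real.exp (-μ₁ * τ₁ - ∫ s in (t - τ₁)..t, (κ₁ * x₁ s + α₂ * x₂ s))
        - μ₁ * x₁ t - κ₁ * (x₁ t) ^ 2 - α₂ * x₁ t * x₂ t) - K) t := by
    intro t ht
    exact ((hx₁_ode t ht).sub ((hasDerivAt_id t).const_mul K)).congr_deriv (by ring)
  have hg'np : ∀ t : ℝ, 0 < t →
      ((γ₁ * x₁ (t - τ₁) *
          Real.exp (-μ₁ * τ₁ - ∫ s in (t - τ₁)..t, (κ₁ * x₁ s + α₂ * x₂ s))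
        - μ₁ * x₁ t - κ₁ * (x₁ t) ^ 2 - α₂ * x₁ t * x₂ t) - K) ≤ 0 := by
    intro t ht
    have htm : -m ≤ t := le_trans (neg_nonpos_of_nonneg hm.le) ht.le
    have hx1t := hx₁_pos t htm
    have hx2t := hx₂_pos t htm
    have hxp : 0 < x₁ (t - τ₁) := hx₁_pos _ (hdom t ht).le
    have hxb : x₁ (t - τ₁) ≤ b₁ := hb₁ _ (hdom t ht).le
    have hI : (0:ℝ) ≤ ∫ s in (t - τ₁)..t, (κ₁ * x₁ s + α₂ * x₂ s) := by
      apply intervalIntegral.integral_nonneg (by linarith)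
      intro u hu
      have hu1 : -m ≤ u := le_trans (hdom t ht).le hu.1
      have := hx₁_pos u hu1
      have := hx₂_pos u hu1
      positivity
    have hE1 : Real.exp (-μ₁ * τ₁ - ∫ s in (t - τ₁)..t, (κ₁ * x₁ s + α₂ * x₂ s)) ≤ 1 := by
      apply Real.exp_le_one_iff.2
      nlinarith
    have hEpos := Real.exp_pos (-μ₁ * τ₁ - ∫ s in (t - τ₁)..t, (κ₁ * x₁ s + α₂ * x₂ s))
    have hmain : γ₁ * x₁ (t - τ₁) *
        Real.exp (-μ₁ * τ₁ - ∫ s in (t - τ₁)..t, (κ₁ * x₁ s + α₂ * x₂ s)) ≤ K := by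
      rw [hK_def]
      calc γ₁ * x₁ (t - τ₁) * Real.exp (-μ₁ * τ₁ - ∫ s in (t - τ₁)..t, (κ₁ * x₁ s + α₂ * x₂ s))
          ≤ γ₁ * b₁ * Real.exp (-μ₁ * τ₁ - ∫ s in (t - τ₁)..t, (κ₁ * x₁ s + α₂ * x₂ s)) :=
            mul_le_mul_of_nonneg_right (mul_le_mul_of_nonneg_left hxb hγ₁.le) hEpos.le
        _ ≤ γ₁ * b₁ * 1 := mul_le_mul_of_nonneg_left hE1 (by positivity)
        _ = γ₁ * b₁ := mul_one _
    nlinarith [mul_pos hμ₁ hx1t, mul_pos hκ₁ (pow_pos hx1t 2),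
      mul_pos (mul_pos hα₂ hx1t) hx2t]
  have hganti : AntitoneOn (fun u => x₁ u - K * u) (Ici (1:ℝ)) := by
    apply antitoneOn_of_deriv_nonpos (convex_Ici 1)
    · exact fun t ht => ((hg t (lt_of_lt_of_le one_pos ht)).continuousAt).continuousWithinAt
    · rw [interior_Ici]
      exact fun t ht => (hg t (lt_trans one_pos ht)).differentiableAt.differentiableWithinAt
    · rw [interior_Ici]
      intro t ht
      rw [(hg t (lt_trans one_pos ht)).deriv]
      exact hg'np t (lt_trans one_pos ht)
  -- main argument: by contradiction
  by_contra hcon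
  rw [Metric.tendsto_atTop] at hcon
  push_neg at hcon
  obtain ⟨ε, hε, hfreq⟩ := hcon
  set δ := ε / (2 * K) with hδ_def
  have hδ : 0 < δ := by positivity
  set η := δ * (ε / 2) ^ 2 with hη_def
  have hη : 0 < η := by positivity
  -- lower bound on G increments at points where x₁ ≥ ε
  have hlow : ∀ t : ℝ, 1 + δ ≤ t → ε ≤ x₁ t → η ≤ G t - G (t - δ) := by
    intro t ht hxt
    have htm : -m ≤ t - δ := by
      have : (0:ℝ) ≤ 1 := zero_le_one
      have := hm.le
      linarith
    have hbd : ∀ u ∈ Icc (t - δ) t, ε / 2 ≤ x₁ u := by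
      intro u hu
      have hu1 : (1:ℝ) ≤ u := by linarith [hu.1]
      have h5 : x₁ t - K * t ≤ x₁ u - K * u := hganti hu1 (by linarith : (1:ℝ) ≤ t) hu.2
      have hKd : K * δ = ε / 2 := by
        rw [hδ_def]; field_simp
      have h6 : K * (t - u) ≤ K * δ := mul_le_mul_of_nonneg_left (by linarith [hu.1]) hK.le
      nlinarith
    rw [hGdiff _ _ htm (by linarith)]
    have h1 : ∫ s in (t - δ)..t, (ε/2)^2 ≤ ∫ s in (t - δ)..t, (x₁ s) ^ 2 := by
      apply intervalIntegral.integral_mono_on (by linarith)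
        intervalIntegrable_const (hInt _ hx₁sq_cont _ _ htm (by linarith))
      intro u hu
      exact pow_le_pow_left₀ (by positivity) (hbd u hu) 2
    rw [intervalIntegral.integral_const] at h1
    rw [smul_eq_mul] at h1
    rw [hη_def]
    nlinarith
  -- inductively find arbitrarily large G values
  have hind : ∀ n : ℕ, ∃ T : ℝ, 1 ≤ T ∧ G 1 + n * η ≤ G T := by
    intro n
    induction n with
    | zero => exact ⟨1, le_rfl, by simp⟩
    | succ n ih =>
      obtain ⟨T, hT1, hTn⟩ := ih
      obtain ⟨t, htge, htd⟩ := hfreq (T + δ)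
      have htm : -m ≤ t := by
        have := hm.le
        linarith
      have hdist : dist (x₁ t) 0 = x₁ t := by
        rw [Real.dist_eq, sub_zero, abs_of_pos (hx₁_pos t htm)]
      have hxt : ε ≤ x₁ t := by rw [hdist] at htd; exact htd
      have h1 : η ≤ G t - G (t - δ) := hlow t (by linarith) hxt
      have h2 : G T ≤ G (t - δ) := hGmono T (t - δ) (by linarith [hm.le]) (by linarith)
      refine ⟨t, by linarith, ?_⟩
      push_cast
      linarith
  obtain ⟨n, hn⟩ := exists_nat_gt ((W 1 / κ₁ - G 1) / η)
  obtain ⟨T, hT1, hTn⟩ := hind n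
  have h1 := hGbd T hT1
  have h2 : W 1 / κ₁ - G 1 < n * η := by
    rw [div_lt_iff₀ hη] at hn
    linarith
  have h3 : G T ≤ W 1 / κ₁ := by
    rw [le_div_iff₀ hκ₁]
    linarith [h1]
  linarith
end

section
/- For i = 1, 2 let γ_i, μ_i, κ_i, α_i, τ_i > 0 with γ₁·e^{−μ₁τ₁} ≤ μ₁ and γ₂·e^{−μ₂τ₂} ≤ μ₂ (i.e., R₀⁽¹⁾ ≤ 1 and R₀⁽²⁾ ≤ 1). Then every bounded continuous positive solution (x₁(t), x₂(t)) of the competition system x₁'(t) = γ₁·x₁(t−τ₁)·exp(−μ₁τ₁ − ∫_{t−τ₁}^{t}(κ₁x₁(s) + α₂x₂(s))ds) − μ₁x₁(t) − κ₁x₁²(t) − α₂x₁(t)x₂(t), x₂'(t) = γ₂·x₂(t−τ₂)·exp(−μ₂τ₂ − ∫_{t−τ₂}^{t}(κ₂x₂(s) + α₁x₁(s))ds) − μ₂x₂(t) − κ₂x₂²(t) − α₁x₁(t)x₂(t) converges to the extinction equilibrium E₀ = (0, 0) as t → ∞. -/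
open Filter intervalIntegral Real
open Filter intervalIntegral Real

private lemma ftc_cont (f : ℝ → ℝ) (hf : Continuous f) (a t : ℝ) :
    HasDerivAt (fun b => ∫ s in a..b, f s) (f t) t :=
  intervalIntegral.integral_hasDerivAt_right (hf.intervalIntegrable a t)
    (hf.stronglyMeasurable.stronglyMeasurableAtFilter) hf.continuousAt

private lemma key_lemma (τ μ γ c : ℝ) (hτ : 0 < τ) (hμ : 0 < μ) (hγ : 0 < γ) (hc : 0 < c)
    (hR : γ * Real.exp (-μ * τ) ≤ μ) (x g : ℝ → ℝ)
    (hx : Continuous x) (hg : Continuous g)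
    (hxp : ∀ t, 0 < x t) (hgn : ∀ t, 0 ≤ g t) (hcx : ∀ t, c * x t ≤ g t)
    (hode : ∀ t > (0:ℝ), HasDerivAt x
      (γ * x (t - τ) * Real.exp (-μ * τ - ∫ s in (t - τ)..t, g s) - μ * x t - x t * g t) t) :
    Tendsto x atTop (nhds 0) := by
  set a : ℝ := γ * Real.exp (-μ * τ) with ha_def
  have ha : 0 < a := mul_pos hγ (Real.exp_pos _)
  set G : ℝ → ℝ := fun t => ∫ s in (0:ℝ)..t, g s with hG_def
  have hG' : ∀ t, HasDerivAt G (g t) t := fun t => ftc_cont g hg 0 t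
  have hGc : Continuous G := by
    refine continuous_iff_continuousAt.2 fun t => (hG' t).differentiableAt.continuousAt
  have hGsub : ∀ s t : ℝ, (∫ r in s..t, g r) = G t - G s := by
    intro s t
    have := intervalIntegral.integral_add_adjacent_intervals
      (hg.intervalIntegrable 0 s (μ := MeasureTheory.volume))
      (hg.intervalIntegrable s t (μ := MeasureTheory.volume))
    simp only [hG_def]; linarith
  have hGmono : Monotone G := by
    intro s t hst
    have h1 : (0:ℝ) ≤ ∫ r in s..t, g r :=
      intervalIntegral.integral_nonneg hst fun r _ => hgn r
    have := hGsub s t; linarith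
  have hG0 : G 0 = 0 := by simp [hG_def]
  set u : ℝ → ℝ := fun t => x t * Real.exp (G t) with hu_def
  have huc : Continuous u := hx.mul (Real.continuous_exp.comp hGc)
  have hup : ∀ t, 0 < u t := fun t => mul_pos (hxp t) (Real.exp_pos _)
  have hu' : ∀ t > (0:ℝ), HasDerivAt u (a * u (t - τ) - μ * u t) t := by
    intro t ht
    have hexp : HasDerivAt (fun s => Real.exp (G s)) (Real.exp (G t) * g t) t := (hG' t).exp
    have hprod := (hode t ht).mul hexp
    refine hprod.congr_deriv (Eq.symm ?_)
    have hint : (∫ s in (t - τ)..t, g s) = G t - G (t - τ) := hGsub _ _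
    rw [hint]
    have hE : Real.exp (-μ * τ - (G t - G (t - τ))) * Real.exp (G t)
        = Real.exp (-μ * τ) * Real.exp (G (t - τ)) := by
      rw [← Real.exp_add, ← Real.exp_add]; ring_nf
    simp only [hu_def, ha_def]
    linear_combination (-γ * x (t - τ)) * hE
  set U : ℝ → ℝ := fun t => ∫ s in (0:ℝ)..t, u s with hU_def
  have hU' : ∀ t, HasDerivAt U (u t) t := fun t => ftc_cont u huc 0 t
  have hUc : Continuous U := continuous_iff_continuousAt.2
    fun t => (hU' t).differentiableAt.continuousAt
  have hUsub : ∀ s t : ℝ, (∫ r in s..t, u r) = U t - U s := by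
    intro s t
    have := intervalIntegral.integral_add_adjacent_intervals
      (huc.intervalIntegrable 0 s (μ := MeasureTheory.volume))
      (huc.intervalIntegrable s t (μ := MeasureTheory.volume))
    simp only [hU_def]; linarith
  have hUmono : Monotone U := by
    intro s t hst
    have h1 : (0:ℝ) ≤ ∫ r in s..t, u r :=
      intervalIntegral.integral_nonneg hst fun r _ => (hup r).le
    have := hUsub s t; linarith
  set W : ℝ → ℝ := fun t => u t + a * (U t - U (t - τ)) with hW_def
  have hWc : Continuous W := by
    fun_prop
  have hW' : ∀ t > (0:ℝ), HasDerivAt W ((a - μ) * u t) t := by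
    intro t ht
    have h1 : HasDerivAt (fun s => U (s - τ)) (u (t - τ)) t := by
      have := (hU' (t - τ)).comp t ((hasDerivAt_id t).sub_const τ)
      rw [mul_one] at this; exact this
    have := ((hu' t ht).add (((hU' t).sub h1).const_mul a))
    refine this.congr_deriv ?_; ring
  have hWanti : AntitoneOn W (Set.Ici (0:ℝ)) := by
    apply antitoneOn_of_deriv_nonpos (convex_Ici 0) hWc.continuousOn
    · intro t ht
      rw [interior_Ici] at ht
      exact ((hW' t ht).differentiableAt).differentiableWithinAt
    · intro t ht
      rw [interior_Ici] at ht
      rw [(hW' t ht).deriv]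
      have := (hup t).le
      nlinarith [hup t]
  have huW : ∀ t, u t ≤ W t := by
    intro t
    have h1 : (0:ℝ) ≤ ∫ r in (t-τ)..t, u r :=
      intervalIntegral.integral_nonneg (by linarith) fun r _ => (hup r).le
    have h2 := hUsub (t - τ) t
    simp only [hW_def]
    nlinarith
  -- pointwise bound : u t ≤ W 0 for t ≥ 0
  have hubd : ∀ t ≥ (0:ℝ), u t ≤ W 0 := fun t ht =>
    (huW t).trans (hWanti (Set.self_mem_Ici) ht ht)
  by_cases hA : Tendsto G atTop atTop
  · -- x t ≤ W 0 * exp (- G t) → 0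
    have hlim : Tendsto (fun t => W 0 * Real.exp (-G t)) atTop (nhds 0) := by
      have h1 : Tendsto (fun t => -G t) atTop atBot := tendsto_neg_atBot_iff.2 hA
      have h2 : Tendsto (fun t => Real.exp (-G t)) atTop (nhds 0) :=
        Real.tendsto_exp_atBot.comp h1
      simpa using h2.const_mul (W 0)
    refine tendsto_of_tendsto_of_tendsto_of_le_of_le' tendsto_const_nhds hlim
      (Eventually.of_forall fun t => (hxp t).le) ?_
    filter_upwards [eventually_ge_atTop (0:ℝ)] with t ht
    have hb := hubd t ht
    have : x t = u t * Real.exp (-G t) := by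
      simp only [hu_def]
      rw [mul_assoc, ← Real.exp_add]; simp
    rw [this]
    have := Real.exp_pos (-G t)
    nlinarith
  · -- G bounded above
    have hGbd : ∃ M, ∀ t, G t ≤ M := by
      by_contra h
      push_neg at h
      exact hA (tendsto_atTop_atTop_of_monotone hGmono fun b => (h b).imp fun t ht => ht.le)
    obtain ⟨M, hM⟩ := hGbd
    have hM0 : 0 ≤ M := hG0 ▸ hM 0
    set K : ℝ := Real.exp M / c * M with hK_def
    have hug : ∀ s, u s ≤ Real.exp M / c * g s := by
      intro s
      have h1 : Real.exp (G s) ≤ Real.exp M := Real.exp_le_exp.2 (hM s)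
      have h2 : x s ≤ g s / c := by
        have := hcx s; rw [le_div_iff₀ hc]; linarith
      have h3 : 0 < Real.exp (G s) := Real.exp_pos _
      have h4 := (hxp s).le
      calc u s = x s * Real.exp (G s) := rfl
        _ ≤ (g s / c) * Real.exp M := by nlinarith
        _ = Real.exp M / c * g s := by ring
    have hUbd : ∀ t, U t ≤ K := by
      intro t
      rcases le_or_gt t 0 with h | h
      · have : U t ≤ U 0 := hUmono h
        have hU0 : U 0 = 0 := by simp [hU_def]
        have : U t ≤ 0 := by linarith
        have hK0 : 0 ≤ K := by
          have : 0 < Real.exp M / c := div_pos (Real.exp_pos _) hc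
          positivity
        linarith
      · have h1 : U t ≤ ∫ s in (0:ℝ)..t, Real.exp M / c * g s := by
          apply intervalIntegral.integral_mono_on h.le (huc.intervalIntegrable 0 t)
            ((hg.intervalIntegrable 0 t).const_mul _)
          intro s _; exact hug s
        rw [intervalIntegral.integral_const_mul] at h1
        have h2 : G t ≤ M := hM t
        have h3 : 0 < Real.exp M / c := div_pos (Real.exp_pos _) hc
        calc U t ≤ Real.exp M / c * G t := h1
          _ ≤ K := by rw [hK_def]; nlinarith
    -- U converges
    have hUtend : Tendsto U atTop (nhds (⨆ t, U t)) :=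
      tendsto_atTop_ciSup hUmono ⟨K, by rintro _ ⟨t, rfl⟩; exact hUbd t⟩
    set S := ⨆ t, U t with hS_def
    have hUτ : Tendsto (fun t => U (t - τ)) atTop (nhds S) := by
      have h1 : Tendsto (fun t : ℝ => t - τ) atTop atTop :=
        tendsto_atTop_add_const_right atTop (-τ) tendsto_id
      exact hUtend.comp h1
    -- W converges
    have hWanti' : Antitone (fun t => W (max t 0)) := by
      intro s t hst
      exact hWanti (le_max_right s 0) (le_max_right t 0) (max_le_max hst le_rfl)
    have hWbdd : BddBelow (Set.range fun t => W (max t 0)) := by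
      refine ⟨0, ?_⟩; rintro _ ⟨t, rfl⟩
      exact le_trans (hup _).le (huW _)
    have hWtend' : Tendsto (fun t => W (max t 0)) atTop (nhds (⨅ t, W (max t 0))) :=
      tendsto_atTop_ciInf hWanti' hWbdd
    set L := ⨅ t, W (max t 0) with hL_def
    have hWtend : Tendsto W atTop (nhds L) := by
      refine hWtend'.congr' ?_
      filter_upwards [eventually_ge_atTop (0:ℝ)] with t ht
      rw [max_eq_left ht]
    -- u converges to L
    have hutend : Tendsto u atTop (nhds L) := by
      have h1 : Tendsto (fun t => W t - a * (U t - U (t - τ))) atTop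
          (nhds (L - a * (S - S))) :=
        hWtend.sub ((hUtend.sub hUτ).const_mul a)
      have h2 : L - a * (S - S) = L := by ring
      rw [h2] at h1
      refine h1.congr fun t => ?_
      simp only [hW_def]; ring
    -- L = 0
    have hL0 : L = 0 := by
      by_contra hLne
      have hLpos : 0 < L := by
        rcases lt_or_gt_of_ne hLne with h | h
        · exfalso
          have := ge_of_tendsto hutend (Eventually.of_forall fun t => (hup t).le)
          linarith
        · exact h
      have hev : ∀ᶠ t in atTop, L / 2 < u t :=
        hutend.eventually (eventually_gt_nhds (by linarith))
      obtain ⟨T, hT⟩ := hev.exists_forall_of_atTop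
      have hKU : U T ≤ K := hUbd T
      obtain ⟨d, hd_def⟩ : ∃ d : ℝ, d = 2 * (K - U T + 1) / L := ⟨_, rfl⟩
      have hd : 0 ≤ d := by
        rw [hd_def]; exact div_nonneg (by linarith) hLpos.le
      have hTt₀ : T ≤ T + d := by linarith
      have h1 : (∫ s in T..(T + d), (L / 2)) ≤ ∫ s in T..(T + d), u s := by
        apply intervalIntegral.integral_mono_on hTt₀
          (intervalIntegrable_const) (huc.intervalIntegrable T (T + d))
        intro s hs
        exact (hT s hs.1).le
      rw [intervalIntegral.integral_const, smul_eq_mul] at h1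
      have h2 := hUsub T (T + d)
      have h3 : (T + d - T) * (L / 2) = K - U T + 1 := by
        rw [hd_def]; field_simp; ring
      have h4 := hUbd (T + d)
      rw [h3] at h1
      linarith
    rw [hL0] at hutend
    -- squeeze x
    refine tendsto_of_tendsto_of_tendsto_of_le_of_le' tendsto_const_nhds hutend
      (Eventually.of_forall fun t => (hxp t).le) ?_
    filter_upwards [eventually_ge_atTop (0:ℝ)] with t ht
    have h1 : 0 ≤ G t := hG0 ▸ hGmono ht
    have h2 : 1 ≤ Real.exp (G t) := Real.one_le_exp h1
    have := (hxp t).le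
    calc x t = x t * 1 := (mul_one _).symm
      _ ≤ x t * Real.exp (G t) := by nlinarith
      _ = u t := rfl



/-- In the two-species competition delay model, if `R₀⁽¹⁾ ≤ 1`
and `R₀⁽²⁾ ≤ 1`, every bounded positive solution converges to `E₀ = (0,0)`. -/
theorem stmt_15 (γ₁ μ₁ κ₁ α₁ τ₁ γ₂ μ₂ κ₂ α₂ τ₂ : ℝ)
    (hγ₁ : 0 < γ₁) (hμ₁ : 0 < μ₁) (hκ₁ : 0 < κ₁) (hα₁ : 0 < α₁) (hτ₁ : 0 < τ₁)
    (hγ₂ : 0 < γ₂) (hμ₂ : 0 < μ₂) (hκ₂ : 0 < κ₂) (hα₂ : 0 < α₂) (hτ₂ : 0 < τ₂)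
    (hR1 : γ₁ * Real.exp (-μ₁ * τ₁) ≤ μ₁) (hR2 : γ₂ * Real.exp (-μ₂ * τ₂) ≤ μ₂)
    (x₁ x₂ : ℝ → ℝ)
    (hx₁_cont : ContinuousOn x₁ (Set.Ici (-(max τ₁ τ₂))))
    (hx₂_cont : ContinuousOn x₂ (Set.Ici (-(max τ₁ τ₂))))
    (hx₁_pos : ∀ t, -(max τ₁ τ₂) ≤ t → 0 < x₁ t)
    (hx₂_pos : ∀ t, -(max τ₁ τ₂) ≤ t → 0 < x₂ t)
    (hx₁_bdd : ∃ B : ℝ, ∀ t, -(max τ₁ τ₂) ≤ t → x₁ t ≤ B)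
    (hx₂_bdd : ∃ B : ℝ, ∀ t, -(max τ₁ τ₂) ≤ t → x₂ t ≤ B)
    (hx₁_ode : ∀ t > (0 : ℝ), HasDerivAt x₁
      (γ₁ * x₁ (t - τ₁) *
          Real.exp (-μ₁ * τ₁ - ∫ s in (t - τ₁)..t, (κ₁ * x₁ s + α₂ * x₂ s))
        - μ₁ * x₁ t - κ₁ * (x₁ t) ^ 2 - α₂ * x₁ t * x₂ t) t)
    (hx₂_ode : ∀ t > (0 : ℝ), HasDerivAt x₂
      (γ₂ * x₂ (t - τ₂) *
          Real.exp (-μ₂ * τ₂ - ∫ s in (t - τ₂)..t, (κ₂ * x₂ s + α₁ * x₁ s))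
        - μ₂ * x₂ t - κ₂ * (x₂ t) ^ 2 - α₁ * x₁ t * x₂ t) t) :
    Filter.Tendsto x₁ Filter.atTop (nhds 0) ∧ Filter.Tendsto x₂ Filter.atTop (nhds 0) := by
  set m : ℝ := max τ₁ τ₂ with hm_def
  have hm1 : τ₁ ≤ m := le_max_left _ _
  have hm2 : τ₂ ≤ m := le_max_right _ _
  have hm0 : 0 < m := lt_of_lt_of_le hτ₁ hm1
  set r : ℝ → ℝ := fun t => max t (-m) with hr_def
  have hr_cont : Continuous r := continuous_id.max continuous_const
  have hr_mem : ∀ t, r t ∈ Set.Ici (-m) := fun t => Set.mem_Ici.2 (le_max_right _ _)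
  have hr_eq : ∀ t, -m ≤ t → r t = t := fun t ht => max_eq_left ht
  set X₁ : ℝ → ℝ := fun t => x₁ (r t) with hX₁_def
  set X₂ : ℝ → ℝ := fun t => x₂ (r t) with hX₂_def
  have hX₁c : Continuous X₁ := hx₁_cont.comp_continuous hr_cont hr_mem
  have hX₂c : Continuous X₂ := hx₂_cont.comp_continuous hr_cont hr_mem
  have hX₁p : ∀ t, 0 < X₁ t := fun t => hx₁_pos _ (hr_mem t)
  have hX₂p : ∀ t, 0 < X₂ t := fun t => hx₂_pos _ (hr_mem t)
  -- equality of X and x on a neighborhood of positive times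
  have hEV : ∀ t : ℝ, 0 < t → (X₁ =ᶠ[nhds t] x₁) ∧ (X₂ =ᶠ[nhds t] x₂) := by
    intro t ht
    have hmem : Set.Ioi (-m) ∈ nhds t := Ioi_mem_nhds (by linarith)
    constructor <;>
      · filter_upwards [hmem] with s hs
        simp only [hX₁_def, hX₂_def, hr_eq s (le_of_lt hs)]
  -- auxiliary: transfer ODEs
  have key₁ : Tendsto X₁ atTop (nhds 0) := by
    apply key_lemma τ₁ μ₁ γ₁ κ₁ hτ₁ hμ₁ hγ₁ hκ₁ hR1 X₁
      (fun t => κ₁ * X₁ t + α₂ * X₂ t) hX₁c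
      (by fun_prop) hX₁p
      (fun t => by show (0:ℝ) ≤ κ₁ * X₁ t + α₂ * X₂ t; nlinarith [hX₁p t, hX₂p t])
      (fun t => by show κ₁ * X₁ t ≤ κ₁ * X₁ t + α₂ * X₂ t; nlinarith [hX₂p t])
    intro t ht
    have h1 : HasDerivAt X₁
      (γ₁ * x₁ (t - τ₁) *
          Real.exp (-μ₁ * τ₁ - ∫ s in (t - τ₁)..t, (κ₁ * x₁ s + α₂ * x₂ s))
        - μ₁ * x₁ t - κ₁ * (x₁ t) ^ 2 - α₂ * x₁ t * x₂ t) t :=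
      (hx₁_ode t ht).congr_of_eventuallyEq (hEV t ht).1
    convert h1 using 1
    have hle : -m ≤ t - τ₁ := by linarith
    have hXt : X₁ t = x₁ t := by simp [hX₁_def, hr_eq t (by linarith)]
    have hXτ : X₁ (t - τ₁) = x₁ (t - τ₁) := by simp [hX₁_def, hr_eq _ hle]
    have hX2t : X₂ t = x₂ t := by simp [hX₂_def, hr_eq t (by linarith)]
    have hint : (∫ s in (t - τ₁)..t, (κ₁ * X₁ s + α₂ * X₂ s))
        = ∫ s in (t - τ₁)..t, (κ₁ * x₁ s + α₂ * x₂ s) := by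
      apply intervalIntegral.integral_congr
      intro s hs
      rw [Set.uIcc_of_le (by linarith : t - τ₁ ≤ t)] at hs
      have : -m ≤ s := le_trans hle hs.1
      simp [hX₁_def, hX₂_def, hr_eq s this]
    rw [hint, hXt, hXτ, hX2t]; ring
  have key₂ : Tendsto X₂ atTop (nhds 0) := by
    apply key_lemma τ₂ μ₂ γ₂ κ₂ hτ₂ hμ₂ hγ₂ hκ₂ hR2 X₂
      (fun t => κ₂ * X₂ t + α₁ * X₁ t) hX₂c
      (by fun_prop) hX₂p
      (fun t => by show (0:ℝ) ≤ κ₂ * X₂ t + α₁ * X₁ t; nlinarith [hX₁p t, hX₂p t])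
      (fun t => by show κ₂ * X₂ t ≤ κ₂ * X₂ t + α₁ * X₁ t; nlinarith [hX₁p t])
    intro t ht
    have h1 : HasDerivAt X₂
      (γ₂ * x₂ (t - τ₂) *
          Real.exp (-μ₂ * τ₂ - ∫ s in (t - τ₂)..t, (κ₂ * x₂ s + α₁ * x₁ s))
        - μ₂ * x₂ t - κ₂ * (x₂ t) ^ 2 - α₁ * x₁ t * x₂ t) t :=
      (hx₂_ode t ht).congr_of_eventuallyEq (hEV t ht).2
    convert h1 using 1
    have hle : -m ≤ t - τ₂ := by linarith
    have hXt : X₂ t = x₂ t := by simp [hX₂_def, hr_eq t (by linarith)]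
    have hXτ : X₂ (t - τ₂) = x₂ (t - τ₂) := by simp [hX₂_def, hr_eq _ hle]
    have hX1t : X₁ t = x₁ t := by simp [hX₁_def, hr_eq t (by linarith)]
    have hint : (∫ s in (t - τ₂)..t, (κ₂ * X₂ s + α₁ * X₁ s))
        = ∫ s in (t - τ₂)..t, (κ₂ * x₂ s + α₁ * x₁ s) := by
      apply intervalIntegral.integral_congr
      intro s hs
      rw [Set.uIcc_of_le (by linarith : t - τ₂ ≤ t)] at hs
      have : -m ≤ s := le_trans hle hs.1
      simp [hX₁_def, hX₂_def, hr_eq s this]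
    rw [hint, hXt, hXτ, hX1t]; ring
  constructor
  · refine key₁.congr' ?_
    filter_upwards [eventually_ge_atTop (-m)] with t ht
    simp [hX₁_def, hr_eq t ht]
  · refine key₂.congr' ?_
    filter_upwards [eventually_ge_atTop (-m)] with t ht
    simp [hX₂_def, hr_eq t ht]
end
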